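/- arXiv:0705.1521 — 10 statements merged into one kernel-verified Lean document; each statement's English description precedes it below -/
import Mathlib

section
/- If a graph G is module-composed, then every induced subgraph of G is also module-composed. -/
open scoped Classical

/-- `M` is a module (homogeneous set) of `G`: every two vertices of `M`
have the same neighbours outside `M`. -/
def SimpleGraph.IsModule {V : Type*} (G : SimpleGraph V) (M : Set V) : Prop :=
  ∀ v₁ ∈ M, ∀ v₂ ∈ M, ∀ w ∉ M, (G.Adj v₁ w ↔ G.Adj v₂ w)

/-- `G` is module-composed: there is a linear ordering `v₀, …, v_{n-1}` of the
vertices such that for every `i ≥ 1` the neighbourhood of `vᵢ` inside the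
induced subgraph on `{v₀, …, v_{i-1}}` is a module of that induced subgraph. -/
def SimpleGraph.ModuleComposed {V : Type*} [Fintype V] (G : SimpleGraph V) : Prop :=
  ∃ e : Fin (Fintype.card V) ≃ V,
    ∀ i : Fin (Fintype.card V), 0 < (i : ℕ) →
      (G.induce {v | ∃ j, j < i ∧ e j = v}).IsModule
        {w : {v | ∃ j, j < i ∧ e j = v} | G.Adj (e i) ↑w}


/-- If a graph `G` is module-composed, then every induced subgraph of `G`
is also module-composed. -/
theorem moduleComposed_induce {V : Type*} [Fintype V] (G : SimpleGraph V)
    (hG : G.ModuleComposed) (S : Set V) :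
    (G.induce S).ModuleComposed := by
  classical
  obtain ⟨e, he⟩ := hG
  set T : Finset (Fin (Fintype.card V)) := Finset.univ.filter (fun j => e j ∈ S) with hTdef
  have hmemT : ∀ j : Fin (Fintype.card V), j ∈ T ↔ e j ∈ S := by
    intro j; simp [hTdef]
  have hT : T.card = Fintype.card ↥S := by
    rw [← Fintype.card_coe]
    exact Fintype.card_congr
      { toFun := fun j => ⟨e j.1, (hmemT j.1).1 j.2⟩
        invFun := fun s => ⟨e.symm s.1, (hmemT _).2 (by simp [s.2])⟩
        left_inv := fun j => by simp
        right_inv := fun s => by simp }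
  let ord := T.orderIsoOfFin hT
  have hordS : ∀ i : Fin (Fintype.card ↥S), e (ord i).1 ∈ S := fun i => (hmemT _).1 (ord i).2
  let f : Fin (Fintype.card ↥S) ≃ ↥S :=
    { toFun := fun i => ⟨e (ord i).1, hordS i⟩
      invFun := fun s => ord.symm ⟨e.symm s.1, (hmemT _).2 (by simp [s.2])⟩
      left_inv := fun i => by simp
      right_inv := fun s => by simp }
  refine ⟨f, ?_⟩
  intro i hi v₁ hv₁ v₂ hv₂ w hw
  set k : Fin (Fintype.card V) := (ord i).1 with hk
  have hk0 : 0 < (k : ℕ) := by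
    have h0 : (⟨0, Nat.lt_of_le_of_lt (Nat.zero_le _) i.isLt⟩ : Fin (Fintype.card ↥S)) < i := hi
    have h1 : ((ord ⟨0, Nat.lt_of_le_of_lt (Nat.zero_le _) i.isLt⟩ : ↥T) : Fin (Fintype.card V)) < k :=
      Subtype.coe_lt_coe.mpr (ord.strictMono h0)
    exact Nat.lt_of_le_of_lt (Nat.zero_le _) h1
  have hpref : ∀ x : ↥S, (∃ j, j < i ∧ f j = x) → ∃ j, j < k ∧ e j = (x : V) := by
    rintro x ⟨j, hj, rfl⟩
    exact ⟨(ord j).1, Subtype.coe_lt_coe.mpr (ord.strictMono hj), rfl⟩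
  have hadj1 : G.Adj (e k) ((v₁ : ↥S) : V) := hv₁
  have hadj2 : G.Adj (e k) ((v₂ : ↥S) : V) := hv₂
  have hadjw : ¬ G.Adj (e k) ((w : ↥S) : V) := hw
  have key := he k hk0 ⟨_, hpref _ v₁.2⟩ hadj1 ⟨_, hpref _ v₂.2⟩ hadj2
    ⟨_, hpref _ w.2⟩ hadjw
  exact key
end

section
/- For every n ≥ 5, the cycle graph Cₙ is not module-composed. -/
open scoped Classical
open scoped Fin.NatCast

/-- For every `n ≥ 5`, the cycle graph `Cₙ` is not module-composed. -/
theorem cycleGraph_not_moduleComposed (n : ℕ) (hn : 5 ≤ n) :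
    ¬ (SimpleGraph.cycleGraph n).ModuleComposed := by
  haveI : NeZero n := ⟨by omega⟩
  letI : CommRing (Fin n) := Fin.instCommRing n
  rintro ⟨e, he⟩
  have hcard : Fintype.card (Fin n) = n := Fintype.card_fin n
  set i : Fin (Fintype.card (Fin n)) := ⟨Fintype.card (Fin n) - 1, by omega⟩ with hi
  have hi0 : 0 < (i : ℕ) := by simp only [hi]; omega
  have key := he i hi0
  set v : Fin n := e i with hv
  -- membership in the prefix set
  have hmem : ∀ x : Fin n, x ≠ v → x ∈ {w : Fin n | ∃ j, j < i ∧ e j = w} := by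
    intro x hx
    refine ⟨e.symm x, ?_, e.apply_symm_apply x⟩
    have hne : e.symm x ≠ i := by
      intro h; apply hx; rw [← e.apply_symm_apply x, h, hv]
    have hlt := (e.symm x).isLt
    have hne' : ((e.symm x) : ℕ) ≠ Fintype.card (Fin n) - 1 := by
      intro h; exact hne (Fin.ext (by simpa [hi] using h))
    rw [Fin.lt_def]
    simp only [hi]
    omega
  -- numeric facts in Fin n
  have hval : ∀ a : ℕ, a < n → ((a : Fin n)).val = a := fun a h => Fin.val_cast_of_lt h
  have cne : ∀ a b : ℕ, a < n → b < n → a ≠ b → (a : Fin n) ≠ (b : Fin n) := by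
    intro a b ha hb hab h
    rw [Fin.ext_iff, hval a ha, hval b hb] at h
    exact hab h
  -- adjacency characterization
  have hadj : ∀ x y : Fin n,
      (SimpleGraph.cycleGraph n).Adj x y ↔
        (x - y = ((1:ℕ) : Fin n) ∨ y - x = ((1:ℕ) : Fin n)) := by
    intro x y
    rw [SimpleGraph.cycleGraph_adj']
    have hz : ∀ z : Fin n, z.val = 1 ↔ z = ((1:ℕ) : Fin n) := by
      intro z; rw [Fin.ext_iff, hval 1 (by omega)]
    rw [hz, hz]
  set c1 : Fin n := ((1:ℕ) : Fin n) with hc1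
  set c2 : Fin n := ((2:ℕ) : Fin n) with hc2
  -- the witnesses are distinct from v
  have hne1 : v + c1 ≠ v := by
    intro h
    exact cne 1 0 (by omega) (by omega) (by omega)
      (by rw [Nat.cast_zero]; linear_combination h)
  have hne2 : v - c1 ≠ v := by
    intro h
    exact cne 1 0 (by omega) (by omega) (by omega)
      (by rw [Nat.cast_zero]; linear_combination -h)
  have hne3 : v + c2 ≠ v := by
    intro h
    exact cne 2 0 (by omega) (by omega) (by omega)
      (by rw [Nat.cast_zero]; linear_combination h)
  -- adjacency facts
  have hA1 : (SimpleGraph.cycleGraph n).Adj v (v + c1) := by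
    rw [hadj]; right; ring
  have hA2 : (SimpleGraph.cycleGraph n).Adj v (v - c1) := by
    rw [hadj]; left; ring
  have hNA1 : ¬ (SimpleGraph.cycleGraph n).Adj v (v + c2) := by
    rw [hadj]
    rintro (h | h)
    · exact cne 3 0 (by omega) (by omega) (by omega)
        (by rw [Nat.cast_zero]; push_cast [hc1, hc2] at h ⊢; linear_combination -h)
    · exact cne 2 1 (by omega) (by omega) (by omega)
        (by push_cast [hc1, hc2] at h ⊢; linear_combination h)
  have hA3 : (SimpleGraph.cycleGraph n).Adj (v + c1) (v + c2) := by
    rw [hadj]; right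
    push_cast [hc1, hc2]; ring
  have hNA2 : ¬ (SimpleGraph.cycleGraph n).Adj (v - c1) (v + c2) := by
    rw [hadj]
    rintro (h | h)
    · exact cne 4 0 (by omega) (by omega) (by omega)
        (by rw [Nat.cast_zero]; push_cast [hc1, hc2] at h ⊢; linear_combination -h)
    · exact cne 3 1 (by omega) (by omega) (by omega)
        (by push_cast [hc1, hc2] at h ⊢; linear_combination h)
  -- derive the contradiction from the module property
  have m1 := hmem (v + c1) hne1
  have m2 := hmem (v - c1) hne2
  have m3 := hmem (v + c2) hne3
  have := key ⟨v + c1, m1⟩ hA1 ⟨v - c1, m2⟩ hA2 ⟨v + c2, m3⟩ hNA1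
  exact hNA2 (this.mp hA3)
end

section
/- For every n ≥ 5, the complement of the cycle graph Cₙ is not module-composed. -/
open scoped Classical

open Fin.NatCast

section aux

variable {n : ℕ} [NeZero n]

private lemma fin_sub_val_aux (hn : 5 ≤ n) (k m : ℕ) (hk : k < n) (hm : m < n) :
    ((k : Fin n) - (m : Fin n)).val = (k + (n - m)) % n := by
  rw [Fin.sub_def]
  simp only [Fin.val_natCast, Nat.mod_eq_of_lt hk, Nat.mod_eq_of_lt hm]
  rw [Nat.add_comm]

private lemma adj_add_iff (hn : 5 ≤ n) (v : Fin n) (k m : ℕ) (hk : k < n) (hm : m < n) :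
    (SimpleGraph.cycleGraph n).Adj (v + (k : Fin n)) (v + (m : Fin n)) ↔
      (k + (n - m)) % n = 1 ∨ (m + (n - k)) % n = 1 := by
  rw [SimpleGraph.cycleGraph_adj', add_sub_add_left_eq_sub, add_sub_add_left_eq_sub,
    fin_sub_val_aux hn k m hk hm, fin_sub_val_aux hn m k hm hk]

private lemma ne_add_iff (hn : 5 ≤ n) (v : Fin n) (k m : ℕ) (hk : k < n) (hm : m < n)
    (h : k ≠ m) : v + (k : Fin n) ≠ v + (m : Fin n) := by
  intro hEq
  have h2 := add_left_cancel hEq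
  rw [Fin.ext_iff, Fin.val_natCast, Fin.val_natCast, Nat.mod_eq_of_lt hk,
    Nat.mod_eq_of_lt hm] at h2
  exact h h2

private lemma mod_eq_self' (h : 0 < n) (a : ℕ) (ha : a < n) : (a + n) % n = a := by
  rw [Nat.add_mod_right]; exact Nat.mod_eq_of_lt ha

end aux


/-- For every `n ≥ 5`, the complement of the cycle graph `Cₙ` is not
module-composed. -/
theorem compl_cycleGraph_not_moduleComposed (n : ℕ) (hn : 5 ≤ n) :
    ¬ (SimpleGraph.cycleGraph n)ᶜ.ModuleComposed := by
  rintro ⟨e, h⟩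
  haveI : NeZero n := ⟨by omega⟩
  have hcard : Fintype.card (Fin n) = n := Fintype.card_fin n
  have hipf : n - 1 < Fintype.card (Fin n) := by omega
  set i : Fin (Fintype.card (Fin n)) := ⟨n - 1, hipf⟩ with hidef
  have hipos : 0 < (i : ℕ) := by simp only [hidef]; omega
  set v : Fin n := e i with hv
  have hmem : ∀ x : Fin n, x ≠ v → x ∈ {w | ∃ j, j < i ∧ e j = w} := by
    intro x hx
    refine ⟨e.symm x, ?_, e.apply_symm_apply x⟩
    have hne : e.symm x ≠ i := by
      intro h'
      exact hx (by rw [hv, ← h', e.apply_symm_apply])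
    have h1 : (e.symm x : ℕ) < Fintype.card (Fin n) := (e.symm x).isLt
    have h2 : (e.symm x : ℕ) ≠ n - 1 := by
      intro h'; exact hne (Fin.ext (by simpa [hidef] using h'))
    show (e.symm x : ℕ) < (i : ℕ)
    simp only [hidef]; omega
  have h10 := ne_add_iff hn v 1 0 (by omega) (by omega) (by omega)
  have h20 := ne_add_iff hn v 2 0 (by omega) (by omega) (by omega)
  have h30 := ne_add_iff hn v 3 0 (by omega) (by omega) (by omega)
  have h21 := ne_add_iff hn v 2 1 (by omega) (by omega) (by omega)
  have h31 := ne_add_iff hn v 3 1 (by omega) (by omega) (by omega)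
  have hv0 : v + ((0 : ℕ) : Fin n) = v := by simp
  rw [hv0] at h10 h20 h30
  have hadj01 : (SimpleGraph.cycleGraph n).Adj (v + ((0:ℕ) : Fin n)) (v + ((1:ℕ) : Fin n)) := by
    rw [adj_add_iff hn v 0 1 (by omega) (by omega)]
    right
    have he : 1 + (n - 0) = 1 + n := by omega
    rw [he, mod_eq_self' (by omega) 1 (by omega)]
  have hadj21 : (SimpleGraph.cycleGraph n).Adj (v + ((2:ℕ) : Fin n)) (v + ((1:ℕ) : Fin n)) := by
    rw [adj_add_iff hn v 2 1 (by omega) (by omega)]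
    left
    have he : 2 + (n - 1) = 1 + n := by omega
    rw [he, mod_eq_self' (by omega) 1 (by omega)]
  have hnadj02 : ¬ (SimpleGraph.cycleGraph n).Adj (v + ((0:ℕ) : Fin n)) (v + ((2:ℕ) : Fin n)) := by
    rw [adj_add_iff hn v 0 2 (by omega) (by omega)]
    push_neg
    refine ⟨?_, ?_⟩
    · rw [Nat.mod_eq_of_lt (by omega)]; omega
    · have he : 2 + (n - 0) = 2 + n := by omega
      rw [he, mod_eq_self' (by omega) 2 (by omega)]; omega
  have hnadj03 : ¬ (SimpleGraph.cycleGraph n).Adj (v + ((0:ℕ) : Fin n)) (v + ((3:ℕ) : Fin n)) := by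
    rw [adj_add_iff hn v 0 3 (by omega) (by omega)]
    push_neg
    refine ⟨?_, ?_⟩
    · rw [Nat.mod_eq_of_lt (by omega)]; omega
    · have he : 3 + (n - 0) = 3 + n := by omega
      rw [he, mod_eq_self' (by omega) 3 (by omega)]; omega
  have hnadj31 : ¬ (SimpleGraph.cycleGraph n).Adj (v + ((3:ℕ) : Fin n)) (v + ((1:ℕ) : Fin n)) := by
    rw [adj_add_iff hn v 3 1 (by omega) (by omega)]
    push_neg
    refine ⟨?_, ?_⟩
    · have he : 3 + (n - 1) = 2 + n := by omega
      rw [he, mod_eq_self' (by omega) 2 (by omega)]; omega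
    · rw [Nat.mod_eq_of_lt (by omega)]; omega
  rw [hv0] at hadj01 hnadj02 hnadj03
  have hm1 : (v + ((1:ℕ):Fin n)) ∈ {w | ∃ j, j < i ∧ e j = w} := hmem _ h10
  have hm2 : (v + ((2:ℕ):Fin n)) ∈ {w | ∃ j, j < i ∧ e j = w} := hmem _ h20
  have hm3 : (v + ((3:ℕ):Fin n)) ∈ {w | ∃ j, j < i ∧ e j = w} := hmem _ h30
  have key := h i hipos ⟨_, hm2⟩ (by
      show ((SimpleGraph.cycleGraph n)ᶜ).Adj v _
      rw [SimpleGraph.compl_adj]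
      exact ⟨h20.symm, hnadj02⟩)
    ⟨_, hm3⟩ (by
      show ((SimpleGraph.cycleGraph n)ᶜ).Adj v _
      rw [SimpleGraph.compl_adj]
      exact ⟨h30.symm, hnadj03⟩)
    ⟨_, hm1⟩ (by
      show ¬ ((SimpleGraph.cycleGraph n)ᶜ).Adj v _
      rw [SimpleGraph.compl_adj]
      push_neg
      intro _; exact hadj01)
  simp only [SimpleGraph.induce, SimpleGraph.comap_adj, Function.Embedding.coe_subtype,
    SimpleGraph.compl_adj] at key
  exact (key.mpr ⟨h31, hnadj31⟩).2 hadj21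
end

section
/- The complement of the disjoint union of two 4-cycles (co-2C₄) is not module-composed. -/
open scoped Classical

/-- The disjoint union of two 4-cycles, on vertices `0,…,7`. -/
def twoC4 : SimpleGraph (Fin 8) :=
  SimpleGraph.fromRel (fun a b =>
    (a, b) ∈ [((0 : Fin 8), (1 : Fin 8)), (1, 2), (2, 3), (3, 0),
              (4, 5), (5, 6), (6, 7), (7, 4)])

/-- Witnesses: for each vertex `v` of co-2C₄, a triple `(a, b, w)` with
`a, b` neighbours of `v`, `w` a non-neighbour of `v` (all distinct from `v`),
such that `a ~ w` but `¬ b ~ w`.  This shows `N(v)` is not a module of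
the graph induced on the other seven vertices. -/
def coWit : Fin 8 → Fin 8 × Fin 8 × Fin 8 :=
  ![(4, 2, 1), (4, 3, 0), (4, 0, 1), (4, 1, 0),
    (0, 6, 5), (0, 7, 4), (0, 4, 5), (0, 5, 4)]

instance : DecidableRel twoC4.Adj := fun a b =>
  decidable_of_iff _ (SimpleGraph.fromRel_adj _ a b).symm

lemma coWit_spec : ∀ v : Fin 8,
    (coWit v).1 ≠ v ∧ (coWit v).2.1 ≠ v ∧ (coWit v).2.2 ≠ v ∧
    twoC4ᶜ.Adj v (coWit v).1 ∧ twoC4ᶜ.Adj v (coWit v).2.1 ∧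
    ¬ twoC4ᶜ.Adj v (coWit v).2.2 ∧
    twoC4ᶜ.Adj (coWit v).1 (coWit v).2.2 ∧
    ¬ twoC4ᶜ.Adj (coWit v).2.1 (coWit v).2.2 := by
  decide

/-- The complement of two disjoint 4-cycles (co-2C₄) is not module-composed. -/
theorem co_twoC4_not_moduleComposed : ¬ twoC4ᶜ.ModuleComposed := by
  rintro ⟨e, h⟩
  have hcard : Fintype.card (Fin 8) = 8 := Fintype.card_fin 8
  have h7 : (7 : ℕ) < Fintype.card (Fin 8) := by omega
  set i : Fin (Fintype.card (Fin 8)) := ⟨7, h7⟩ with hi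
  have hmod := h i (by norm_num)
  -- every vertex other than `e i` is in the prefix set
  have hmem : ∀ x : Fin 8, x ≠ e i → x ∈ {v : Fin 8 | ∃ j, j < i ∧ e j = x} := by
    intro x hx
    refine ⟨e.symm x, ?_, e.apply_symm_apply x⟩
    have hne : e.symm x ≠ i := by
      intro hh
      apply hx
      rw [← hh, e.apply_symm_apply]
    have hlt : (e.symm x : ℕ) < Fintype.card (Fin 8) := (e.symm x).isLt
    have hvne : ((e.symm x : Fin (Fintype.card (Fin 8))) : ℕ) ≠ 7 := by
      intro hv
      exact hne (Fin.ext (by simp [hi, hv]))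
    rw [Fin.lt_def]
    simp only [hi]
    omega
  obtain ⟨ha, hb, hw, hva, hvb, hvw, haw, hbw⟩ := coWit_spec (e i)
  have ma : ((coWit (e i)).1 : Fin 8) ∈ {v : Fin 8 | ∃ j, j < i ∧ e j = v} :=
    hmem _ ha
  have mb : ((coWit (e i)).2.1 : Fin 8) ∈ {v : Fin 8 | ∃ j, j < i ∧ e j = v} :=
    hmem _ hb
  have mw : ((coWit (e i)).2.2 : Fin 8) ∈ {v : Fin 8 | ∃ j, j < i ∧ e j = v} :=
    hmem _ hw
  have := hmod ⟨_, ma⟩ hva ⟨_, mb⟩ hvb ⟨_, mw⟩ hvw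
  exact hbw (this.mp haw)
end

section
/- A cograph G is module-composed if and only if G contains no induced subgraph isomorphic to co-2C₄ (the complement of two disjoint 4-cycles). -/
open scoped Classical

private instance twoC4.adjDec : DecidableRel twoC4.Adj := fun a b =>
  decidable_of_iff (a ≠ b ∧
    ((a, b) ∈ [((0 : Fin 8), (1 : Fin 8)), (1, 2), (2, 3), (3, 0),
              (4, 5), (5, 6), (6, 7), (7, 4)] ∨
     (b, a) ∈ [((0 : Fin 8), (1 : Fin 8)), (1, 2), (2, 3), (3, 0),
              (4, 5), (5, 6), (6, 7), (7, 4)])) Iff.rfl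


section Aux
variable {V : Type*} {G : SimpleGraph V}

private def Pat4 (G : SimpleGraph V) (a b c d : V) : Prop :=
  G.Adj a b ∧ G.Adj b c ∧ G.Adj c d ∧ ¬G.Adj a c ∧ ¬G.Adj b d ∧ ¬G.Adj a d

private lemma concat_ranks (t : Finset V) (r₁ r₂ : V → ℕ) :
    ∃ r : V → ℕ,
      (∀ x ∈ t, ∀ y ∈ t, (r x < r y ↔ r₁ x < r₁ y) ∧ (r x = r y → r₁ x = r₁ y)) ∧
      (∀ x, x ∉ t → ∀ y, y ∉ t → (r x < r y ↔ r₂ x < r₂ y) ∧ (r x = r y → r₂ x = r₂ y)) ∧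
      (∀ x ∈ t, ∀ y, y ∉ t → r x < r y) := by
  classical
  refine ⟨fun x => if x ∈ t then r₁ x else (t.sup r₁ + 1) + r₂ x, ?_, ?_, ?_⟩
  · intro x hx y hy; simp [hx, hy]
  · intro x hx y hy; simp only [if_neg hx, if_neg hy]; omega
  · intro x hx y hy
    simp only [if_pos hx, if_neg hy]
    have : r₁ x ≤ t.sup r₁ := Finset.le_sup hx
    omega

private lemma disc_step {G : SimpleGraph V} (hP4 : ∀ a b c d, ¬ Pat4 G a b c d)
    {s t t' : Finset V} {v : V}
    (hts : t ⊆ s) (ht's : t' ⊆ s) (hvs : v ∈ s) (hvt : v ∉ t)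
    (hcover : ∀ y ∈ s, y = v ∨ y ∈ t ∨ y ∈ t')
    (hcross : ∀ x ∈ t, ∀ y ∈ t', ¬ G.Adj x y)
    (hw : ∃ w ∈ t', G.Adj v w)
    (hu : ∃ u ∈ t, ¬ G.Adj v u) :
    ∃ t₁, t₁ ⊆ s ∧ t₁.Nonempty ∧ (s \ t₁).Nonempty ∧ (∀ x ∈ t₁, ∀ y ∈ s \ t₁, ¬ G.Adj x y) := by
  classical
  obtain ⟨w, hw', hvw⟩ := hw
  obtain ⟨u, hu', hvu⟩ := hu
  by_cases hxy : ∃ x ∈ t, ¬ G.Adj v x ∧ ∃ y ∈ t, G.Adj v y ∧ G.Adj x y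
  · obtain ⟨x, hx, hvx, y, hy, hvy, hxy'⟩ := hxy
    exact (hP4 x y v w ⟨hxy', hvy.symm, hvw, fun h => hvx h.symm,
      hcross y hy w hw', hcross x hx w hw'⟩).elim
  · push_neg at hxy
    refine ⟨t.filter (fun z => ¬ G.Adj v z), (Finset.filter_subset _ _).trans hts,
      ⟨u, Finset.mem_filter.2 ⟨hu', hvu⟩⟩,
      ⟨v, Finset.mem_sdiff.2 ⟨hvs, fun hv => hvt (Finset.filter_subset _ _ hv)⟩⟩, ?_⟩
    intro x hx y hy
    rw [Finset.mem_filter] at hx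
    rw [Finset.mem_sdiff] at hy
    obtain ⟨hxt, hvx⟩ := hx
    obtain ⟨hys, hyn⟩ := hy
    rcases hcover y hys with rfl | hyt | hyt'
    · exact fun h => hvx h.symm
    · have hvy : G.Adj v y := by
        by_contra hny
        exact hyn (Finset.mem_filter.2 ⟨hyt, hny⟩)
      exact hxy x hxt hvx y hyt hvy
    · exact hcross x hxt y hyt'

private lemma step_lemma {G : SimpleGraph V} (hP4 : ∀ a b c d, ¬ Pat4 G a b c d)
    {s t : Finset V} {v : V}
    (hvs : v ∈ s)
    (hts : t ⊆ s.erase v) (htne : t.Nonempty) (ht'ne : (s.erase v \ t).Nonempty)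
    (hcross : ∀ x ∈ t, ∀ y ∈ s.erase v \ t, ¬ G.Adj x y) :
    ∃ t₁, t₁ ⊆ s ∧ t₁.Nonempty ∧ (s \ t₁).Nonempty ∧
      ((∀ x ∈ t₁, ∀ y ∈ s \ t₁, ¬ G.Adj x y) ∨ (∀ x ∈ t₁, ∀ y ∈ s \ t₁, ¬ Gᶜ.Adj x y)) := by
  classical
  set t' := s.erase v \ t with ht'
  have hvt : v ∉ t := fun h => (Finset.mem_erase.1 (hts h)).1 rfl
  have hvt' : v ∉ t' := fun h => (Finset.mem_erase.1 (Finset.mem_sdiff.1 h).1).1 rfl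
  have hts' : t ⊆ s := hts.trans (Finset.erase_subset _ _)
  have ht's : t' ⊆ s := (Finset.sdiff_subset).trans (Finset.erase_subset _ _)
  have hcover : ∀ y ∈ s, y = v ∨ y ∈ t ∨ y ∈ t' := by
    intro y hy
    by_cases h1 : y = v
    · exact Or.inl h1
    · by_cases h2 : y ∈ t
      · exact Or.inr (Or.inl h2)
      · exact Or.inr (Or.inr (Finset.mem_sdiff.2 ⟨Finset.mem_erase.2 ⟨h1, hy⟩, h2⟩))
  by_cases h1 : ∀ y ∈ t, ¬ G.Adj v y
  · refine ⟨t, hts', htne, ⟨v, Finset.mem_sdiff.2 ⟨hvs, hvt⟩⟩, Or.inl ?_⟩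
    intro x hx y hy
    rw [Finset.mem_sdiff] at hy
    rcases hcover y hy.1 with rfl | hyt | hyt'
    · exact fun h => h1 x hx h.symm
    · exact absurd hyt hy.2
    · exact hcross x hx y hyt'
  by_cases h2 : ∀ y ∈ t', ¬ G.Adj v y
  · obtain ⟨u, hu⟩ := htne
    refine ⟨t', ht's, ht'ne, ⟨u, Finset.mem_sdiff.2 ⟨hts' hu,
        fun h => (Finset.mem_sdiff.1 h).2 hu⟩⟩, Or.inl ?_⟩
    intro x hx y hy
    rw [Finset.mem_sdiff] at hy
    rcases hcover y hy.1 with rfl | hyt | hyt'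
    · exact fun h => h2 x hx h.symm
    · exact fun h => hcross y hyt x hx h.symm
    · exact absurd hyt' hy.2
  push_neg at h1 h2
  obtain ⟨y₁, hy₁t, hvy₁⟩ := h1
  obtain ⟨y₂, hy₂t, hvy₂⟩ := h2
  by_cases h3 : ∀ y ∈ s.erase v, G.Adj v y
  · obtain ⟨u, hu⟩ := htne
    refine ⟨{v}, Finset.singleton_subset_iff.2 hvs, Finset.singleton_nonempty v,
      ⟨u, Finset.mem_sdiff.2 ⟨hts' hu, fun h => hvt ((Finset.mem_singleton.1 h) ▸ hu)⟩⟩,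
      Or.inr ?_⟩
    intro x hx y hy
    rw [Finset.mem_singleton] at hx
    subst hx
    rw [Finset.mem_sdiff, Finset.mem_singleton] at hy
    intro hc
    exact ((G.compl_adj _ _).1 hc).2 (h3 y (Finset.mem_erase.2 ⟨hy.2, hy.1⟩))
  · push_neg at h3
    obtain ⟨u, hus', hvu⟩ := h3
    rcases hcover u ((Finset.erase_subset _ _) hus') with rfl | hut | hut'
    · exact absurd rfl (Finset.mem_erase.1 hus').1
    · exact (disc_step hP4 hts' ht's hvs hvt hcover hcross
        ⟨y₂, hy₂t, hvy₂⟩ ⟨u, hut, hvu⟩).imp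
        (fun t₁ h => ⟨h.1, h.2.1, h.2.2.1, Or.inl h.2.2.2⟩)
    · have hcover' : ∀ y ∈ s, y = v ∨ y ∈ t' ∨ y ∈ t := by
        intro y hy; rcases hcover y hy with h | h | h
        exacts [Or.inl h, Or.inr (Or.inr h), Or.inr (Or.inl h)]
      exact (disc_step hP4 ht's hts' hvs hvt' hcover'
        (fun x hx y hy h => hcross y hy x hx h.symm)
        ⟨y₁, hy₁t, hvy₁⟩ ⟨u, hut', hvu⟩).imp
        (fun t₁ h => ⟨h.1, h.2.1, h.2.2.1, Or.inl h.2.2.2⟩)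

private lemma split_lemma {G : SimpleGraph V} (hP4 : ∀ a b c d, ¬ Pat4 G a b c d)
    (hP4c : ∀ a b c d, ¬ Pat4 Gᶜ a b c d) :
    ∀ s : Finset V, 2 ≤ s.card →
      ∃ t, t ⊆ s ∧ t.Nonempty ∧ (s \ t).Nonempty ∧
        ((∀ x ∈ t, ∀ y ∈ s \ t, ¬ G.Adj x y) ∨ (∀ x ∈ t, ∀ y ∈ s \ t, ¬ Gᶜ.Adj x y)) := by
  classical
  intro s
  induction s using Finset.strongInduction with
  | _ s ih =>
    intro h2
    have hpos : 0 < s.card := by omega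
    obtain ⟨v, hvs⟩ := Finset.card_pos.1 hpos
    have hcard : (s.erase v).card = s.card - 1 := Finset.card_erase_of_mem hvs
    by_cases hc : (s.erase v).card ≤ 1
    · have h1 : (s.erase v).card = 1 := by omega
      obtain ⟨u, hu⟩ := Finset.card_eq_one.1 h1
      have hus : u ∈ s := (Finset.erase_subset _ _) (hu ▸ Finset.mem_singleton_self u)
      have huv : u ≠ v := (Finset.mem_erase.1 (hu ▸ Finset.mem_singleton_self u)).1
      have hmem : ∀ y ∈ s, y = u ∨ y = v := by
        intro y hy
        by_cases h : y = v
        · exact Or.inr h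
        · have : y ∈ s.erase v := Finset.mem_erase.2 ⟨h, hy⟩
          rw [hu, Finset.mem_singleton] at this
          exact Or.inl this
      refine ⟨{u}, Finset.singleton_subset_iff.2 hus, Finset.singleton_nonempty u,
        ⟨v, Finset.mem_sdiff.2 ⟨hvs, fun h => huv (Finset.mem_singleton.1 h).symm⟩⟩, ?_⟩
      by_cases hadj : G.Adj u v
      · refine Or.inr ?_
        intro x hx y hy
        rw [Finset.mem_singleton] at hx; subst hx
        rw [Finset.mem_sdiff, Finset.mem_singleton] at hy
        rcases hmem y hy.1 with rfl | rfl
        · exact absurd rfl hy.2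
        · exact fun hcadj => ((G.compl_adj _ _).1 hcadj).2 hadj
      · refine Or.inl ?_
        intro x hx y hy
        rw [Finset.mem_singleton] at hx; subst hx
        rw [Finset.mem_sdiff, Finset.mem_singleton] at hy
        rcases hmem y hy.1 with rfl | rfl
        · exact absurd rfl hy.2
        · exact hadj
    · have h2' : 2 ≤ (s.erase v).card := by omega
      obtain ⟨t, hts, htne, ht'ne, hd⟩ := ih (s.erase v) (Finset.erase_ssubset hvs) h2'
      rcases hd with hd | hd
      · exact step_lemma hP4 hvs hts htne ht'ne hd
      · have := step_lemma (G := Gᶜ) hP4c hvs hts htne ht'ne hd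
        obtain ⟨t₁, h1, h2'', h3, h4⟩ := this
        refine ⟨t₁, h1, h2'', h3, ?_⟩
        rcases h4 with h | h
        · exact Or.inr h
        · refine Or.inl ?_
          intro x hx y hy
          have := h x hx y hy
          rwa [compl_compl] at this

private def StrongOn (G : SimpleGraph V) (r : V → ℕ) (s : Finset V) : Prop :=
  (∀ x ∈ s, ∀ y ∈ s, r x = r y → x = y) ∧
  ∀ v ∈ s, ∀ b ∈ s, ∀ c ∈ s, r b < r v → r c < r v → G.Adj v b → ¬G.Adj v c → G.Adj b c

private def GoodOn (G : SimpleGraph V) (r : V → ℕ) (s : Finset V) : Prop :=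
  (∀ x ∈ s, ∀ y ∈ s, r x = r y → x = y) ∧
  ∀ v ∈ s, ∀ a ∈ s, ∀ b ∈ s, ∀ c ∈ s, r a < r v → r b < r v → r c < r v →
    G.Adj v a → G.Adj v b → ¬G.Adj v c → (G.Adj a c ↔ G.Adj b c)

private def Has2K2 (G : SimpleGraph V) (s : Finset V) : Prop :=
  ∃ a ∈ s, ∃ b ∈ s, ∃ c ∈ s, ∃ d ∈ s,
    G.Adj a b ∧ G.Adj c d ∧ a ≠ c ∧ a ≠ d ∧ b ≠ c ∧ b ≠ d ∧
    ¬G.Adj a c ∧ ¬G.Adj a d ∧ ¬G.Adj b c ∧ ¬G.Adj b d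

private lemma has2K2_mono {G : SimpleGraph V} {u s : Finset V} (h : u ⊆ s) :
    Has2K2 G u → Has2K2 G s := by
  rintro ⟨a, ha, b, hb, c, hc, d, hd, rest⟩
  exact ⟨a, h ha, b, h hb, c, h hc, d, h hd, rest⟩

private lemma disc_combineS [Fintype V] {G : SimpleGraph V} {s A B : Finset V}
    (hcover : ∀ x ∈ s, x ∈ A ∨ x ∈ B) (hdisj : ∀ x, x ∈ A → x ∉ B)
    (hcross : ∀ x ∈ A, ∀ y ∈ B, ¬ G.Adj x y)
    (hiso : ∀ a ∈ B, ∀ b ∈ B, ¬ G.Adj a b)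
    (hA : ∃ r, StrongOn G r A) :
    ∃ r, StrongOn G r s := by
  classical
  obtain ⟨r₁, hinj₁, hstr₁⟩ := hA
  obtain ⟨r, hin, hout, hio⟩ := concat_ranks A r₁ (fun x => ((Fintype.equivFin V) x : ℕ))
  refine ⟨r, ?_, ?_⟩
  · intro x hx y hy hxy
    by_cases hxA : x ∈ A <;> by_cases hyA : y ∈ A
    · exact hinj₁ x hxA y hyA ((hin x hxA y hyA).2 hxy)
    · exact absurd hxy (Nat.ne_of_lt (hio x hxA y hyA))
    · exact absurd hxy.symm (Nat.ne_of_lt (hio y hyA x hxA))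
    · exact (Fintype.equivFin V).injective (Fin.val_injective ((hout x hxA y hyA).2 hxy))
  · intro v hv b hb c hc hbv hcv hadj hnadj
    by_cases hvA : v ∈ A
    · have hbA : b ∈ A := by
        by_contra hbA
        rcases hcover b hb with h | h
        · exact hbA h
        · exact hcross v hvA b h hadj
      have hcA : c ∈ A := by
        by_contra hcA
        exact absurd (hio v hvA c hcA) (not_lt.2 hcv.le)
      exact hstr₁ v hvA b hbA c hcA ((hin b hbA v hvA).1.mp hbv)
        ((hin c hcA v hvA).1.mp hcv) hadj hnadj
    · have hvB : v ∈ B := (hcover v hv).resolve_left hvA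
      rcases hcover b hb with h | h
      · exact absurd hadj.symm (hcross b h v hvB)
      · exact absurd hadj (hiso v hvB b h)

private lemma join_combineS {G : SimpleGraph V} {s A B : Finset V}
    (hcover : ∀ x ∈ s, x ∈ A ∨ x ∈ B) (hdisj : ∀ x, x ∈ A → x ∉ B)
    (hall : ∀ x ∈ A, ∀ y ∈ B, G.Adj x y)
    (hA : ∃ r, StrongOn G r A) (hB : ∃ r, StrongOn G r B) :
    ∃ r, StrongOn G r s := by
  classical
  obtain ⟨r₁, hinj₁, hstr₁⟩ := hA
  obtain ⟨r₂, hinj₂, hstr₂⟩ := hB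
  obtain ⟨r, hin, hout, hio⟩ := concat_ranks A r₁ r₂
  have hmemB : ∀ x ∈ s, x ∉ A → x ∈ B := fun x hx hxA => (hcover x hx).resolve_left hxA
  refine ⟨r, ?_, ?_⟩
  · intro x hx y hy hxy
    by_cases hxA : x ∈ A <;> by_cases hyA : y ∈ A
    · exact hinj₁ x hxA y hyA ((hin x hxA y hyA).2 hxy)
    · exact absurd hxy (Nat.ne_of_lt (hio x hxA y hyA))
    · exact absurd hxy.symm (Nat.ne_of_lt (hio y hyA x hxA))
    · exact hinj₂ x (hmemB x hx hxA) y (hmemB y hy hyA) ((hout x hxA y hyA).2 hxy)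
  · intro v hv b hb c hc hbv hcv hadj hnadj
    by_cases hvA : v ∈ A
    · have hcA : c ∈ A := by
        by_contra hcA
        exact hnadj (hall v hvA c (hmemB c hc hcA))
      have hbA : b ∈ A := by
        by_contra hbA
        exact absurd (hio v hvA b hbA) (not_lt.2 hbv.le)
      exact hstr₁ v hvA b hbA c hcA ((hin b hbA v hvA).1.mp hbv)
        ((hin c hcA v hvA).1.mp hcv) hadj hnadj
    · have hvB : v ∈ B := hmemB v hv hvA
      have hcA : c ∉ A := fun hcA => hnadj (hall c hcA v hvB).symm
      have hcB : c ∈ B := hmemB c hc hcA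
      by_cases hbA : b ∈ A
      · exact hall b hbA c hcB
      · exact hstr₂ v hvB b (hmemB b hb hbA) c hcB ((hout b hbA v hvA).1.mp hbv)
          ((hout c hcA v hvA).1.mp hcv) hadj hnadj

private lemma disc_combineM {G : SimpleGraph V} {s A B : Finset V}
    (hcover : ∀ x ∈ s, x ∈ A ∨ x ∈ B) (hdisj : ∀ x, x ∈ A → x ∉ B)
    (hcross : ∀ x ∈ A, ∀ y ∈ B, ¬ G.Adj x y)
    (hA : ∃ r, GoodOn G r A) (hB : ∃ r, GoodOn G r B) :
    ∃ r, GoodOn G r s := by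
  classical
  obtain ⟨r₁, hinj₁, hg₁⟩ := hA
  obtain ⟨r₂, hinj₂, hg₂⟩ := hB
  obtain ⟨r, hin, hout, hio⟩ := concat_ranks A r₁ r₂
  have hmemB : ∀ x ∈ s, x ∉ A → x ∈ B := fun x hx hxA => (hcover x hx).resolve_left hxA
  refine ⟨r, ?_, ?_⟩
  · intro x hx y hy hxy
    by_cases hxA : x ∈ A <;> by_cases hyA : y ∈ A
    · exact hinj₁ x hxA y hyA ((hin x hxA y hyA).2 hxy)
    · exact absurd hxy (Nat.ne_of_lt (hio x hxA y hyA))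
    · exact absurd hxy.symm (Nat.ne_of_lt (hio y hyA x hxA))
    · exact hinj₂ x (hmemB x hx hxA) y (hmemB y hy hyA) ((hout x hxA y hyA).2 hxy)
  · intro v hv a ha b hb c hc hav hbv hcv hva hvb hvc
    by_cases hvA : v ∈ A
    · have haA : a ∈ A := by
        by_contra h; exact hcross v hvA a (hmemB a ha h) hva
      have hbA : b ∈ A := by
        by_contra h; exact hcross v hvA b (hmemB b hb h) hvb
      have hcA : c ∈ A := by
        by_contra h; exact absurd (hio v hvA c h) (not_lt.2 hcv.le)
      exact hg₁ v hvA a haA b hbA c hcA ((hin a haA v hvA).1.mp hav)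
        ((hin b hbA v hvA).1.mp hbv) ((hin c hcA v hvA).1.mp hcv) hva hvb hvc
    · have hvB : v ∈ B := hmemB v hv hvA
      have haA : a ∉ A := fun h => hcross a h v hvB hva.symm
      have hbA : b ∉ A := fun h => hcross b h v hvB hvb.symm
      have haB : a ∈ B := hmemB a ha haA
      have hbB : b ∈ B := hmemB b hb hbA
      by_cases hcA : c ∈ A
      · exact iff_of_false (fun h => hcross c hcA a haB h.symm)
          (fun h => hcross c hcA b hbB h.symm)
      · exact hg₂ v hvB a haB b hbB c (hmemB c hc hcA) ((hout a haA v hvA).1.mp hav)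
          ((hout b hbA v hvA).1.mp hbv) ((hout c hcA v hvA).1.mp hcv) hva hvb hvc

private lemma join_combineM {G : SimpleGraph V} {s A B : Finset V}
    (hcover : ∀ x ∈ s, x ∈ A ∨ x ∈ B) (hdisj : ∀ x, x ∈ A → x ∉ B)
    (hall : ∀ x ∈ A, ∀ y ∈ B, G.Adj x y)
    (hA : ∃ r, GoodOn G r A) (hB : ∃ r, StrongOn G r B) :
    ∃ r, GoodOn G r s := by
  classical
  obtain ⟨r₁, hinj₁, hg₁⟩ := hA
  obtain ⟨r₂, hinj₂, hstr₂⟩ := hB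
  obtain ⟨r, hin, hout, hio⟩ := concat_ranks A r₁ r₂
  have hmemB : ∀ x ∈ s, x ∉ A → x ∈ B := fun x hx hxA => (hcover x hx).resolve_left hxA
  refine ⟨r, ?_, ?_⟩
  · intro x hx y hy hxy
    by_cases hxA : x ∈ A <;> by_cases hyA : y ∈ A
    · exact hinj₁ x hxA y hyA ((hin x hxA y hyA).2 hxy)
    · exact absurd hxy (Nat.ne_of_lt (hio x hxA y hyA))
    · exact absurd hxy.symm (Nat.ne_of_lt (hio y hyA x hxA))
    · exact hinj₂ x (hmemB x hx hxA) y (hmemB y hy hyA) ((hout x hxA y hyA).2 hxy)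
  · intro v hv a ha b hb c hc hav hbv hcv hva hvb hvc
    by_cases hvA : v ∈ A
    · have hcA : c ∈ A := by
        by_contra h; exact hvc (hall v hvA c (hmemB c hc h))
      have haA : a ∈ A := by
        by_contra h; exact absurd (hio v hvA a h) (not_lt.2 hav.le)
      have hbA : b ∈ A := by
        by_contra h; exact absurd (hio v hvA b h) (not_lt.2 hbv.le)
      exact hg₁ v hvA a haA b hbA c hcA ((hin a haA v hvA).1.mp hav)
        ((hin b hbA v hvA).1.mp hbv) ((hin c hcA v hvA).1.mp hcv) hva hvb hvc
    · have hvB : v ∈ B := hmemB v hv hvA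
      have hcA : c ∉ A := fun h => hvc (hall c h v hvB).symm
      have hcB : c ∈ B := hmemB c hc hcA
      have hAdj : ∀ x ∈ s, r x < r v → G.Adj v x → G.Adj x c := by
        intro x hx hxv hvx
        by_cases hxA : x ∈ A
        · exact hall x hxA c hcB
        · exact hstr₂ v hvB x (hmemB x hx hxA) c hcB ((hout x hxA v hvA).1.mp hxv)
            ((hout c hcA v hvA).1.mp hcv) hvx hvc
      exact iff_of_true (hAdj a ha hav hva) (hAdj b hb hbv hvb)

private lemma strongOrder [Fintype V] {G : SimpleGraph V}
    (hP4 : ∀ a b c d, ¬ Pat4 G a b c d) (hP4c : ∀ a b c d, ¬ Pat4 Gᶜ a b c d) :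
    ∀ s : Finset V, ¬ Has2K2 G s → ∃ r, StrongOn G r s := by
  classical
  intro s
  induction s using Finset.strongInduction with
  | _ s ih =>
    intro hs
    by_cases h2 : s.card ≤ 1
    · exact ⟨fun _ => 0, fun x hx y hy _ => Finset.card_le_one.1 h2 x hx y hy,
        fun v hv b hb c hc hbv => absurd hbv (lt_irrefl 0)⟩
    · obtain ⟨t, hts, htne, ht'ne, hd⟩ := split_lemma hP4 hP4c s (by omega)
      obtain ⟨w, hw⟩ := ht'ne
      have htss : t ⊂ s := (Finset.ssubset_iff_of_subset hts).2
        ⟨w, (Finset.mem_sdiff.1 hw).1, (Finset.mem_sdiff.1 hw).2⟩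
      have ht'ss : s \ t ⊂ s := by
        obtain ⟨u, hu⟩ := htne
        exact (Finset.ssubset_iff_of_subset Finset.sdiff_subset).2
          ⟨u, hts hu, fun h => (Finset.mem_sdiff.1 h).2 hu⟩
      have hcover : ∀ x ∈ s, x ∈ t ∨ x ∈ s \ t := by
        intro x hx
        by_cases h : x ∈ t
        · exact Or.inl h
        · exact Or.inr (Finset.mem_sdiff.2 ⟨hx, h⟩)
      have hdisj : ∀ x, x ∈ t → x ∉ s \ t := fun x hx h => (Finset.mem_sdiff.1 h).2 hx
      have hcover' : ∀ x ∈ s, x ∈ s \ t ∨ x ∈ t := fun x hx => (hcover x hx).symm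
      have hdisj' : ∀ x, x ∈ s \ t → x ∉ t := fun x hx h => (Finset.mem_sdiff.1 hx).2 h
      rcases hd with hd | hd
      · -- disconnected split
        by_cases he : ∃ p ∈ t, ∃ q ∈ t, G.Adj p q
        · obtain ⟨p, hp, q, hq, hpq⟩ := he
          have hiso : ∀ a ∈ s \ t, ∀ b ∈ s \ t, ¬ G.Adj a b := by
            intro a ha b hb hab
            refine hs ⟨p, hts hp, q, hts hq, a, (Finset.mem_sdiff.1 ha).1,
              b, (Finset.mem_sdiff.1 hb).1, hpq, hab, ?_, ?_, ?_, ?_, ?_, ?_, ?_, ?_⟩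
            · rintro rfl; exact (Finset.mem_sdiff.1 ha).2 hp
            · rintro rfl; exact (Finset.mem_sdiff.1 hb).2 hp
            · rintro rfl; exact (Finset.mem_sdiff.1 ha).2 hq
            · rintro rfl; exact (Finset.mem_sdiff.1 hb).2 hq
            · exact hd p hp a ha
            · exact hd p hp b hb
            · exact hd q hq a ha
            · exact hd q hq b hb
          exact disc_combineS hcover hdisj hd hiso
            (ih t htss (fun h => hs (has2K2_mono hts h)))
        · push_neg at he
          exact disc_combineS hcover' hdisj'
            (fun x hx y hy h => hd y hy x hx h.symm) he
            (ih (s \ t) ht'ss (fun h => hs (has2K2_mono Finset.sdiff_subset h)))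
      · -- join split
        have hall : ∀ x ∈ t, ∀ y ∈ s \ t, G.Adj x y := by
          intro x hx y hy
          by_contra hno
          exact hd x hx y hy ((G.compl_adj x y).2
            ⟨fun h => (Finset.mem_sdiff.1 hy).2 (h ▸ hx), hno⟩)
        exact join_combineS hcover hdisj hall
          (ih t htss (fun h => hs (has2K2_mono hts h)))
          (ih (s \ t) ht'ss (fun h => hs (has2K2_mono Finset.sdiff_subset h)))

private lemma mainOrder [Fintype V] {G : SimpleGraph V}
    (hP4 : ∀ a b c d, ¬ Pat4 G a b c d) (hP4c : ∀ a b c d, ¬ Pat4 Gᶜ a b c d)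
    (hco : ∀ a b c d a' b' c' d' : V,
      G.Adj a b → G.Adj c d → a ≠ c → a ≠ d → b ≠ c → b ≠ d →
      ¬G.Adj a c → ¬G.Adj a d → ¬G.Adj b c → ¬G.Adj b d →
      G.Adj a' b' → G.Adj c' d' → a' ≠ c' → a' ≠ d' → b' ≠ c' → b' ≠ d' →
      ¬G.Adj a' c' → ¬G.Adj a' d' → ¬G.Adj b' c' → ¬G.Adj b' d' →
      (∀ x ∈ ({a, b, c, d} : Finset V), ∀ y ∈ ({a', b', c', d'} : Finset V), G.Adj x y) →
      False) :
    ∀ s : Finset V, ∃ r, GoodOn G r s := by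
  classical
  intro s
  induction s using Finset.strongInduction with
  | _ s ih =>
    by_cases h2 : s.card ≤ 1
    · exact ⟨fun _ => 0, fun x hx y hy _ => Finset.card_le_one.1 h2 x hx y hy,
        fun v hv a ha b hb c hc hav => absurd hav (lt_irrefl 0)⟩
    · obtain ⟨t, hts, htne, ht'ne, hd⟩ := split_lemma hP4 hP4c s (by omega)
      obtain ⟨w, hw⟩ := ht'ne
      have htss : t ⊂ s := (Finset.ssubset_iff_of_subset hts).2
        ⟨w, (Finset.mem_sdiff.1 hw).1, (Finset.mem_sdiff.1 hw).2⟩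
      have ht'ss : s \ t ⊂ s := by
        obtain ⟨u, hu⟩ := htne
        exact (Finset.ssubset_iff_of_subset Finset.sdiff_subset).2
          ⟨u, hts hu, fun h => (Finset.mem_sdiff.1 h).2 hu⟩
      have hcover : ∀ x ∈ s, x ∈ t ∨ x ∈ s \ t := by
        intro x hx
        by_cases h : x ∈ t
        · exact Or.inl h
        · exact Or.inr (Finset.mem_sdiff.2 ⟨hx, h⟩)
      have hdisj : ∀ x, x ∈ t → x ∉ s \ t := fun x hx h => (Finset.mem_sdiff.1 h).2 hx
      have hcover' : ∀ x ∈ s, x ∈ s \ t ∨ x ∈ t := fun x hx => (hcover x hx).symm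
      have hdisj' : ∀ x, x ∈ s \ t → x ∉ t := fun x hx h => (Finset.mem_sdiff.1 hx).2 h
      rcases hd with hd | hd
      · exact disc_combineM hcover hdisj hd (ih t htss) (ih (s \ t) ht'ss)
      · have hall : ∀ x ∈ t, ∀ y ∈ s \ t, G.Adj x y := by
          intro x hx y hy
          by_contra hno
          exact hd x hx y hy ((G.compl_adj x y).2
            ⟨fun h => (Finset.mem_sdiff.1 hy).2 (h ▸ hx), hno⟩)
        by_cases hk : Has2K2 G t
        · -- t has a 2K2, so s \ t must be 2K2-free
          obtain ⟨a, ha, b, hb, c, hc, d, hd', hab, hcd, eac, ead, ebc, ebd,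
            nac, nad, nbc, nbd⟩ := hk
          have hk' : ¬ Has2K2 G (s \ t) := by
            rintro ⟨a', ha', b', hb', c', hc', d', hd'', hab', hcd', eac', ead', ebc', ebd',
              nac', nad', nbc', nbd'⟩
            refine hco a b c d a' b' c' d' hab hcd eac ead ebc ebd nac nad nbc nbd
              hab' hcd' eac' ead' ebc' ebd' nac' nad' nbc' nbd' ?_
            intro x hx y hy
            have hxt : x ∈ t := by
              simp only [Finset.mem_insert, Finset.mem_singleton] at hx
              rcases hx with rfl | rfl | rfl | rfl <;> assumption
            have hyt : y ∈ s \ t := by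
              simp only [Finset.mem_insert, Finset.mem_singleton] at hy
              rcases hy with rfl | rfl | rfl | rfl <;> assumption
            exact hall x hxt y hyt
          exact join_combineM hcover hdisj hall (ih t htss)
            (strongOrder hP4 hP4c (s \ t) hk')
        · exact join_combineM hcover' hdisj'
            (fun x hx y hy => (hall y hy x hx).symm) (ih (s \ t) ht'ss)
            (strongOrder hP4 hP4c t hk)


private lemma p4_emb_of_pat {a b c d : V} (h : Pat4 G a b c d) :
    ∃ _f : SimpleGraph.pathGraph 4 ↪g G, True := by
  obtain ⟨h1, h2, h3, n1, n2, n3⟩ := h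
  have hab : a ≠ b := h1.ne
  have hbc : b ≠ c := h2.ne
  have hcd : c ≠ d := h3.ne
  have hac : a ≠ c := fun e => n3 (e ▸ h3)
  have hbd : b ≠ d := fun e => n3 (e ▸ h1 : G.Adj a d)
  have had : a ≠ d := fun e => n1 (e ▸ h3.symm)
  refine ⟨⟨⟨![a, b, c, d], ?_⟩, ?_⟩, trivial⟩
  · intro i j hij
    fin_cases i <;> fin_cases j <;> simp_all
  · intro i j
    show G.Adj (![a, b, c, d] i) (![a, b, c, d] j) ↔ _
    fin_cases i <;> fin_cases j <;>
      simp_all [SimpleGraph.pathGraph_adj, G.adj_comm] <;> decide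

private lemma pat4_compl {G : SimpleGraph V} (hP4 : ∀ a b c d, ¬ Pat4 G a b c d) :
    ∀ a b c d, ¬ Pat4 Gᶜ a b c d := by
  rintro a b c d ⟨h1, h2, h3, n1, n2, n3⟩
  have hac : a ≠ c := fun e => n3 (e ▸ h3)
  have hbd : b ≠ d := fun e => n3 (e ▸ h1 : Gᶜ.Adj a d)
  have had : a ≠ d := fun e => n1 (e ▸ h3.symm)
  have Hbd : G.Adj b d := by
    by_contra hno; exact n2 ((G.compl_adj b d).2 ⟨hbd, hno⟩)
  have Had : G.Adj a d := by
    by_contra hno; exact n3 ((G.compl_adj a d).2 ⟨had, hno⟩)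
  have Hac : G.Adj a c := by
    by_contra hno; exact n1 ((G.compl_adj a c).2 ⟨hac, hno⟩)
  exact hP4 b d a c ⟨Hbd, Had.symm, Hac, fun h => ((G.compl_adj a b).1 h1).2 h.symm,
    fun h => ((G.compl_adj c d).1 h3).2 h.symm, fun h => ((G.compl_adj b c).1 h2).2 h⟩

private lemma key_triple : ∀ x : Fin 8, ∃ a b c : Fin 8,
    twoC4ᶜ.Adj x a ∧ twoC4ᶜ.Adj x b ∧ ¬ twoC4ᶜ.Adj x c ∧ c ≠ x ∧
    twoC4ᶜ.Adj a c ∧ ¬ twoC4ᶜ.Adj b c := by decide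

set_option maxRecDepth 10000 in
private lemma co2C4_emb_of_pat {a b c d a' b' c' d' : V}
    (hab : G.Adj a b) (hcd : G.Adj c d)
    (nac : ¬G.Adj a c) (nad : ¬G.Adj a d) (nbc : ¬G.Adj b c) (nbd : ¬G.Adj b d)
    (eac : a ≠ c) (ead : a ≠ d) (ebc : b ≠ c) (ebd : b ≠ d)
    (hab' : G.Adj a' b') (hcd' : G.Adj c' d')
    (nac' : ¬G.Adj a' c') (nad' : ¬G.Adj a' d') (nbc' : ¬G.Adj b' c') (nbd' : ¬G.Adj b' d')
    (eac' : a' ≠ c') (ead' : a' ≠ d') (ebc' : b' ≠ c') (ebd' : b' ≠ d')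
    (x00 : G.Adj a a') (x01 : G.Adj a b') (x02 : G.Adj a c') (x03 : G.Adj a d') (x10 : G.Adj b a') (x11 : G.Adj b b') (x12 : G.Adj b c') (x13 : G.Adj b d') (x20 : G.Adj c a') (x21 : G.Adj c b') (x22 : G.Adj c c') (x23 : G.Adj c d') (x30 : G.Adj d a') (x31 : G.Adj d b') (x32 : G.Adj d c') (x33 : G.Adj d d') :
    ∃ _f : twoC4ᶜ ↪g G, True := by
  have Eac : a ≠ c := eac
  have Eab : a ≠ b := (hab).ne
  have Ead : a ≠ d := ead
  have Eaap : a ≠ a' := (x00).ne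
  have Eacp : a ≠ c' := (x02).ne
  have Eabp : a ≠ b' := (x01).ne
  have Eadp : a ≠ d' := (x03).ne
  have Eca : c ≠ a := eac.symm
  have Ecb : c ≠ b := ebc.symm
  have Ecd : c ≠ d := (hcd).ne
  have Ecap : c ≠ a' := (x20).ne
  have Eccp : c ≠ c' := (x22).ne
  have Ecbp : c ≠ b' := (x21).ne
  have Ecdp : c ≠ d' := (x23).ne
  have Eba : b ≠ a := ((hab).symm).ne
  have Ebc : b ≠ c := ebc
  have Ebd : b ≠ d := ebd
  have Ebap : b ≠ a' := (x10).ne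
  have Ebcp : b ≠ c' := (x12).ne
  have Ebbp : b ≠ b' := (x11).ne
  have Ebdp : b ≠ d' := (x13).ne
  have Eda : d ≠ a := ead.symm
  have Edc : d ≠ c := ((hcd).symm).ne
  have Edb : d ≠ b := ebd.symm
  have Edap : d ≠ a' := (x30).ne
  have Edcp : d ≠ c' := (x32).ne
  have Edbp : d ≠ b' := (x31).ne
  have Eddp : d ≠ d' := (x33).ne
  have Eapa : a' ≠ a := ((x00).symm).ne
  have Eapc : a' ≠ c := ((x20).symm).ne
  have Eapb : a' ≠ b := ((x10).symm).ne
  have Eapd : a' ≠ d := ((x30).symm).ne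
  have Eapcp : a' ≠ c' := eac'
  have Eapbp : a' ≠ b' := (hab').ne
  have Eapdp : a' ≠ d' := ead'
  have Ecpa : c' ≠ a := ((x02).symm).ne
  have Ecpc : c' ≠ c := ((x22).symm).ne
  have Ecpb : c' ≠ b := ((x12).symm).ne
  have Ecpd : c' ≠ d := ((x32).symm).ne
  have Ecpap : c' ≠ a' := eac'.symm
  have Ecpbp : c' ≠ b' := ebc'.symm
  have Ecpdp : c' ≠ d' := (hcd').ne
  have Ebpa : b' ≠ a := ((x01).symm).ne
  have Ebpc : b' ≠ c := ((x21).symm).ne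
  have Ebpb : b' ≠ b := ((x11).symm).ne
  have Ebpd : b' ≠ d := ((x31).symm).ne
  have Ebpap : b' ≠ a' := ((hab').symm).ne
  have Ebpcp : b' ≠ c' := ebc'
  have Ebpdp : b' ≠ d' := ebd'
  have Edpa : d' ≠ a := ((x03).symm).ne
  have Edpc : d' ≠ c := ((x23).symm).ne
  have Edpb : d' ≠ b := ((x13).symm).ne
  have Edpd : d' ≠ d := ((x33).symm).ne
  have Edpap : d' ≠ a' := ead'.symm
  have Edpcp : d' ≠ c' := ((hcd').symm).ne
  have Edpbp : d' ≠ b' := ebd'.symm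
  have hinj : Function.Injective (![a, c, b, d, a', c', b', d'] : Fin 8 → V) := by
    intro i j hij
    fin_cases i <;> fin_cases j <;>
      simp only [Matrix.cons_val_zero, Matrix.cons_val_one, Matrix.head_cons,
        Matrix.cons_val_succ] at hij ⊢ <;>
      first | rfl | exact absurd hij (by assumption)
  have H0 : ¬ G.Adj a c := nac
  have H1 : G.Adj a b := hab
  have H2 : ¬ G.Adj a d := nad
  have H3 : G.Adj a a' := x00
  have H4 : G.Adj a c' := x02
  have H5 : G.Adj a b' := x01
  have H6 : G.Adj a d' := x03
  have H7 : ¬ G.Adj c a := (fun h => nac h.symm)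
  have H8 : ¬ G.Adj c b := (fun h => nbc h.symm)
  have H9 : G.Adj c d := hcd
  have H10 : G.Adj c a' := x20
  have H11 : G.Adj c c' := x22
  have H12 : G.Adj c b' := x21
  have H13 : G.Adj c d' := x23
  have H14 : G.Adj b a := (hab).symm
  have H15 : ¬ G.Adj b c := nbc
  have H16 : ¬ G.Adj b d := nbd
  have H17 : G.Adj b a' := x10
  have H18 : G.Adj b c' := x12
  have H19 : G.Adj b b' := x11
  have H20 : G.Adj b d' := x13
  have H21 : ¬ G.Adj d a := (fun h => nad h.symm)
  have H22 : G.Adj d c := (hcd).symm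
  have H23 : ¬ G.Adj d b := (fun h => nbd h.symm)
  have H24 : G.Adj d a' := x30
  have H25 : G.Adj d c' := x32
  have H26 : G.Adj d b' := x31
  have H27 : G.Adj d d' := x33
  have H28 : G.Adj a' a := (x00).symm
  have H29 : G.Adj a' c := (x20).symm
  have H30 : G.Adj a' b := (x10).symm
  have H31 : G.Adj a' d := (x30).symm
  have H32 : ¬ G.Adj a' c' := nac'
  have H33 : G.Adj a' b' := hab'
  have H34 : ¬ G.Adj a' d' := nad'
  have H35 : G.Adj c' a := (x02).symm
  have H36 : G.Adj c' c := (x22).symm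
  have H37 : G.Adj c' b := (x12).symm
  have H38 : G.Adj c' d := (x32).symm
  have H39 : ¬ G.Adj c' a' := (fun h => nac' h.symm)
  have H40 : ¬ G.Adj c' b' := (fun h => nbc' h.symm)
  have H41 : G.Adj c' d' := hcd'
  have H42 : G.Adj b' a := (x01).symm
  have H43 : G.Adj b' c := (x21).symm
  have H44 : G.Adj b' b := (x11).symm
  have H45 : G.Adj b' d := (x31).symm
  have H46 : G.Adj b' a' := (hab').symm
  have H47 : ¬ G.Adj b' c' := nbc'
  have H48 : ¬ G.Adj b' d' := nbd'
  have H49 : G.Adj d' a := (x03).symm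
  have H50 : G.Adj d' c := (x23).symm
  have H51 : G.Adj d' b := (x13).symm
  have H52 : G.Adj d' d := (x33).symm
  have H53 : ¬ G.Adj d' a' := (fun h => nad' h.symm)
  have H54 : G.Adj d' c' := (hcd').symm
  have H55 : ¬ G.Adj d' b' := (fun h => nbd' h.symm)
  refine ⟨⟨⟨![a, c, b, d, a', c', b', d'], hinj⟩, ?_⟩, trivial⟩
  intro i j
  show G.Adj (![a, c, b, d, a', c', b', d'] i) (![a, c, b, d, a', c', b', d'] j) ↔ _
  fin_cases i <;> fin_cases j <;>
    simp only [Matrix.cons_val_zero, Matrix.cons_val_one, Matrix.head_cons,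
      Matrix.cons_val_succ] <;>
    first
      | exact iff_of_false (G.irrefl) (by decide)
      | exact iff_of_true (by assumption) (by decide)
      | exact iff_of_false (by assumption) (by decide)


variable [Fintype V]

private lemma mc_of_rank (r : V → ℕ) (hinj : Function.Injective r)
    (hgood : ∀ v a b c : V, r a < r v → r b < r v → r c < r v →
      G.Adj v a → G.Adj v b → ¬G.Adj v c → (G.Adj a c ↔ G.Adj b c)) :
    G.ModuleComposed := by
  letI : LinearOrder V := LinearOrder.lift' r hinj
  have hlt : ∀ x y : V, x < y ↔ r x < r y := by
    intro x y
    rw [lt_iff_le_not_ge, Nat.lt_iff_le_not_le]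
    exact Iff.rfl
  let e := Fintype.orderIsoFinOfCardEq V rfl
  refine ⟨e.toEquiv, ?_⟩
  intro i hi v₁ hv₁ v₂ hv₂ w hw
  have hrank : ∀ x : {v | ∃ j, j < i ∧ e.toEquiv j = v}, r ↑x < r (e.toEquiv i) := by
    rintro ⟨x, j, hj, rfl⟩
    exact (hlt _ _).1 (e.strictMono hj)
  have h1 : G.Adj (e.toEquiv i) ↑v₁ := hv₁
  have h2 : G.Adj (e.toEquiv i) ↑v₂ := hv₂
  have h3 : ¬ G.Adj (e.toEquiv i) ↑w := hw
  exact hgood (e.toEquiv i) ↑v₁ ↑v₂ ↑w (hrank v₁) (hrank v₂) (hrank w) h1 h2 h3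

private lemma rank_of_mc (h : G.ModuleComposed) :
    ∃ r : V → ℕ, Function.Injective r ∧ ∀ v a b c : V, r a < r v → r b < r v → r c < r v →
      G.Adj v a → G.Adj v b → ¬G.Adj v c → (G.Adj a c ↔ G.Adj b c) := by
  obtain ⟨e, hmod⟩ := h
  refine ⟨fun v => ((e.symm v : Fin _) : ℕ), fun x y hxy => by
    have := Fin.val_injective hxy
    exact e.symm.injective this, ?_⟩
  intro v a b c hra hrb hrc hva hvb hvc
  set i := e.symm v with hi
  have hei : e i = v := e.apply_symm_apply v
  have hpos : 0 < (i : ℕ) := Nat.lt_of_le_of_lt (Nat.zero_le _) hra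
  have ha : a ∈ {x | ∃ j, j < i ∧ e j = x} := ⟨e.symm a, hra, e.apply_symm_apply a⟩
  have hb : b ∈ {x | ∃ j, j < i ∧ e j = x} := ⟨e.symm b, hrb, e.apply_symm_apply b⟩
  have hc : c ∈ {x | ∃ j, j < i ∧ e j = x} := ⟨e.symm c, hrc, e.apply_symm_apply c⟩
  have := hmod i hpos ⟨a, ha⟩ (by simpa [hei] using hva) ⟨b, hb⟩ (by simpa [hei] using hvb)
    ⟨c, hc⟩ (by simpa [hei] using hvc)
  exact this

end Aux

/-- A cograph (a `P₄`-free graph) is module-composed iff it contains no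
induced subgraph isomorphic to co-2C₄. -/
theorem cograph_moduleComposed_iff {V : Type*} [Fintype V] (G : SimpleGraph V)
    (hcograph : ¬ ∃ _f : SimpleGraph.pathGraph 4 ↪g G, True) :
    G.ModuleComposed ↔ ¬ ∃ _f : twoC4ᶜ ↪g G, True := by
  classical
  have hP4 : ∀ a b c d, ¬ Pat4 G a b c d := fun a b c d hp => hcograph (p4_emb_of_pat hp)
  constructor
  · rintro hmc ⟨f, -⟩
    obtain ⟨r, hinj, hgood⟩ := rank_of_mc hmc
    obtain ⟨k₀, -, hk₀⟩ := Finset.exists_max_image Finset.univ (fun k => r (f k))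
      ⟨0, Finset.mem_univ 0⟩
    obtain ⟨a, b, c, h1, h2, h3, h4, h5, h6⟩ := key_triple k₀
    have hfinj := f.injective
    have hlt : ∀ x : Fin 8, x ≠ k₀ → r (f x) < r (f k₀) := by
      intro x hx
      refine lt_of_le_of_ne (hk₀ x (Finset.mem_univ x)) ?_
      intro h
      exact hx (hfinj (hinj h))
    have key := hgood (f k₀) (f a) (f b) (f c) (hlt a h1.ne') (hlt b h2.ne') (hlt c h4)
      (f.map_adj_iff.2 h1) (f.map_adj_iff.2 h2) (fun h => h3 (f.map_adj_iff.1 h))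
    exact h6 (f.map_adj_iff.1 (key.1 (f.map_adj_iff.2 h5)))
  · intro hno
    have hP4c := pat4_compl hP4
    have hco : ∀ a b c d a' b' c' d' : V,
        G.Adj a b → G.Adj c d → a ≠ c → a ≠ d → b ≠ c → b ≠ d →
        ¬G.Adj a c → ¬G.Adj a d → ¬G.Adj b c → ¬G.Adj b d →
        G.Adj a' b' → G.Adj c' d' → a' ≠ c' → a' ≠ d' → b' ≠ c' → b' ≠ d' →
        ¬G.Adj a' c' → ¬G.Adj a' d' → ¬G.Adj b' c' → ¬G.Adj b' d' →
        (∀ x ∈ ({a, b, c, d} : Finset V), ∀ y ∈ ({a', b', c', d'} : Finset V), G.Adj x y) →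
        False := by
      intro a b c d a' b' c' d' hab hcd eac ead ebc ebd nac nad nbc nbd
        hab' hcd' eac' ead' ebc' ebd' nac' nad' nbc' nbd' hcr
      exact hno (co2C4_emb_of_pat hab hcd nac nad nbc nbd eac ead ebc ebd
        hab' hcd' nac' nad' nbc' nbd' eac' ead' ebc' ebd'
        (hcr a (by simp) a' (by simp))
        (hcr a (by simp) b' (by simp))
        (hcr a (by simp) c' (by simp))
        (hcr a (by simp) d' (by simp))
        (hcr b (by simp) a' (by simp))
        (hcr b (by simp) b' (by simp))
        (hcr b (by simp) c' (by simp))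
        (hcr b (by simp) d' (by simp))
        (hcr c (by simp) a' (by simp))
        (hcr c (by simp) b' (by simp))
        (hcr c (by simp) c' (by simp))
        (hcr c (by simp) d' (by simp))
        (hcr d (by simp) a' (by simp))
        (hcr d (by simp) b' (by simp))
        (hcr d (by simp) c' (by simp))
        (hcr d (by simp) d' (by simp)))
    obtain ⟨r, hinj, hgood⟩ := mainOrder hP4 hP4c hco Finset.univ
    exact mc_of_rank r (fun x y h => hinj x (Finset.mem_univ x) y (Finset.mem_univ y) h)
      (fun v a b c h1 h2 h3 h4 h5 h6 => hgood v (Finset.mem_univ v) a (Finset.mem_univ a)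
        b (Finset.mem_univ b) c (Finset.mem_univ c) h1 h2 h3 h4 h5 h6)
end

section
/- Every graph containing no induced P₄ and no induced co-2C₄ is module-composed. -/
open scoped Classical

namespace ModComp

variable {V : Type*}

def P4pat (G : SimpleGraph V) (a b c d : V) : Prop :=
  G.Adj a b ∧ G.Adj b c ∧ G.Adj c d ∧ ¬G.Adj a c ∧ ¬G.Adj a d ∧ ¬G.Adj b d

def C4pat (G : SimpleGraph V) (a b c d : V) : Prop :=
  a ≠ c ∧ b ≠ d ∧ G.Adj a b ∧ G.Adj b c ∧ G.Adj c d ∧ G.Adj d a ∧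
    ¬G.Adj a c ∧ ¬G.Adj b d

def ReachIn (G : SimpleGraph V) (S : Set V) : V → V → Prop :=
  Relation.ReflTransGen (fun x y => x ∈ S ∧ y ∈ S ∧ G.Adj x y)

def ConnIn (G : SimpleGraph V) (S : Set V) : Prop :=
  ∀ x ∈ S, ∀ y ∈ S, ReachIn G S x y

def GoodIn (G : SimpleGraph V) (S : Set V) (v : V) : Prop :=
  v ∈ S ∧ ∀ x ∈ S, G.Adj v x → ∀ y ∈ S, G.Adj v y → ∀ w ∈ S, w ≠ v → ¬G.Adj v w →
    (G.Adj x w ↔ G.Adj y w)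

def BigPat (G : SimpleGraph V) : Prop :=
  ∃ p₁ q₁ r₁ s₁ p₂ q₂ r₂ s₂ : V,
    C4pat Gᶜ p₁ q₁ r₁ s₁ ∧ C4pat Gᶜ p₂ q₂ r₂ s₂ ∧
    ∀ x y : V, (x = p₁ ∨ x = q₁ ∨ x = r₁ ∨ x = s₁) →
      (y = p₂ ∨ y = q₂ ∨ y = r₂ ∨ y = s₂) → G.Adj x y

lemma reachIn_symm {G : SimpleGraph V} {S : Set V} {x y : V}
    (h : ReachIn G S x y) : ReachIn G S y x :=
  (@Relation.ReflTransGen.symmetric _ (fun x y => x ∈ S ∧ y ∈ S ∧ G.Adj x y)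
    ⟨fun _ _ h' => ⟨h'.2.1, h'.1, h'.2.2.symm⟩⟩).symm _ _ h

lemma p4pat_nes {G : SimpleGraph V} {a b c d : V} (h : P4pat G a b c d) :
    a ≠ c ∧ a ≠ d ∧ b ≠ d := by
  obtain ⟨hab, hbc, hcd, hac, had, hbd⟩ := h
  refine ⟨?_, ?_, ?_⟩
  · rintro rfl; exact had hcd
  · rintro rfl; exact hac hcd.symm
  · rintro rfl; exact had hab

lemma p4pat_compl {G : SimpleGraph V} {a b c d : V} (h : P4pat Gᶜ a b c d) :
    P4pat G c a d b := by
  obtain ⟨nac, nad, nbd⟩ := p4pat_nes h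
  obtain ⟨hab, hbc, hcd, hac, had, hbd⟩ := h
  rw [SimpleGraph.compl_adj] at hab hbc hcd
  have gac : G.Adj a c := by
    by_contra hx; exact hac ⟨nac, hx⟩
  have gad : G.Adj a d := by
    by_contra hx; exact had ⟨nad, hx⟩
  have gbd : G.Adj b d := by
    by_contra hx; exact hbd ⟨nbd, hx⟩
  exact ⟨gac.symm, gad, gbd.symm, hcd.2, fun h' => hbc.2 h'.symm, hab.2⟩

/-- A boundary edge on a walk from a neighbour of `v` to a non-neighbour. -/
lemma boundary {G : SimpleGraph V} {S : Set V} {v n u : V}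
    (hn : G.Adj v n) (hr : ReachIn G S n u) (hu : ¬G.Adj v u) :
    ∃ x₁ x₂, x₁ ∈ S ∧ x₂ ∈ S ∧ G.Adj v x₁ ∧ ¬G.Adj v x₂ ∧ G.Adj x₁ x₂ ∧
      ReachIn G S n x₁ ∧ ReachIn G S n x₂ := by
  induction hr with
  | refl => exact absurd hn hu
  | @tail b c hab hbc ih =>
    by_cases hb : G.Adj v b
    · exact ⟨b, c, hbc.1, hbc.2.1, hb, hu, hbc.2.2, hab, hab.tail hbc⟩
    · obtain ⟨x₁, x₂, h1, h2, h3, h4, h5, h6, h7⟩ := ih hb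
      exact ⟨x₁, x₂, h1, h2, h3, h4, h5, h6, h7⟩

/-- From a vertex `v`, everything reachable in `S` is `v` itself, or reachable
in `S \ {v}` from a neighbour of `v`. -/
lemma reach_nbhd {G : SimpleGraph V} {S : Set V} {v : V} :
    ∀ {x}, ReachIn G S v x →
      x = v ∨ ∃ x', x' ∈ S ∧ x' ≠ v ∧ G.Adj v x' ∧ ReachIn G (S \ {v}) x' x := by
  intro x h
  induction h with
  | refl => exact Or.inl rfl
  | @tail b c hab hbc ih =>
    by_cases hc : c = v
    · exact Or.inl hc
    · right
      by_cases hbv : b = v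
      · subst hbv
        exact ⟨c, hbc.2.1, hc, hbc.2.2, Relation.ReflTransGen.refl⟩
      · rcases ih with rfl | ⟨x', h1, h2, h3, h4⟩
        · exact ⟨c, hbc.2.1, hc, hbc.2.2, Relation.ReflTransGen.refl⟩
        · exact ⟨x', h1, h2, h3, h4.tail ⟨⟨hbc.1, hbv⟩, ⟨hbc.2.1, hc⟩, hbc.2.2⟩⟩

/-- Reachability can be restricted to the component. -/
lemma reach_in_component {G : SimpleGraph V} {S : Set V} {a : V} :
    ∀ {x}, ReachIn G S a x →
      ReachIn G {y | y ∈ S ∧ ReachIn G S a y} a x := by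
  intro x h
  induction h with
  | refl => exact Relation.ReflTransGen.refl
  | @tail b c hab hbc ih =>
    exact ih.tail ⟨⟨hbc.1, hab⟩, ⟨hbc.2.1, hab.tail hbc⟩, hbc.2.2⟩

/-- In a `P₄`-free graph, everything reachable is at distance at most 2. -/
lemma dist2 {G : SimpleGraph V} {S : Set V}
    (hp4 : ∀ a b c d, ¬ P4pat G a b c d) {v : V} :
    ∀ {u}, ReachIn G S v u →
      u = v ∨ G.Adj v u ∨ ∃ x, x ∈ S ∧ G.Adj v x ∧ G.Adj x u := by
  intro u h
  induction h with
  | refl => exact Or.inl rfl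
  | @tail b c hab hbc ih =>
    by_cases hc1 : c = v
    · exact Or.inl hc1
    by_cases hc2 : G.Adj v c
    · exact Or.inr (Or.inl hc2)
    right; right
    by_cases hvb : G.Adj v b
    · exact ⟨b, hbc.1, hvb, hbc.2.2⟩
    rcases ih with rfl | hvb' | ⟨x, hxS, hvx, hxb⟩
    · exact absurd hbc.2.2 hc2
    · exact absurd hvb' hvb
    · by_cases hxc : G.Adj x c
      · exact ⟨x, hxS, hvx, hxc⟩
      · exact absurd ⟨hvx, hxb, hbc.2.2, hvb, hc2, hxc⟩ (hp4 v x b c)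

/-- A connected `P₄`-free `C₄`-free graph has a dominating vertex. -/
lemma exists_dom [Fintype V] {H : SimpleGraph V} {S : Set V}
    (hconn : ConnIn H S) (hne : S.Nonempty)
    (hp4 : ∀ a b c d, ¬ P4pat H a b c d)
    (hc4 : ¬ ∃ a b c d, a ∈ S ∧ b ∈ S ∧ c ∈ S ∧ d ∈ S ∧ C4pat H a b c d) :
    ∃ v ∈ S, ∀ w ∈ S, w ≠ v → H.Adj v w := by
  classical
  set F : V → Finset V := fun z => Finset.univ.filter (fun w => w ∈ S ∧ H.Adj z w) with hF
  have hSF : (Finset.univ.filter (· ∈ S)).Nonempty := by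
    obtain ⟨a, ha⟩ := hne
    exact ⟨a, by simp [ha]⟩
  obtain ⟨v, hvmem, hmax⟩ := Finset.exists_max_image _ (fun z => (F z).card) hSF
  have hvS : v ∈ S := by simpa using hvmem
  refine ⟨v, hvS, ?_⟩
  by_contra hcon
  push_neg at hcon
  obtain ⟨u, huS, huv, hvu⟩ := hcon
  rcases dist2 hp4 (hconn v hvS u huS) with rfl | h | ⟨x, hxS, hvx, hxu⟩
  · exact huv rfl
  · exact hvu h
  · have claim : ∀ y, y ∈ S → H.Adj v y → y ≠ x → H.Adj x y := by
      intro y hyS hvy hyx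
      by_contra hxy
      by_cases hyu : H.Adj y u
      · exact hc4 ⟨v, y, u, x, hvS, hyS, huS, hxS,
          fun h => huv h.symm, hyx, hvy, hyu, hxu.symm, hvx.symm, hvu,
          fun h => hxy h.symm⟩
      · exact hp4 u x v y ⟨hxu.symm, hvx.symm, hvy,
          fun h => hvu h.symm, fun h => hyu h.symm, hxy⟩
    have hxmem : x ∈ F v := by simp [hF, hxS, hvx]
    have humem : u ∉ F v := by simp [hF, hvu]
    have hvmem' : v ∉ F v := by simp [hF]
    have hsub : insert v (insert u ((F v).erase x)) ⊆ F x := by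
      intro y hy
      simp only [Finset.mem_insert, Finset.mem_erase] at hy
      rcases hy with rfl | rfl | ⟨hyx, hyFv⟩
      · simp [hF, hvS, hvx.symm]
      · simp [hF, huS, hxu]
      · have h1 : y ∈ S ∧ H.Adj v y := by simpa [hF] using hyFv
        simp [hF, h1.1, claim y h1.1 h1.2 hyx]
    have hcard : (F v).card + 1 ≤ (F x).card := by
      have h1 : ((F v).erase x).card = (F v).card - 1 :=
        Finset.card_erase_of_mem hxmem
      have h2 : u ∉ (F v).erase x := fun h => humem (Finset.mem_of_mem_erase h)
      have h3 : v ∉ insert u ((F v).erase x) := by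
        simp only [Finset.mem_insert]
        rintro (rfl | h)
        · exact huv rfl
        · exact hvmem' (Finset.mem_of_mem_erase h)
      have h4 := Finset.card_le_card hsub
      rw [Finset.card_insert_of_notMem h3, Finset.card_insert_of_notMem h2, h1] at h4
      have h5 : 1 ≤ (F v).card := Finset.card_pos.mpr ⟨x, hxmem⟩
      omega
    have := hmax x (by simp [hxS])
    omega

/-- Auxiliary step for Seinsche's theorem. -/
lemma sein_aux {H : SimpleGraph V} {S : Set V} {v u c : V}
    (hconn : ConnIn H S) (hv : v ∈ S)
    (hu : u ∈ S) (huv : u ≠ v) (hvu : ¬H.Adj v u)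
    (hc : c ∈ S) (hcv : c ≠ v)
    (hdis : ¬ ReachIn H (S \ {v}) u c) :
    ∃ a b c' d, P4pat H a b c' d := by
  rcases reach_nbhd (hconn v hv u hu) with rfl | ⟨n₁, hn₁S, hn₁v, hvn₁, hr₁⟩
  · exact absurd rfl huv
  rcases reach_nbhd (hconn v hv c hc) with rfl | ⟨n₂, hn₂S, hn₂v, hvn₂, hr₂⟩
  · exact absurd rfl hcv
  obtain ⟨x₁, x₂, hx₁, hx₂, hvx₁, hvx₂, hadj, hrx₁, hrx₂⟩ := boundary hvn₁ hr₁ hvu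
  have run₁ : ReachIn H (S \ {v}) u n₁ := reachIn_symm hr₁
  have rux₁ : ReachIn H (S \ {v}) u x₁ := run₁.trans hrx₁
  have rux₂ : ReachIn H (S \ {v}) u x₂ := run₁.trans hrx₂
  have hnotn₂ : ¬ ReachIn H (S \ {v}) u n₂ := fun h => hdis (h.trans hr₂)
  have hx₁n₂ : ¬ H.Adj x₁ n₂ := fun h =>
    hnotn₂ (rux₁.tail ⟨hx₁, ⟨hn₂S, hn₂v⟩, h⟩)
  have hx₂n₂ : ¬ H.Adj x₂ n₂ := fun h =>
    hnotn₂ (rux₂.tail ⟨hx₂, ⟨hn₂S, hn₂v⟩, h⟩)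
  exact ⟨x₂, x₁, v, n₂, hadj.symm, hvx₁.symm, hvn₂,
    fun h => hvx₂ h.symm, hx₂n₂, hx₁n₂⟩

/-- Seinsche: if both `H` and `Hᶜ` are connected on `S` with `|S| ≥ 2`,
there is an induced `P₄`. -/
lemma seinsche [Fintype V] :
    ∀ (n : ℕ) (H : SimpleGraph V) (S : Set V), S.ncard ≤ n → 2 ≤ S.ncard →
      ConnIn H S → ConnIn Hᶜ S → ∃ a b c d, P4pat H a b c d := by
  intro n
  induction n with
  | zero =>
    intro H S hle h2 _ _
    omega
  | succ m ih =>
    intro H S hle h2 hconn hcoconn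
    have hfin : S.Finite := Set.toFinite S
    have hne : S.Nonempty := by
      rcases Set.eq_empty_or_nonempty S with rfl | h
      · simp at h2
      · exact h
    obtain ⟨v, hv⟩ := hne
    have hS' : (S \ {v}).ncard = S.ncard - 1 :=
      Set.ncard_diff_singleton_of_mem hv
    -- first-step helper
    have firstStep : ∀ (H' : SimpleGraph V), ConnIn H' S →
        ∀ z ∈ S, z ≠ v → ∃ w, w ∈ S ∧ w ≠ v ∧ H'.Adj v w := by
      intro H' hconn' z hz hzv
      rcases (hconn' v hv z hz).cases_head with rfl | ⟨w, ⟨_, hwS, hadj⟩, _⟩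
      · exact absurd rfl hzv
      · exact ⟨w, hwS, hadj.ne', hadj⟩
    by_cases hcase : (S \ {v}).ncard = 1
    · -- |S| = 2 : contradiction
      obtain ⟨a, haeq⟩ := Set.ncard_eq_one.mp hcase
      have haS' : a ∈ S \ {v} := haeq ▸ rfl
      obtain ⟨w, hwS, hwv, hadj⟩ := firstStep H hconn a haS'.1 haS'.2
      obtain ⟨w', hw'S, hw'v, hadj'⟩ := firstStep Hᶜ hcoconn a haS'.1 haS'.2
      have hw : w = a := by
        have : w ∈ S \ {v} := ⟨hwS, hwv⟩
        rw [haeq] at this; exact this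
      have hw' : w' = a := by
        have : w' ∈ S \ {v} := ⟨hw'S, hw'v⟩
        rw [haeq] at this; exact this
      subst hw; subst hw'
      exact absurd hadj hadj'.2
    · have h2' : 2 ≤ (S \ {v}).ncard := by omega
      by_cases hA : ConnIn H (S \ {v})
      · by_cases hB : ConnIn Hᶜ (S \ {v})
        · exact ih H (S \ {v}) (by omega) h2' hA hB
        · -- Hᶜ disconnected on S'
          simp only [ConnIn] at hB
          push_neg at hB
          obtain ⟨a, haS', b, hbS', hnr⟩ := hB
          obtain ⟨u, huS, huv, hadj⟩ := firstStep H hconn a haS'.1 haS'.2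
          have hvu : ¬ Hᶜ.Adj v u := by
            simp [SimpleGraph.compl_adj, hadj]
          by_cases hra : ReachIn Hᶜ (S \ {v}) u a
          · have hrb : ¬ ReachIn Hᶜ (S \ {v}) u b := fun h =>
              hnr ((reachIn_symm hra).trans h)
            obtain ⟨p, q, r, s, hpat⟩ := sein_aux hcoconn hv huS huv hvu hbS'.1 hbS'.2 hrb
            exact ⟨r, p, s, q, p4pat_compl hpat⟩
          · obtain ⟨p, q, r, s, hpat⟩ := sein_aux hcoconn hv huS huv hvu haS'.1 haS'.2 hra
            exact ⟨r, p, s, q, p4pat_compl hpat⟩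
      · simp only [ConnIn] at hA
        push_neg at hA
        obtain ⟨a, haS', b, hbS', hnr⟩ := hA
        obtain ⟨u, huS, huv, hadj⟩ := firstStep Hᶜ hcoconn a haS'.1 haS'.2
        have hvu : ¬ H.Adj v u := hadj.2
        by_cases hra : ReachIn H (S \ {v}) u a
        · have hrb : ¬ ReachIn H (S \ {v}) u b := fun h =>
            hnr ((reachIn_symm hra).trans h)
          exact sein_aux hconn hv huS huv hvu hbS'.1 hbS'.2 hrb
        · exact sein_aux hconn hv huS huv hvu haS'.1 haS'.2 hra

lemma good_of_comp [Fintype V] {G : SimpleGraph V} {S : Set V} {c : V}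
    (hp4 : ∀ a b c' d, ¬ P4pat G a b c' d) (hc : c ∈ S)
    (hnoc4 : ¬ ∃ p q r s, (p ∈ S ∧ ReachIn Gᶜ S c p) ∧ (q ∈ S ∧ ReachIn Gᶜ S c q) ∧
      (r ∈ S ∧ ReachIn Gᶜ S c r) ∧ (s ∈ S ∧ ReachIn Gᶜ S c s) ∧ C4pat Gᶜ p q r s) :
    ∃ v, GoodIn G S v := by
  set C : Set V := {x | x ∈ S ∧ ReachIn Gᶜ S c x} with hC
  have hcC : c ∈ C := ⟨hc, Relation.ReflTransGen.refl⟩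
  have hconnC : ConnIn Gᶜ C := by
    intro x hx y hy
    exact (reachIn_symm (reach_in_component hx.2)).trans (reach_in_component hy.2)
  have hp4c : ∀ a b c' d, ¬ P4pat Gᶜ a b c' d :=
    fun a b c' d h => hp4 _ _ _ _ (p4pat_compl h)
  have hclose : ∀ x ∈ C, ∀ y ∈ S, Gᶜ.Adj x y → y ∈ C :=
    fun x hx y hy hadj => ⟨hy, hx.2.tail ⟨hx.1, hy, hadj⟩⟩
  obtain ⟨v, hvC, hdom⟩ := exists_dom hconnC ⟨c, hcC⟩ hp4c
    (by
      rintro ⟨p, q, r, s, hp, hq, hr, hs, hpat⟩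
      exact hnoc4 ⟨p, q, r, s, hp, hq, hr, hs, hpat⟩)
  refine ⟨v, hvC.1, ?_⟩
  intro x hxS hvx y hyS hvy w hwS hwv hvw
  have hnotC : ∀ z, G.Adj v z → z ∉ C := by
    intro z hadj hzC
    exact (hdom z hzC hadj.ne').2 hadj
  have hxC : x ∉ C := hnotC x hvx
  have hyC : y ∉ C := hnotC y hvy
  have hwC : w ∈ C := by
    by_contra hwC
    have hnc : ¬ Gᶜ.Adj v w := fun h => hwC (hclose v hvC w hwS h)
    rw [SimpleGraph.compl_adj] at hnc
    push_neg at hnc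
    exact hvw (hnc (Ne.symm hwv))
  have hcross : ∀ z, z ∈ S → z ∉ C → G.Adj w z := by
    intro z hzS hzC
    have hne : w ≠ z := fun h => hzC (h ▸ hwC)
    have hnc : ¬ Gᶜ.Adj w z := fun h => hzC (hclose w hwC z hzS h)
    rw [SimpleGraph.compl_adj] at hnc
    push_neg at hnc
    exact hnc hne
  exact iff_of_true (hcross x hxS hxC).symm (hcross y hyS hyC).symm

lemma exists_good [Fintype V] {G : SimpleGraph V}
    (hp4 : ∀ a b c d, ¬ P4pat G a b c d) (hco : ¬ BigPat G) :
    ∀ (n : ℕ) (S : Set V), S.ncard ≤ n → S.Nonempty → ∃ v, GoodIn G S v := by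
  intro n
  induction n with
  | zero =>
    intro S hle hne
    have := Set.ncard_pos (Set.toFinite S) |>.mpr hne
    omega
  | succ m ih =>
    intro S hle hne
    obtain ⟨a, ha⟩ := hne
    by_cases hAS : {x | x ∈ S ∧ ReachIn G S a x} = S
    · -- G is connected on S
      have hconnG : ConnIn G S := by
        intro x hx y hy
        have hx' : x ∈ {x | x ∈ S ∧ ReachIn G S a x} := by rw [hAS]; exact hx
        have hy' : y ∈ {x | x ∈ S ∧ ReachIn G S a x} := by rw [hAS]; exact hy
        exact (reachIn_symm hx'.2).trans hy'.2
      by_cases h4a : ∃ p q r s, (p ∈ S ∧ ReachIn Gᶜ S a p) ∧ (q ∈ S ∧ ReachIn Gᶜ S a q) ∧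
          (r ∈ S ∧ ReachIn Gᶜ S a r) ∧ (s ∈ S ∧ ReachIn Gᶜ S a s) ∧ C4pat Gᶜ p q r s
      · by_cases hCaS : {x | x ∈ S ∧ ReachIn Gᶜ S a x} = S
        · -- Gᶜ also connected: Seinsche gives a P₄, contradiction
          exfalso
          have hconnGc : ConnIn Gᶜ S := by
            intro x hx y hy
            have hx' : x ∈ {x | x ∈ S ∧ ReachIn Gᶜ S a x} := by rw [hCaS]; exact hx
            have hy' : y ∈ {x | x ∈ S ∧ ReachIn Gᶜ S a x} := by rw [hCaS]; exact hy
            exact (reachIn_symm hx'.2).trans hy'.2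
          obtain ⟨p, q, r, s, hp, hq, hr, hs, hpat⟩ := h4a
          have h2 : 2 ≤ S.ncard := by
            have hpq : p ≠ q := hpat.2.2.1.ne
            have : ({p, q} : Set V) ⊆ S := by
              intro z hz
              rcases hz with rfl | hz
              · exact hp.1
              · rw [Set.mem_singleton_iff] at hz; subst hz; exact hq.1
            calc 2 = ({p, q} : Set V).ncard := by
                  rw [Set.ncard_pair hpq]
              _ ≤ S.ncard := Set.ncard_le_ncard this (Set.toFinite S)
          obtain ⟨p', q', r', s', hpat'⟩ :=
            seinsche S.ncard G S le_rfl h2 hconnG hconnGc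
          exact hp4 _ _ _ _ hpat'
        · -- there is a second complement component
          have hbex : ∃ b, b ∈ S ∧ ¬ ReachIn Gᶜ S a b := by
            by_contra hx
            push_neg at hx
            apply hCaS
            ext z
            exact ⟨fun hz => hz.1, fun hz => ⟨hz, hx z hz⟩⟩
          obtain ⟨b, hbS, hab⟩ := hbex
          by_cases h4b : ∃ p q r s, (p ∈ S ∧ ReachIn Gᶜ S b p) ∧ (q ∈ S ∧ ReachIn Gᶜ S b q) ∧
              (r ∈ S ∧ ReachIn Gᶜ S b r) ∧ (s ∈ S ∧ ReachIn Gᶜ S b s) ∧ C4pat Gᶜ p q r s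
          · -- two complement components with C₄s: co-2C₄, contradiction
            exfalso
            obtain ⟨p₁, q₁, r₁, s₁, hp₁, hq₁, hr₁, hs₁, hpat₁⟩ := h4a
            obtain ⟨p₂, q₂, r₂, s₂, hp₂, hq₂, hr₂, hs₂, hpat₂⟩ := h4b
            have hcross : ∀ x, (x ∈ S ∧ ReachIn Gᶜ S a x) →
                ∀ y, (y ∈ S ∧ ReachIn Gᶜ S b y) → G.Adj x y := by
              intro x hx y hy
              have hyCa : ¬ ReachIn Gᶜ S a y := fun h =>
                hab (h.trans (reachIn_symm hy.2))
              have hne : x ≠ y := fun h => hyCa (h ▸ hx.2)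
              have hnc : ¬ Gᶜ.Adj x y := fun h =>
                hyCa (hx.2.tail ⟨hx.1, hy.1, h⟩)
              rw [SimpleGraph.compl_adj] at hnc
              push_neg at hnc
              exact hnc hne
            apply hco
            refine ⟨p₁, q₁, r₁, s₁, p₂, q₂, r₂, s₂, hpat₁, hpat₂, ?_⟩
            intro x y hx hy
            have hx' : x ∈ S ∧ ReachIn Gᶜ S a x := by
              rcases hx with rfl | rfl | rfl | rfl
              exacts [hp₁, hq₁, hr₁, hs₁]
            have hy' : y ∈ S ∧ ReachIn Gᶜ S b y := by
              rcases hy with rfl | rfl | rfl | rfl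
              exacts [hp₂, hq₂, hr₂, hs₂]
            exact hcross x hx' y hy'
          · exact good_of_comp hp4 hbS h4b
      · exact good_of_comp hp4 ha h4a
    · -- G is disconnected on S : recurse into the component of a
      set A : Set V := {x | x ∈ S ∧ ReachIn G S a x} with hA
      have hsub : A ⊆ S := fun x hx => hx.1
      have hss : A ⊂ S := ⟨hsub, fun h => hAS (Set.Subset.antisymm hsub h)⟩
      have hlt : A.ncard < S.ncard := Set.ncard_lt_ncard hss (Set.toFinite S)
      obtain ⟨v, hvA, hgood⟩ := ih A (by omega) ⟨a, ha, Relation.ReflTransGen.refl⟩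
      have hclose : ∀ x ∈ A, ∀ y ∈ S, G.Adj x y → y ∈ A :=
        fun x hx y hy hadj => ⟨hy, hx.2.tail ⟨hx.1, hy, hadj⟩⟩
      refine ⟨v, hvA.1, ?_⟩
      intro x hxS hvx y hyS hvy w hwS hwv hvw
      have hxA : x ∈ A := hclose v hvA x hxS hvx
      have hyA : y ∈ A := hclose v hvA y hyS hvy
      by_cases hwA : w ∈ A
      · exact hgood x hxA hvx y hyA hvy w hwA hwv hvw
      · exact iff_of_false (fun h => hwA (hclose x hxA w hwS h))
          (fun h => hwA (hclose y hyA w hwS h))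

def Plain (G : SimpleGraph V) {k : ℕ} (e : Fin k ≃ V) : Prop :=
  ∀ i : Fin k, 0 < (i : ℕ) → ∀ x y w : V,
    (∃ j, j < i ∧ e j = x) → (∃ j, j < i ∧ e j = y) → (∃ j, j < i ∧ e j = w) →
    G.Adj (e i) x → G.Adj (e i) y → ¬G.Adj (e i) w → (G.Adj x w ↔ G.Adj y w)

end ModComp

open ModComp in
lemma plain_aux : ∀ (n : ℕ) (V : Type*) [Fintype V] (G : SimpleGraph V),
    Fintype.card V ≤ n →
    (∀ a b c d, ¬ P4pat G a b c d) → ¬ BigPat G →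
    ∃ e : Fin (Fintype.card V) ≃ V, Plain G e := by
  intro n
  induction n with
  | zero =>
    intro V _ G hle _ _
    have h0 : Fintype.card V = 0 := Nat.le_zero.mp hle
    haveI : IsEmpty (Fin (Fintype.card V)) := by rw [h0]; infer_instance
    haveI : IsEmpty V := Fintype.card_eq_zero_iff.mp h0
    exact ⟨Equiv.equivOfIsEmpty _ _, fun i => isEmptyElim i⟩
  | succ m ih =>
    intro V _ G hle hp4 hco
    rcases Nat.eq_zero_or_pos (Fintype.card V) with h0 | hpos
    · haveI : IsEmpty (Fin (Fintype.card V)) := by rw [h0]; infer_instance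
      haveI : IsEmpty V := Fintype.card_eq_zero_iff.mp h0
      exact ⟨Equiv.equivOfIsEmpty _ _, fun i => isEmptyElim i⟩
    haveI : Nonempty V := Fintype.card_pos_iff.mp hpos
    obtain ⟨v, hvgood⟩ := exists_good hp4 hco (Set.univ.ncard) Set.univ le_rfl
      Set.univ_nonempty
    set V' := {w : V // w ≠ v} with hV'
    set G' : SimpleGraph V' := G.comap (fun w : V' => (w : V)) with hG'
    have hcard' : Fintype.card V' = Fintype.card V - 1 := by
      have h := Fintype.card_subtype_compl (fun w : V => w = v)
      rw [Fintype.card_subtype_eq] at h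
      exact h
    have hp4' : ∀ a b c d, ¬ P4pat G' a b c d := by
      intro a b c d h
      exact hp4 ↑a ↑b ↑c ↑d h
    have hco' : ¬ BigPat G' := by
      rintro ⟨p₁, q₁, r₁, s₁, p₂, q₂, r₂, s₂, h₁, h₂, hcross⟩
      apply hco
      have coe4 : ∀ {x y : V'}, G'ᶜ.Adj x y → Gᶜ.Adj ↑x ↑y := by
        intro x y hxy
        rw [SimpleGraph.compl_adj] at hxy ⊢
        exact ⟨fun h => hxy.1 (Subtype.ext h), hxy.2⟩
      refine ⟨↑p₁, ↑q₁, ↑r₁, ↑s₁, ↑p₂, ↑q₂, ↑r₂, ↑s₂, ?_, ?_, ?_⟩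
      · obtain ⟨h1, h2, h3, h4, h5, h6, h7, h8⟩ := h₁
        refine ⟨fun h => h1 (Subtype.ext h), fun h => h2 (Subtype.ext h),
          coe4 h3, coe4 h4, coe4 h5, coe4 h6, ?_, ?_⟩
        · intro h
          rw [SimpleGraph.compl_adj] at h
          exact h7 ⟨fun h' => h.1 (congrArg _ h'), h.2⟩
        · intro h
          rw [SimpleGraph.compl_adj] at h
          exact h8 ⟨fun h' => h.1 (congrArg _ h'), h.2⟩
      · obtain ⟨h1, h2, h3, h4, h5, h6, h7, h8⟩ := h₂
        refine ⟨fun h => h1 (Subtype.ext h), fun h => h2 (Subtype.ext h),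
          coe4 h3, coe4 h4, coe4 h5, coe4 h6, ?_, ?_⟩
        · intro h
          rw [SimpleGraph.compl_adj] at h
          exact h7 ⟨fun h' => h.1 (congrArg _ h'), h.2⟩
        · intro h
          rw [SimpleGraph.compl_adj] at h
          exact h8 ⟨fun h' => h.1 (congrArg _ h'), h.2⟩
      · intro x y hx hy
        rcases hx with rfl | rfl | rfl | rfl <;> rcases hy with rfl | rfl | rfl | rfl <;>
          exact hcross _ _ (by tauto) (by tauto)
    obtain ⟨e', he'⟩ := ih V' G' (by omega) hp4' hco'
    have hkey : Fintype.card V = Fintype.card V' + 1 := by omega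
    set f : Fin (Fintype.card V) → V :=
      fun i => if h : (i : ℕ) < Fintype.card V' then (e' ⟨i, h⟩ : V) else v with hf
    have hinj : Function.Injective f := by
      intro i j hij
      simp only [hf] at hij
      by_cases hi : (i : ℕ) < Fintype.card V' <;> by_cases hj : (j : ℕ) < Fintype.card V'
      · rw [dif_pos hi, dif_pos hj] at hij
        have := e'.injective (Subtype.coe_injective hij)
        have hval := congrArg Fin.val this
        exact Fin.ext hval
      · rw [dif_pos hi, dif_neg hj] at hij
        exact absurd hij (e' ⟨i, hi⟩).2
      · rw [dif_neg hi, dif_pos hj] at hij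
        exact absurd hij.symm (e' ⟨j, hj⟩).2
      · exact Fin.ext (by omega)
    have hsurj : Function.Surjective f := by
      intro u
      by_cases hu : u = v
      · refine ⟨⟨Fintype.card V', by omega⟩, ?_⟩
        show f _ = u
        simp only [hf]
        rw [dif_neg (by simp)]
        exact hu.symm
      · refine ⟨⟨(e'.symm ⟨u, hu⟩ : Fin (Fintype.card V')).val, by omega⟩, ?_⟩
        show f _ = u
        simp only [hf]
        rw [dif_pos (e'.symm ⟨u, hu⟩).2]
        show ((e' (e'.symm ⟨u, hu⟩) : V') : V) = u
        rw [Equiv.apply_symm_apply]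
    set e : Fin (Fintype.card V) ≃ V := Equiv.ofBijective f ⟨hinj, hsurj⟩ with he
    have heval : ∀ i, e i = f i := fun i => rfl
    have hprefix : ∀ (i : Fin (Fintype.card V)) (x : V), (∃ j, j < i ∧ e j = x) →
        ∃ j' : Fin (Fintype.card V'), (j' : ℕ) < (i : ℕ) ∧ x = ↑(e' j') := by
      intro i x ⟨j, hji, hej⟩
      have hji' : (j : ℕ) < (i : ℕ) := hji
      have hjk : (j : ℕ) < Fintype.card V' := by
        have := i.2
        omega
      refine ⟨⟨(j : ℕ), hjk⟩, hji', ?_⟩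
      rw [← hej]
      show f j = _
      simp only [hf]
      rw [dif_pos hjk]
    refine ⟨e, ?_⟩
    intro i hi x y w hx hy hw hax hay hnw
    obtain ⟨jx, hjx, hxe⟩ := hprefix i x hx
    obtain ⟨jy, hjy, hye⟩ := hprefix i y hy
    obtain ⟨jw, hjw, hwe⟩ := hprefix i w hw
    subst hxe; subst hye; subst hwe
    by_cases hil : (i : ℕ) < Fintype.card V'
    · have hei : e i = ↑(e' ⟨(i : ℕ), hil⟩) := by
        show f i = _
        simp only [hf]
        rw [dif_pos hil]
      rw [hei] at hax hay hnw
      exact he' ⟨(i : ℕ), hil⟩ hi (e' jx) (e' jy) (e' jw)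
        ⟨jx, hjx, rfl⟩ ⟨jy, hjy, rfl⟩ ⟨jw, hjw, rfl⟩ hax hay hnw
    · have hei : e i = v := by
        show f i = _
        simp only [hf]
        rw [dif_neg hil]
      rw [hei] at hax hay hnw
      exact hvgood.2 _ trivial hax _ trivial hay _ trivial (e' jw).2 hnw
    

namespace ModComp

lemma p4pat_to_emb {V : Type*} {G : SimpleGraph V} {a b c d : V}
    (h : P4pat G a b c d) : ∃ _f : SimpleGraph.pathGraph 4 ↪g G, True := by
  obtain ⟨nac, nad, nbd⟩ := p4pat_nes h
  obtain ⟨hab, hbc, hcd, hac, had, hbd⟩ := h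
  have nab := hab.ne
  have nbc := hbc.ne
  have ncd := hcd.ne
  have hca : ¬G.Adj c a := fun h' => hac h'.symm
  have hda : ¬G.Adj d a := fun h' => had h'.symm
  have hdb : ¬G.Adj d b := fun h' => hbd h'.symm
  refine ⟨⟨⟨![a, b, c, d], ?_⟩, ?_⟩, trivial⟩
  · intro i j hij
    fin_cases i <;> fin_cases j <;>
      simp_all [Matrix.cons_val_zero, Matrix.cons_val_one, Matrix.head_cons] <;>
      first
        | rfl
        | (first
            | exact nab hij | exact nac hij | exact nad hij
            | exact nbc hij | exact nbd hij | exact ncd hij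
            | exact nab hij.symm | exact nac hij.symm | exact nad hij.symm
            | exact nbc hij.symm | exact nbd hij.symm | exact ncd hij.symm)
  · intro i j
    fin_cases i <;> fin_cases j <;>
      simp [Function.Embedding.coeFn_mk, SimpleGraph.pathGraph_adj, hab, hbc, hcd, hac, had, hbd,
        hab.symm, hbc.symm, hcd.symm, hca, hda, hdb, G.irrefl] <;>
        (first
          | exact hab | exact hbc | exact hcd | exact hac | exact had | exact hbd
          | exact hab.symm | exact hbc.symm | exact hcd.symm | exact hca | exact hda | exact hdb)

set_option maxHeartbeats 3200000 in
set_option maxRecDepth 8000 in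
lemma bigpat_to_emb {V : Type*} {G : SimpleGraph V} (h : BigPat G) :
    ∃ _f : twoC4ᶜ ↪g G, True := by
  obtain ⟨x0, x1, x2, x3, x4, x5, x6, x7, h₁, h₂, hcross⟩ := h
  obtain ⟨m02, m13, e01, e12, e23, e30, f02, f13⟩ := h₁
  obtain ⟨m46, m57, e45, e56, e67, e74, f46, f57⟩ := h₂
  rw [SimpleGraph.compl_adj] at e01 e12 e23 e30 e45 e56 e67 e74
  have ne01 : x0 ≠ x1 := e01.1
  have na01 : ¬G.Adj x0 x1 := e01.2
  have na10 : ¬G.Adj x1 x0 := fun hh => na01 hh.symm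
  have ne12 : x1 ≠ x2 := e12.1
  have na12 : ¬G.Adj x1 x2 := e12.2
  have na21 : ¬G.Adj x2 x1 := fun hh => na12 hh.symm
  have ne23 : x2 ≠ x3 := e23.1
  have na23 : ¬G.Adj x2 x3 := e23.2
  have na32 : ¬G.Adj x3 x2 := fun hh => na23 hh.symm
  have ne30 : x3 ≠ x0 := e30.1
  have na30 : ¬G.Adj x3 x0 := e30.2
  have na03 : ¬G.Adj x0 x3 := fun hh => na30 hh.symm
  have ne45 : x4 ≠ x5 := e45.1
  have na45 : ¬G.Adj x4 x5 := e45.2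
  have na54 : ¬G.Adj x5 x4 := fun hh => na45 hh.symm
  have ne56 : x5 ≠ x6 := e56.1
  have na56 : ¬G.Adj x5 x6 := e56.2
  have na65 : ¬G.Adj x6 x5 := fun hh => na56 hh.symm
  have ne67 : x6 ≠ x7 := e67.1
  have na67 : ¬G.Adj x6 x7 := e67.2
  have na76 : ¬G.Adj x7 x6 := fun hh => na67 hh.symm
  have ne74 : x7 ≠ x4 := e74.1
  have na74 : ¬G.Adj x7 x4 := e74.2
  have na47 : ¬G.Adj x4 x7 := fun hh => na74 hh.symm
  have a02 : G.Adj x0 x2 := by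
    by_contra hc
    exact f02 ((SimpleGraph.compl_adj _ _ _).mpr ⟨m02, hc⟩)
  have a20 : G.Adj x2 x0 := a02.symm
  have a13 : G.Adj x1 x3 := by
    by_contra hc
    exact f13 ((SimpleGraph.compl_adj _ _ _).mpr ⟨m13, hc⟩)
  have a31 : G.Adj x3 x1 := a13.symm
  have a46 : G.Adj x4 x6 := by
    by_contra hc
    exact f46 ((SimpleGraph.compl_adj _ _ _).mpr ⟨m46, hc⟩)
  have a64 : G.Adj x6 x4 := a46.symm
  have a57 : G.Adj x5 x7 := by
    by_contra hc
    exact f57 ((SimpleGraph.compl_adj _ _ _).mpr ⟨m57, hc⟩)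
  have a75 : G.Adj x7 x5 := a57.symm
  have a04 : G.Adj x0 x4 := hcross x0 x4 (by tauto) (by tauto)
  have a40 : G.Adj x4 x0 := a04.symm
  have a05 : G.Adj x0 x5 := hcross x0 x5 (by tauto) (by tauto)
  have a50 : G.Adj x5 x0 := a05.symm
  have a06 : G.Adj x0 x6 := hcross x0 x6 (by tauto) (by tauto)
  have a60 : G.Adj x6 x0 := a06.symm
  have a07 : G.Adj x0 x7 := hcross x0 x7 (by tauto) (by tauto)
  have a70 : G.Adj x7 x0 := a07.symm
  have a14 : G.Adj x1 x4 := hcross x1 x4 (by tauto) (by tauto)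
  have a41 : G.Adj x4 x1 := a14.symm
  have a15 : G.Adj x1 x5 := hcross x1 x5 (by tauto) (by tauto)
  have a51 : G.Adj x5 x1 := a15.symm
  have a16 : G.Adj x1 x6 := hcross x1 x6 (by tauto) (by tauto)
  have a61 : G.Adj x6 x1 := a16.symm
  have a17 : G.Adj x1 x7 := hcross x1 x7 (by tauto) (by tauto)
  have a71 : G.Adj x7 x1 := a17.symm
  have a24 : G.Adj x2 x4 := hcross x2 x4 (by tauto) (by tauto)
  have a42 : G.Adj x4 x2 := a24.symm
  have a25 : G.Adj x2 x5 := hcross x2 x5 (by tauto) (by tauto)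
  have a52 : G.Adj x5 x2 := a25.symm
  have a26 : G.Adj x2 x6 := hcross x2 x6 (by tauto) (by tauto)
  have a62 : G.Adj x6 x2 := a26.symm
  have a27 : G.Adj x2 x7 := hcross x2 x7 (by tauto) (by tauto)
  have a72 : G.Adj x7 x2 := a27.symm
  have a34 : G.Adj x3 x4 := hcross x3 x4 (by tauto) (by tauto)
  have a43 : G.Adj x4 x3 := a34.symm
  have a35 : G.Adj x3 x5 := hcross x3 x5 (by tauto) (by tauto)
  have a53 : G.Adj x5 x3 := a35.symm
  have a36 : G.Adj x3 x6 := hcross x3 x6 (by tauto) (by tauto)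
  have a63 : G.Adj x6 x3 := a36.symm
  have a37 : G.Adj x3 x7 := hcross x3 x7 (by tauto) (by tauto)
  have a73 : G.Adj x7 x3 := a37.symm
  have ne04 : x0 ≠ x4 := a04.ne
  have ne05 : x0 ≠ x5 := a05.ne
  have ne06 : x0 ≠ x6 := a06.ne
  have ne07 : x0 ≠ x7 := a07.ne
  have ne14 : x1 ≠ x4 := a14.ne
  have ne15 : x1 ≠ x5 := a15.ne
  have ne16 : x1 ≠ x6 := a16.ne
  have ne17 : x1 ≠ x7 := a17.ne
  have ne24 : x2 ≠ x4 := a24.ne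
  have ne25 : x2 ≠ x5 := a25.ne
  have ne26 : x2 ≠ x6 := a26.ne
  have ne27 : x2 ≠ x7 := a27.ne
  have ne34 : x3 ≠ x4 := a34.ne
  have ne35 : x3 ≠ x5 := a35.ne
  have ne36 : x3 ≠ x6 := a36.ne
  have ne37 : x3 ≠ x7 := a37.ne
  have ne03 : x0 ≠ x3 := fun hh => ne30 hh.symm
  have ne02 : x0 ≠ x2 := m02
  have ne13 : x1 ≠ x3 := m13
  have ne47 : x4 ≠ x7 := fun hh => ne74 hh.symm
  have ne46 : x4 ≠ x6 := m46
  have ne57 : x5 ≠ x7 := m57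
  have ne10 : x1 ≠ x0 := fun hh => ne01 hh.symm
  have ne21 : x2 ≠ x1 := fun hh => ne12 hh.symm
  have ne32 : x3 ≠ x2 := fun hh => ne23 hh.symm
  have ne20 : x2 ≠ x0 := fun hh => ne02 hh.symm
  have ne31 : x3 ≠ x1 := fun hh => ne13 hh.symm
  have ne54 : x5 ≠ x4 := fun hh => ne45 hh.symm
  have ne65 : x6 ≠ x5 := fun hh => ne56 hh.symm
  have ne76 : x7 ≠ x6 := fun hh => ne67 hh.symm
  have ne64 : x6 ≠ x4 := fun hh => ne46 hh.symm
  have ne75 : x7 ≠ x5 := fun hh => ne57 hh.symm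
  have ne40 : x4 ≠ x0 := fun hh => ne04 hh.symm
  have ne50 : x5 ≠ x0 := fun hh => ne05 hh.symm
  have ne60 : x6 ≠ x0 := fun hh => ne06 hh.symm
  have ne70 : x7 ≠ x0 := fun hh => ne07 hh.symm
  have ne41 : x4 ≠ x1 := fun hh => ne14 hh.symm
  have ne51 : x5 ≠ x1 := fun hh => ne15 hh.symm
  have ne61 : x6 ≠ x1 := fun hh => ne16 hh.symm
  have ne71 : x7 ≠ x1 := fun hh => ne17 hh.symm
  have ne42 : x4 ≠ x2 := fun hh => ne24 hh.symm
  have ne52 : x5 ≠ x2 := fun hh => ne25 hh.symm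
  have ne62 : x6 ≠ x2 := fun hh => ne26 hh.symm
  have ne72 : x7 ≠ x2 := fun hh => ne27 hh.symm
  have ne43 : x4 ≠ x3 := fun hh => ne34 hh.symm
  have ne53 : x5 ≠ x3 := fun hh => ne35 hh.symm
  have ne63 : x6 ≠ x3 := fun hh => ne36 hh.symm
  have ne73 : x7 ≠ x3 := fun hh => ne37 hh.symm
  refine ⟨⟨⟨![x0, x1, x2, x3, x4, x5, x6, x7], ?_⟩, ?_⟩, trivial⟩
  · intro i j hij
    fin_cases i <;> fin_cases j <;> first | rfl | exact absurd hij (by assumption)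
  · intro i j
    fin_cases i <;> fin_cases j <;>
      simp [twoC4, SimpleGraph.compl_adj, SimpleGraph.fromRel_adj, G.irrefl,
        a02, a04, a05, a06, a07, a13, a14, a15, a16, a17, a20, a24, a25, a26, a27, a31, a34, a35, a36, a37, a40, a41, a42, a43, a46, a50, a51, a52, a53, a57, a60, a61, a62, a63, a64, a70, a71, a72, a73, a75,
        na01, na12, na23, na30, na45, na56, na67, na74, na10, na21, na32, na03, na54, na65, na76, na47] <;>
      try assumption

end ModComp


/-- Every graph with no induced `P₄` and no induced co-2C₄ is module-composed. -/
theorem p4_co2C4_free_moduleComposed {V : Type*} [Fintype V] (G : SimpleGraph V)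
    (hP4 : ¬ ∃ _f : SimpleGraph.pathGraph 4 ↪g G, True)
    (hco2C4 : ¬ ∃ _f : twoC4ᶜ ↪g G, True) :
    G.ModuleComposed := by
  
  have hp4' : ∀ a b c d, ¬ ModComp.P4pat G a b c d := fun a b c d h => hP4 (ModComp.p4pat_to_emb h)
  have hco' : ¬ ModComp.BigPat G := fun h => hco2C4 (ModComp.bigpat_to_emb h)
  obtain ⟨e, he⟩ := plain_aux (Fintype.card V) V G le_rfl hp4' hco'
  refine ⟨e, ?_⟩
  intro i hi x hx y hy w hw
  exact he i hi ↑x ↑y ↑w x.2 y.2 w.2 hx hy hw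
end

section
/- Every (C₄, P₄)-free graph (i.e. every trivially perfect graph) is module-composed. -/
open scoped Classical

lemma c4_embed {V : Type*} (G : SimpleGraph V) {a b c d : V}
    (hab : G.Adj a b) (hbc : G.Adj b c) (hcd : G.Adj c d) (hda : G.Adj d a)
    (hac : ¬ G.Adj a c) (hbd : ¬ G.Adj b d)
    (hac' : a ≠ c) (hbd' : b ≠ d) :
    ∃ _f : SimpleGraph.cycleGraph 4 ↪g G, True := by
  have nab := hab.ne
  have nbc := hbc.ne
  have ncd := hcd.ne
  have nda := hda.ne
  have hba := hab.symm
  have hcb := hbc.symm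
  have hdc := hcd.symm
  have had := hda.symm
  have hca : ¬ G.Adj c a := fun h => hac h.symm
  have hdb : ¬ G.Adj d b := fun h => hbd h.symm
  refine ⟨⟨⟨![a,b,c,d], ?_⟩, ?_⟩, trivial⟩
  · intro i j hij
    fin_cases i <;> fin_cases j <;> simp_all
  · intro i j
    show G.Adj (![a,b,c,d] i) (![a,b,c,d] j) ↔ _
    fin_cases i <;> fin_cases j <;>
      simp_all [SimpleGraph.cycleGraph_adj] <;> decide

lemma p4_embed {V : Type*} (G : SimpleGraph V) {a b c d : V}
    (hab : G.Adj a b) (hbc : G.Adj b c) (hcd : G.Adj c d)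
    (hac : ¬ G.Adj a c) (had : ¬ G.Adj a d) (hbd : ¬ G.Adj b d)
    (hac' : a ≠ c) (had' : a ≠ d) (hbd' : b ≠ d) :
    ∃ _f : SimpleGraph.pathGraph 4 ↪g G, True := by
  have nab := hab.ne
  have nbc := hbc.ne
  have ncd := hcd.ne
  have hba := hab.symm
  have hcb := hbc.symm
  have hdc := hcd.symm
  have hca : ¬ G.Adj c a := fun h => hac h.symm
  have hda : ¬ G.Adj d a := fun h => had h.symm
  have hdb : ¬ G.Adj d b := fun h => hbd h.symm
  refine ⟨⟨⟨![a,b,c,d], ?_⟩, ?_⟩, trivial⟩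
  · intro i j hij
    fin_cases i <;> fin_cases j <;> simp_all
  · intro i j
    show G.Adj (![a,b,c,d] i) (![a,b,c,d] j) ↔ _
    fin_cases i <;> fin_cases j <;>
      simp_all [SimpleGraph.pathGraph_adj] <;> decide

lemma max_deg_step {V : Type*} [Fintype V] (G : SimpleGraph V)
    (hC4 : ¬ ∃ _f : SimpleGraph.cycleGraph 4 ↪g G, True)
    (hP4 : ¬ ∃ _f : SimpleGraph.pathGraph 4 ↪g G, True)
    {v x y : V} (hmax : ∀ u, G.degree u ≤ G.degree v)
    (hvx : G.Adj v x) (hxy : G.Adj x y) (hyv : y ≠ v) (hvy : ¬ G.Adj v y) : False := by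
  have step : ∀ z, G.Adj v z → z ≠ x → G.Adj x z := by
    intro z hvz hzx
    by_contra hxz
    have hzy : z ≠ y := fun h => hvy (h ▸ hvz)
    by_cases h : G.Adj z y
    · exact hC4 (c4_embed G hvx hxy h.symm hvz.symm hvy hxz hyv.symm hzx.symm)
    · exact hP4 (p4_embed G hvz.symm hvx hxy (fun h' => hxz h'.symm) h hvy hzx hzy
        hyv.symm)
  have hsub : insert v (insert y ((G.neighborFinset v).erase x)) ⊆ G.neighborFinset x := by
    intro w hw
    simp only [Finset.mem_insert, Finset.mem_erase, SimpleGraph.mem_neighborFinset] at hw ⊢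
    rcases hw with rfl | rfl | ⟨hwx, hvw⟩
    · exact hvx.symm
    · exact hxy
    · exact step w hvw hwx
  have hcard := Finset.card_le_card hsub
  have hxv : x ∈ G.neighborFinset v := by
    simpa [SimpleGraph.mem_neighborFinset] using hvx
  have h1 : y ∉ (G.neighborFinset v).erase x := by
    simp [SimpleGraph.mem_neighborFinset, hvy]
  have h2 : v ∉ insert y ((G.neighborFinset v).erase x) := by
    simp [SimpleGraph.mem_neighborFinset, Ne.symm hyv, G.irrefl]
  rw [Finset.card_insert_of_notMem h2, Finset.card_insert_of_notMem h1,
      Finset.card_erase_of_mem hxv, SimpleGraph.card_neighborFinset_eq_degree,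
      SimpleGraph.card_neighborFinset_eq_degree] at hcard
  have hdx := hmax x
  have hdegpos : 0 < G.degree v := by
    rw [← SimpleGraph.card_neighborFinset_eq_degree]
    exact Finset.card_pos.mpr ⟨x, hxv⟩
  omega

lemma reach_adj {V : Type*} [Fintype V] (G : SimpleGraph V)
    (hC4 : ¬ ∃ _f : SimpleGraph.cycleGraph 4 ↪g G, True)
    (hP4 : ¬ ∃ _f : SimpleGraph.pathGraph 4 ↪g G, True)
    {v : V} (hmax : ∀ u, G.degree u ≤ G.degree v) :
    ∀ x u, (p : G.Walk x u) → (x = v ∨ G.Adj v x) → (u = v ∨ G.Adj v u) := by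
  intro x u p
  induction p with
  | nil => exact id
  | @cons x w u h p ih =>
    intro hx
    apply ih
    rcases hx with rfl | hvx
    · exact Or.inr h
    · by_cases hwv : w = v
      · exact Or.inl hwv
      · by_cases hvw : G.Adj v w
        · exact Or.inr hvw
        · exact absurd (max_deg_step G hC4 hP4 hmax hvx h hwv hvw) not_false

lemma sep_lemma {V : Type*} [Fintype V] (G : SimpleGraph V)
    (hC4 : ¬ ∃ _f : SimpleGraph.cycleGraph 4 ↪g G, True)
    (hP4 : ¬ ∃ _f : SimpleGraph.pathGraph 4 ↪g G, True)
    {v : V} (hmax : ∀ u, G.degree u ≤ G.degree v) :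
    ∀ a b, G.Adj v a → ¬ G.Adj v b → b ≠ v → ¬ G.Adj a b := by
  intro a b hva hvb hbv hab
  rcases reach_adj G hC4 hP4 hmax a b hab.toWalk (Or.inr hva) with rfl | h
  · exact hbv rfl
  · exact hvb h

theorem aux : ∀ (n : ℕ) {V : Type*} [Fintype V] (G : SimpleGraph V),
    (¬ ∃ _f : SimpleGraph.cycleGraph 4 ↪g G, True) →
    (¬ ∃ _f : SimpleGraph.pathGraph 4 ↪g G, True) →
    Fintype.card V = n → G.ModuleComposed := by
  intro n
  induction n with
  | zero =>
    intro V _ G _ _ hn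
    exact ⟨(Fintype.equivFin V).symm, fun i _ => absurd i.isLt (by omega)⟩
  | succ n ih =>
    intro V _ G hC4 hP4 hn
    have : Nonempty V := Fintype.card_pos_iff.mp (by omega)
    obtain ⟨v, -, hv⟩ := Finset.exists_max_image (Finset.univ : Finset V) (fun u => G.degree u)
      Finset.univ_nonempty
    have hmax : ∀ u, G.degree u ≤ G.degree v := fun u => hv u (Finset.mem_univ u)
    set S : Set V := {w | w ≠ v} with hS
    have hC4' : ¬ ∃ _f : SimpleGraph.cycleGraph 4 ↪g G.induce S, True := by
      rintro ⟨f, -⟩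
      exact hC4 ⟨(SimpleGraph.Embedding.induce S).comp f, trivial⟩
    have hP4' : ¬ ∃ _f : SimpleGraph.pathGraph 4 ↪g G.induce S, True := by
      rintro ⟨f, -⟩
      exact hP4 ⟨(SimpleGraph.Embedding.induce S).comp f, trivial⟩
    have hm : Fintype.card ↥S = n := by
      have e0 : ↥S ≃ {w : V // ¬ w = v} := Equiv.subtypeEquivRight fun w => Iff.rfl
      rw [Fintype.card_congr e0, Fintype.card_subtype_compl, hn, Fintype.card_subtype_eq]
      omega
    obtain ⟨e', he'⟩ := ih (G.induce S) hC4' hP4' hm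
    set f : Fin (Fintype.card V) → V :=
      fun i => if h : (i : ℕ) < Fintype.card ↥S then ↑(e' ⟨(i : ℕ), h⟩) else v with hf
    have hfe : ∀ (i : Fin (Fintype.card V)) (h : (i : ℕ) < Fintype.card ↥S),
        f i = ↑(e' ⟨(i : ℕ), h⟩) := by
      intro i h; simp only [hf, dif_pos h]
    have hfv : ∀ (i : Fin (Fintype.card V)), ¬ (i : ℕ) < Fintype.card ↥S → f i = v := by
      intro i h; simp only [hf, dif_neg h]
    have hinj : Function.Injective f := by
      intro i j hij
      by_cases hi : (i : ℕ) < Fintype.card ↥S <;> by_cases hj : (j : ℕ) < Fintype.card ↥S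
      · rw [hfe i hi, hfe j hj] at hij
        have := e'.injective (Subtype.coe_injective hij)
        exact Fin.ext (by simpa [Fin.ext_iff] using this)
      · rw [hfe i hi, hfv j hj] at hij
        exact absurd hij (e' ⟨(i : ℕ), hi⟩).2
      · rw [hfv i hi, hfe j hj] at hij
        exact absurd hij.symm (e' ⟨(j : ℕ), hj⟩).2
      · have := i.isLt; have := j.isLt
        exact Fin.ext (by omega)
    have hbij : Function.Bijective f :=
      (Fintype.bijective_iff_injective_and_card f).mpr ⟨hinj, by simp⟩
    refine ⟨Equiv.ofBijective f hbij, ?_⟩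
    intro i hi
    set e : Fin (Fintype.card V) ≃ V := Equiv.ofBijective f hbij with he
    have heapp : ∀ j, e j = f j := fun j => rfl
    intro w₁ hw₁ w₂ hw₂ w hw
    simp only [Set.mem_setOf_eq] at hw₁ hw₂ hw
    show G.Adj ↑w₁ ↑w ↔ G.Adj ↑w₂ ↑w
    by_cases hi' : (i : ℕ) < Fintype.card ↥S
    · -- inner index: use inductive hypothesis
      have hei : e i = ↑(e' ⟨(i : ℕ), hi'⟩) := hfe i hi'
      have lift : ∀ x : V, (∃ j, j < i ∧ e j = x) →
          ∃ y : ↥S, ↑y = x ∧ ∃ j', j' < (⟨(i : ℕ), hi'⟩ : Fin (Fintype.card ↥S)) ∧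
            e' j' = y := by
        rintro x ⟨j, hj, rfl⟩
        have hji : (j : ℕ) < (i : ℕ) := hj
        have hjm : (j : ℕ) < Fintype.card ↥S := lt_trans hji hi'
        exact ⟨e' ⟨(j : ℕ), hjm⟩, (hfe j hjm).symm, ⟨(j : ℕ), hjm⟩,
          Fin.mk_lt_mk.mpr hji, rfl⟩
      obtain ⟨y₁, hy₁, hy₁'⟩ := lift ↑w₁ w₁.2
      obtain ⟨y₂, hy₂, hy₂'⟩ := lift ↑w₂ w₂.2
      obtain ⟨y, hy, hy'⟩ := lift ↑w w.2
      have key := he' ⟨(i : ℕ), hi'⟩ hi ⟨y₁, hy₁'⟩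
        (by show G.Adj (↑(e' ⟨(i : ℕ), hi'⟩) : V) ↑y₁; rw [hy₁, ← hei]; exact hw₁) ⟨y₂, hy₂'⟩
        (by show G.Adj (↑(e' ⟨(i : ℕ), hi'⟩) : V) ↑y₂; rw [hy₂, ← hei]; exact hw₂) ⟨y, hy'⟩
        (by show ¬ G.Adj (↑(e' ⟨(i : ℕ), hi'⟩) : V) ↑y; rw [hy, ← hei]; exact hw)
      have key' : G.Adj ↑y₁ ↑y ↔ G.Adj ↑y₂ ↑y := key
      rw [hy₁, hy₂, hy] at key'
      exact key'
    · -- last index: the new vertex is v, S is the prefix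
      have hei : e i = v := hfv i hi'
      rw [hei] at hw₁ hw₂ hw
      have hPne : ∀ x : V, (∃ j, j < i ∧ e j = x) → x ≠ v := by
        rintro x ⟨j, hj, rfl⟩
        have hji : (j : ℕ) < (i : ℕ) := hj
        have := i.isLt
        have hjm : (j : ℕ) < Fintype.card ↥S := by omega
        rw [heapp, hfe j hjm]
        exact (e' ⟨(j : ℕ), hjm⟩).2
      have s := sep_lemma G hC4 hP4 hmax
      exact iff_of_false (s ↑w₁ ↑w hw₁ hw (hPne ↑w w.2)) (s ↑w₂ ↑w hw₂ hw (hPne ↑w w.2))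

/-- Every `(C₄, P₄)`-free graph (i.e. every trivially perfect graph) is
module-composed. -/
theorem trivially_perfect_moduleComposed {V : Type*} [Fintype V] (G : SimpleGraph V)
    (hC4 : ¬ ∃ _f : SimpleGraph.cycleGraph 4 ↪g G, True)
    (hP4 : ¬ ∃ _f : SimpleGraph.pathGraph 4 ↪g G, True) :
    G.ModuleComposed :=
  aux (Fintype.card V) G hC4 hP4 rfl
end

section
/- No complete k-sun (k ≥ 3) is module-composed. -/
open scoped Classical

/-- The complete `k`-sun: a clique `u₀,…,u_{k-1}` (the `Sum.inl` vertices)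
together with an independent set `w₀,…,w_{k-1}` (the `Sum.inr` vertices),
where `wⱼ` is adjacent to `uᵢ` iff `i = j` or `i = j + 1 (mod k)`. -/
def completeSun (k : ℕ) : SimpleGraph (Fin k ⊕ Fin k) where
  Adj x y :=
    match x, y with
    | .inl i, .inl j => i ≠ j
    | .inl i, .inr j => (i : ℕ) = (j : ℕ) ∨ (i : ℕ) = ((j : ℕ) + 1) % k
    | .inr j, .inl i => (i : ℕ) = (j : ℕ) ∨ (i : ℕ) = ((j : ℕ) + 1) % k
    | .inr _, .inr _ => False
  symm := ⟨by rintro (i | i) (j | j) h <;> simp_all <;> omega⟩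
  loopless := ⟨by rintro (i | i) h <;> simp_all⟩

/-- No complete `k`-sun with `k ≥ 3` is module-composed. -/
theorem completeSun_not_moduleComposed (k : ℕ) (hk : 3 ≤ k) :
    ¬ (completeSun k).ModuleComposed := by
  rintro ⟨e, h⟩
  have hcard : Fintype.card (Fin k ⊕ Fin k) = 2 * k := by simp [two_mul]
  let i : Fin (Fintype.card (Fin k ⊕ Fin k)) := ⟨Fintype.card (Fin k ⊕ Fin k) - 1, by omega⟩
  have H := h i (by show 0 < Fintype.card (Fin k ⊕ Fin k) - 1; omega)
  have hmem : ∀ v : Fin k ⊕ Fin k, v ≠ e i → v ∈ {v | ∃ j, j < i ∧ e j = v} := by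
    intro v hv
    refine ⟨e.symm v, ?_, by simp⟩
    have h1 : e.symm v ≠ i := fun hh => hv (by rw [← hh]; simp)
    have h2 : (e.symm v : ℕ) ≠ (i : ℕ) := fun hh => h1 (Fin.ext hh)
    have h3 : (e.symm v : ℕ) < Fintype.card (Fin k ⊕ Fin k) := (e.symm v).isLt
    have h4 : (i : ℕ) = Fintype.card (Fin k ⊕ Fin k) - 1 := rfl
    exact Fin.lt_def.mpr (by omega)
  have modlt : ∀ m : ℕ, m % k < k := fun m => Nat.mod_lt _ (by omega)
  have modfact : ∀ j : ℕ, j < k → (j + 1) % k ≠ j ∧ ((j + 1) % k + 1) % k ≠ j := by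
    intro j hj
    rcases Nat.lt_or_ge (j + 1) k with h1 | h1
    · rw [Nat.mod_eq_of_lt h1]
      refine ⟨by omega, ?_⟩
      rcases Nat.lt_or_ge (j + 2) k with h2 | h2
      · rw [Nat.mod_eq_of_lt h2]; omega
      · have hk2 : j + 2 = k := by omega
        rw [hk2, Nat.mod_self]; omega
    · have hk1 : j + 1 = k := by omega
      rw [hk1, Nat.mod_self, Nat.mod_eq_of_lt (by omega)]
      omega
  rcases hx : e i with j | j
  · -- e i = u_j (clique vertex)
    set j' : Fin k := ⟨((j : ℕ) + 1) % k, modlt _⟩ with hj'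
    have hne1 : ((j : ℕ) + 1) % k ≠ (j : ℕ) := (modfact _ j.isLt).1
    have hne2 : (((j : ℕ) + 1) % k + 1) % k ≠ (j : ℕ) := (modfact _ j.isLt).2
    have hne2' : ((j : ℕ) + 1 + 1) % k ≠ (j : ℕ) := by rwa [Nat.mod_add_mod] at hne2
    have m1 : (Sum.inl j' : Fin k ⊕ Fin k) ∈ {v | ∃ j, j < i ∧ e j = v} := by
      refine hmem _ ?_
      rw [hx]; intro hc
      exact hne1 (by simpa [hj', Fin.ext_iff] using hc)
    have m2 : (Sum.inr j : Fin k ⊕ Fin k) ∈ {v | ∃ j, j < i ∧ e j = v} :=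
      hmem _ (by rw [hx]; simp)
    have m3 : (Sum.inr j' : Fin k ⊕ Fin k) ∈ {v | ∃ j, j < i ∧ e j = v} :=
      hmem _ (by rw [hx]; simp)
    have a1 : (completeSun k).Adj (e i) (Sum.inl j') := by
      rw [hx]; simp [completeSun, Fin.ext_iff, hj']
      omega
    have a2 : (completeSun k).Adj (e i) (Sum.inr j) := by
      rw [hx]; simp [completeSun]
    have a3 : ¬ (completeSun k).Adj (e i) (Sum.inr j') := by
      rw [hx]; simp [completeSun, hj']
      exact ⟨fun hh => hne1 hh.symm, fun hh => hne2' hh.symm⟩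
    have key := H ⟨_, m1⟩ a1 ⟨_, m2⟩ a2 ⟨_, m3⟩ a3
    have adj1 : (completeSun k).Adj (Sum.inl j') (Sum.inr j') := by
      simp [completeSun]
    have adj2 : ¬ (completeSun k).Adj (Sum.inr j) (Sum.inr j') := by
      simp [completeSun]
    exact adj2 (key.mp adj1)
  · -- e i = w_j (independent vertex)
    set j' : Fin k := ⟨((j : ℕ) + 1) % k, modlt _⟩ with hj'
    have hne1 : ((j : ℕ) + 1) % k ≠ (j : ℕ) := (modfact _ j.isLt).1
    have hne2 : (((j : ℕ) + 1) % k + 1) % k ≠ (j : ℕ) := (modfact _ j.isLt).2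
    have hne2' : ((j : ℕ) + 1 + 1) % k ≠ (j : ℕ) := by rwa [Nat.mod_add_mod] at hne2
    have m1 : (Sum.inl j' : Fin k ⊕ Fin k) ∈ {v | ∃ j, j < i ∧ e j = v} :=
      hmem _ (by rw [hx]; simp)
    have m2 : (Sum.inl j : Fin k ⊕ Fin k) ∈ {v | ∃ j, j < i ∧ e j = v} :=
      hmem _ (by rw [hx]; simp)
    have m3 : (Sum.inr j' : Fin k ⊕ Fin k) ∈ {v | ∃ j, j < i ∧ e j = v} := by
      refine hmem _ ?_
      rw [hx]; intro hc
      exact hne1 (by simpa [hj', Fin.ext_iff] using hc)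
    have a1 : (completeSun k).Adj (e i) (Sum.inl j') := by
      rw [hx]; simp [completeSun, hj']
    have a2 : (completeSun k).Adj (e i) (Sum.inl j) := by
      rw [hx]; simp [completeSun]
    have a3 : ¬ (completeSun k).Adj (e i) (Sum.inr j') := by
      rw [hx]; simp [completeSun]
    have key := H ⟨_, m1⟩ a1 ⟨_, m2⟩ a2 ⟨_, m3⟩ a3
    have adj1 : (completeSun k).Adj (Sum.inl j') (Sum.inr j') := by
      simp [completeSun]
    have adj2 : ¬ (completeSun k).Adj (Sum.inl j) (Sum.inr j') := by
      simp [completeSun, hj']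
      exact ⟨fun hh => hne1 hh.symm, fun hh => hne2' hh.symm⟩
    exact adj2 (key.mp adj1)
end

section
/- Every independent module-composed graph is HHDG-free, i.e. contains no induced house, hole, domino, or gem. -/
open scoped Classical

/-- `G` is independent module-composed: there is a linear ordering of the
vertices such that for every `i ≥ 1`, the neighbourhood of `vᵢ` inside the
induced subgraph on `{v₀, …, v_{i-1}}` is a module of that induced subgraph
which is moreover an independent set. -/
def SimpleGraph.IndepModuleComposed {V : Type*} [Fintype V] (G : SimpleGraph V) : Prop :=
  ∃ e : Fin (Fintype.card V) ≃ V,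
    ∀ i : Fin (Fintype.card V), 0 < (i : ℕ) →
      (G.induce {v | ∃ j, j < i ∧ e j = v}).IsModule
        {w : {v | ∃ j, j < i ∧ e j = v} | G.Adj (e i) ↑w} ∧
      ∀ w₁ ∈ {w : {v | ∃ j, j < i ∧ e j = v} | G.Adj (e i) ↑w},
        ∀ w₂ ∈ {w : {v | ∃ j, j < i ∧ e j = v} | G.Adj (e i) ↑w},
          ¬ (G.induce {v | ∃ j, j < i ∧ e j = v}).Adj w₁ w₂

/-- The house graph. -/
def house : SimpleGraph (Fin 5) :=
  SimpleGraph.fromRel (fun a b =>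
    (a, b) ∈ [((0 : Fin 5), (1 : Fin 5)), (1, 2), (2, 3), (3, 4), (4, 0), (1, 4)])

/-- The domino graph. -/
def domino : SimpleGraph (Fin 6) :=
  SimpleGraph.fromRel (fun a b =>
    (a, b) ∈ [((0 : Fin 6), (1 : Fin 6)), (1, 2), (2, 3), (3, 4), (4, 5), (5, 0), (0, 3)])

/-- The gem graph: a path `0-1-2-3` together with a fifth vertex `4`
adjacent to all four path vertices. -/
def gem : SimpleGraph (Fin 5) :=
  SimpleGraph.fromRel (fun a b =>
    (a, b) ∈ [((0 : Fin 5), (1 : Fin 5)), (1, 2), (2, 3),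
              (4, 0), (4, 1), (4, 2), (4, 3)])

/-- If `G` is independent module-composed and `H` (with at least two vertices)
embeds into `G` as an induced subgraph, then `H` has a vertex whose
neighbourhood is independent and is a module of `H` minus that vertex. -/
lemma key {V W : Type*} [Fintype V] [Fintype W] [Nonempty W] {G : SimpleGraph V}
    (hG : G.IndepModuleComposed) {H : SimpleGraph W} (hW : ∃ a b : W, a ≠ b)
    (f : H ↪g G) :
    ∃ x : W, (∀ a b, H.Adj x a → H.Adj x b → ¬ H.Adj a b) ∧
      (∀ a b w, H.Adj x a → H.Adj x b → w ≠ x → ¬ H.Adj x w → (H.Adj a w ↔ H.Adj b w)) := by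
  obtain ⟨e, he⟩ := hG
  obtain ⟨x, -, hx⟩ := Finset.exists_max_image Finset.univ
    (fun w => ((e.symm (f w) : Fin _) : ℕ)) ⟨Classical.arbitrary W, Finset.mem_univ _⟩
  set i := e.symm (f x) with hi
  have hmemS : ∀ y : W, y ≠ x → f y ∈ {v | ∃ j, j < i ∧ e j = v} := by
    intro y hy
    refine ⟨e.symm (f y), ?_, by simp⟩
    have hne : e.symm (f y) ≠ i := fun h => hy (f.injective (e.symm.injective h))
    have hle : ((e.symm (f y) : Fin _) : ℕ) ≤ (i : ℕ) := hx y (Finset.mem_univ y)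
    exact Fin.lt_def.mpr (lt_of_le_of_ne hle (fun h => hne (Fin.ext h)))
  have hipos : 0 < (i : ℕ) := by
    obtain ⟨a, b, hab⟩ := hW
    have : ∃ y : W, y ≠ x := by
      by_cases h : a = x
      · exact ⟨b, fun hb => hab (by rw [h, hb])⟩
      · exact ⟨a, h⟩
    obtain ⟨y, hy⟩ := this
    obtain ⟨j, hj, -⟩ := hmemS y hy
    exact lt_of_le_of_lt (Nat.zero_le _) hj
  obtain ⟨hmod, hindep⟩ := he i hipos
  have hei : e i = f x := by simp [hi]
  refine ⟨x, ?_, ?_⟩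
  · intro a b hxa hxb hab
    have ha := hmemS a (fun h => H.irrefl (h ▸ hxa))
    have hb := hmemS b (fun h => H.irrefl (h ▸ hxb))
    exact hindep ⟨f a, ha⟩ (by simp [hei, f.map_adj_iff, hxa])
      ⟨f b, hb⟩ (by simp [hei, f.map_adj_iff, hxb])
      (by simpa [SimpleGraph.comap] using f.map_adj_iff.mpr hab)
  · intro a b w hxa hxb hwx hxw
    have ha := hmemS a (fun h => H.irrefl (h ▸ hxa))
    have hb := hmemS b (fun h => H.irrefl (h ▸ hxb))
    have hw := hmemS w hwx
    have hwn : (⟨f w, hw⟩ : {v | ∃ j, j < i ∧ e j = v}) ∉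
        {w : {v | ∃ j, j < i ∧ e j = v} | G.Adj (e i) ↑w} := by
      simp [hei, f.map_adj_iff, hxw]
      exact fun h => hxw (f.map_adj_iff.mp h)
    have := hmod ⟨f a, ha⟩ (by simp [hei, f.map_adj_iff, hxa])
      ⟨f b, hb⟩ (by simp [hei, f.map_adj_iff, hxb]) ⟨f w, hw⟩ hwn
    simpa [SimpleGraph.comap, f.map_adj_iff] using this

attribute [-instance] Classical.propDecidable

set_option synthInstance.maxSize 2000 in
set_option maxHeartbeats 1000000 in
lemma house_check : ¬ ∃ x : Fin 5,
    (∀ a b, house.Adj x a → house.Adj x b → ¬ house.Adj a b) ∧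
    (∀ a b w, house.Adj x a → house.Adj x b → w ≠ x → ¬ house.Adj x w →
      (house.Adj a w ↔ house.Adj b w)) := by
  simp only [house, SimpleGraph.fromRel_adj]
  decide

set_option synthInstance.maxSize 2000 in
set_option maxHeartbeats 1000000 in
lemma domino_check : ¬ ∃ x : Fin 6,
    (∀ a b, domino.Adj x a → domino.Adj x b → ¬ domino.Adj a b) ∧
    (∀ a b w, domino.Adj x a → domino.Adj x b → w ≠ x → ¬ domino.Adj x w →
      (domino.Adj a w ↔ domino.Adj b w)) := by
  simp only [domino, SimpleGraph.fromRel_adj]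
  decide

set_option synthInstance.maxSize 2000 in
set_option maxHeartbeats 1000000 in
lemma gem_check : ¬ ∃ x : Fin 5,
    (∀ a b, gem.Adj x a → gem.Adj x b → ¬ gem.Adj a b) ∧
    (∀ a b w, gem.Adj x a → gem.Adj x b → w ≠ x → ¬ gem.Adj x w →
      (gem.Adj a w ↔ gem.Adj b w)) := by
  simp only [gem, SimpleGraph.fromRel_adj]
  decide

open Fin.CommRing in
lemma cycle_check (m : ℕ) : ¬ ∃ x : Fin (m + 5),
    (∀ a b, (SimpleGraph.cycleGraph (m + 5)).Adj x a →
      (SimpleGraph.cycleGraph (m + 5)).Adj x b → ¬ (SimpleGraph.cycleGraph (m + 5)).Adj a b) ∧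
    (∀ a b w, (SimpleGraph.cycleGraph (m + 5)).Adj x a →
      (SimpleGraph.cycleGraph (m + 5)).Adj x b → w ≠ x →
      ¬ (SimpleGraph.cycleGraph (m + 5)).Adj x w →
      ((SimpleGraph.cycleGraph (m + 5)).Adj a w ↔ (SimpleGraph.cycleGraph (m + 5)).Adj b w)) := by
  rintro ⟨x, -, hmod⟩
  have hC : ∀ u v : Fin (m + 5),
      (SimpleGraph.cycleGraph (m + 5)).Adj u v ↔ u - v = 1 ∨ v - u = 1 := fun u v =>
    SimpleGraph.cycleGraph_adj (n := m + 3)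
  have v2 : ((2 : Fin (m + 5)) : ℕ) = 2 := by
    simp [OfNat.ofNat, Fin.instOfNat]
    all_goals exact Nat.succ_pos _
  have v3 : ((3 : Fin (m + 5)) : ℕ) = 3 := by
    simp [OfNat.ofNat, Fin.instOfNat]
    all_goals exact Nat.succ_pos _
  have v4 : ((4 : Fin (m + 5)) : ℕ) = 4 := by
    simp [OfNat.ofNat, Fin.instOfNat]
    all_goals exact Nat.succ_pos _
  have h2 : (2 : Fin (m + 5)) ≠ 0 := by simp [Fin.ext_iff, v2]; rw [Nat.mod_eq_of_lt (by omega)]; omega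
  have h3 : (3 : Fin (m + 5)) ≠ 0 := by simp [Fin.ext_iff, v3]; rw [Nat.mod_eq_of_lt (by omega)]; omega
  have h4 : (4 : Fin (m + 5)) ≠ 0 := by simp [Fin.ext_iff, v4]; rw [Nat.mod_eq_of_lt (by omega)]; omega
  have h21 : (2 : Fin (m + 5)) ≠ 1 := by simp [Fin.ext_iff, v2]; rw [Nat.mod_eq_of_lt (by omega)]; omega
  have h31 : (3 : Fin (m + 5)) ≠ 1 := by simp [Fin.ext_iff, v3]; rw [Nat.mod_eq_of_lt (by omega)]; omega
  have A1 : (SimpleGraph.cycleGraph (m + 5)).Adj x (x + 1) :=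
    (hC _ _).mpr (Or.inr (by ring))
  have A2 : (SimpleGraph.cycleGraph (m + 5)).Adj x (x - 1) :=
    (hC _ _).mpr (Or.inl (by ring))
  have W1 : x + 2 ≠ x := fun h => h2 (by linear_combination h)
  have NW : ¬ (SimpleGraph.cycleGraph (m + 5)).Adj x (x + 2) := by
    rw [hC]
    rintro (h | h)
    · exact h3 (by linear_combination -h)
    · exact h21 (by linear_combination h)
  have A3 : (SimpleGraph.cycleGraph (m + 5)).Adj (x + 1) (x + 2) :=
    (hC _ _).mpr (Or.inr (by ring))
  have NA : ¬ (SimpleGraph.cycleGraph (m + 5)).Adj (x - 1) (x + 2) := by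
    rw [hC]
    rintro (h | h)
    · exact h4 (by linear_combination -h)
    · exact h31 (by linear_combination h)
  exact NA ((hmod (x + 1) (x - 1) (x + 2) A1 A2 W1 NW).mp A3)

/-- Every independent module-composed graph is HHDG-free: it contains no
induced house, no induced hole, no induced domino, and no induced gem. -/
theorem indepModuleComposed_HHDG_free {V : Type*} [Fintype V] (G : SimpleGraph V)
    (hG : G.IndepModuleComposed) :
    (¬ ∃ _f : house ↪g G, True) ∧
    (∀ n, 5 ≤ n → ¬ ∃ _f : SimpleGraph.cycleGraph n ↪g G, True) ∧
    (¬ ∃ _f : domino ↪g G, True) ∧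
    (¬ ∃ _f : gem ↪g G, True) := by
  refine ⟨?_, ?_, ?_, ?_⟩
  · rintro ⟨f, -⟩
    exact house_check (key hG ⟨0, 1, by decide⟩ f)
  · intro n hn
    obtain ⟨m, rfl⟩ : ∃ m, n = m + 5 := ⟨n - 5, by omega⟩
    rintro ⟨f, -⟩
    have : Nonempty (Fin (m + 5)) := ⟨0⟩
    refine cycle_check m (key hG ⟨0, 1, ?_⟩ f)
    simp [Fin.ext_iff]
  · rintro ⟨f, -⟩
    exact domino_check (key hG ⟨0, 1, by decide⟩ f)
  · rintro ⟨f, -⟩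
    exact gem_check (key hG ⟨0, 1, by decide⟩ f)
end

section
/- A bipartite graph G is module-composed if and only if G contains no induced domino and no induced hole (chordless cycle of length at least 5). -/
open scoped Classical

namespace MC
open SimpleGraph

variable {V : Type*} {G : SimpleGraph V}

/-- Raw form of the module condition used in `ModuleComposed`. -/
def Pre (G : SimpleGraph V) (P : Set V) (a : V) : Prop :=
  ∀ x y z : V, x ∈ P → y ∈ P → z ∈ P → G.Adj a x → G.Adj a y → ¬ G.Adj a z →
    (G.Adj x z ↔ G.Adj y z)

lemma isModule_iff_pre (P : Set V) (a : V) :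
    (G.induce P).IsModule {w : P | G.Adj a ↑w} ↔ Pre G P a := by
  constructor
  · intro h x y z hx hy hz hax hay haz
    exact h ⟨x, hx⟩ hax ⟨y, hy⟩ hay ⟨z, hz⟩ haz
  · intro h v₁ h₁ v₂ h₂ w hw
    exact h v₁ v₂ w v₁.2 v₂.2 w.2 h₁ h₂ hw

lemma moduleComposed_iff_pre [Fintype V] :
    G.ModuleComposed ↔ ∃ e : Fin (Fintype.card V) ≃ V,
      ∀ i : Fin (Fintype.card V), 0 < (i : ℕ) →
        Pre G {v | ∃ j, j < i ∧ e j = v} (e i) := by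
  unfold SimpleGraph.ModuleComposed
  refine exists_congr fun e => forall_congr' fun i => imp_congr_right fun _ => ?_
  exact isModule_iff_pre _ _

lemma fin_sub_val {n : ℕ} (u v : Fin n) :
    ((u - v : Fin n) : ℕ) = if (v : ℕ) ≤ (u : ℕ) then (u : ℕ) - v else n + u - v := by
  rw [Fin.sub_def]
  rcases u with ⟨a, ha⟩
  rcases v with ⟨b, hb⟩
  simp only
  split_ifs with h
  · have : n - b + a = (a - b) + n := by omega
    rw [this, Nat.add_mod_right, Nat.mod_eq_of_lt (by omega)]
  · rw [Nat.mod_eq_of_lt (by omega)]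
    omega

/-- From a cyclically-indexed family of vertices with exactly-cycle adjacency,
get an embedding of the cycle graph; contradiction with hole-freeness. -/
lemma hole_of_cycle (hhole : ∀ n, 5 ≤ n → ¬ ∃ _f : SimpleGraph.cycleGraph n ↪g G, True)
    (n : ℕ) (hn : 5 ≤ n) (Q : ℕ → V)
    (hinj : ∀ i j, i < n → j < n → Q i = Q j → i = j)
    (hadj : ∀ i j, i < n → j < n →
      (G.Adj (Q i) (Q j) ↔ (i = j + 1 ∨ j = i + 1 ∨ (i = 0 ∧ j = n - 1) ∨ (j = 0 ∧ i = n - 1)))) :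
    False := by
  apply hhole n hn
  refine ⟨⟨⟨fun i => Q i.val, ?_⟩, ?_⟩, trivial⟩
  · intro a b hab
    exact Fin.ext (hinj _ _ a.isLt b.isLt hab)
  · intro a b
    show G.Adj (Q a.val) (Q b.val) ↔ _
    rw [hadj _ _ a.isLt b.isLt, SimpleGraph.cycleGraph_adj', fin_sub_val, fin_sub_val]
    have ha := a.isLt
    have hb := b.isLt
    split_ifs <;> omega

instance : DecidableRel domino.Adj := fun a b =>
  decidable_of_iff' _ (SimpleGraph.fromRel_adj _ a b)

/-- Build a domino embedding from six vertices with the right adjacency pattern. -/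
lemma domino_of_pattern (hdom : ¬ ∃ _f : domino ↪g G, True)
    (p : Fin 6 → V)
    (hne : ∀ i j, ¬ domino.Adj i j → i ≠ j → p i ≠ p j)
    (hadj : ∀ i j, domino.Adj i j → G.Adj (p i) (p j))
    (hnadj : ∀ i j, ¬ domino.Adj i j → ¬ G.Adj (p i) (p j)) : False := by
  apply hdom
  refine ⟨⟨⟨p, ?_⟩, ?_⟩, trivial⟩
  · intro a b hab
    by_contra hne'
    by_cases h : domino.Adj a b
    · have := hadj a b h
      rw [hab] at this
      exact G.irrefl this
    · exact hne a b h hne' hab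
  · intro a b
    constructor
    · intro h
      by_contra hd
      exact hnadj a b hd h
    · exact hadj a b

variable {r u v : V}

lemma fin2_trans : ∀ a b c : Fin 2, a ≠ b → a ≠ c → b = c := by decide

lemma two_coloring_walk_parity (C : G.Coloring (Fin 2)) {u v : V} (p : G.Walk u v) :
    (C u = C v) ↔ Even p.length := by
  induction p with
  | nil => simp
  | @cons u b v h q ih =>
    rw [Walk.length_cons, Nat.even_add_one, ← ih]
    have hne : C u ≠ C b := C.valid h
    constructor
    · intro h1 h2
      exact hne (h1.trans h2.symm)
    · intro h1
      exact fin2_trans (C b) (C u) (C v) (Ne.symm hne) h1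

lemma adj_dist_diff (hru : G.Reachable r u) (h : G.Adj u v) :
    G.dist r v ≤ G.dist r u + 1 := by
  obtain ⟨p, hp⟩ := hru.exists_walk_length_eq_dist
  calc G.dist r v ≤ (p.concat h).length := dist_le _
  _ = p.length + 1 := Walk.length_concat _ _
  _ = G.dist r u + 1 := by rw [hp]

lemma adj_dist_ne (hbip : G.Colorable 2) (hru : G.Reachable r u) (h : G.Adj u v) :
    G.dist r u ≠ G.dist r v := by
  obtain ⟨C⟩ := hbip
  intro heq
  obtain ⟨p, hp⟩ := hru.exists_walk_length_eq_dist
  obtain ⟨q, hq⟩ := (hru.trans h.reachable).exists_walk_length_eq_dist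
  have h1 := two_coloring_walk_parity C p
  have h2 := two_coloring_walk_parity C q
  rw [hp] at h1; rw [hq] at h2; rw [← heq] at h2
  have h3 : C u ≠ C v := C.valid h
  by_cases hev : Even (G.dist r u)
  · exact h3 ((h1.mpr hev).symm.trans (h2.mpr hev))
  · exact h3 (fin2_trans (C r) (C u) (C v) (fun hh => hev (h1.mp hh)) (fun hh => hev (h2.mp hh)))

lemma not_adj_far (hru : G.Reachable r u)
    (hd : G.dist r u + 2 ≤ G.dist r v ∨ G.dist r v + 2 ≤ G.dist r u) : ¬ G.Adj u v := by
  intro h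
  have h1 := adj_dist_diff hru h
  have h2 := adj_dist_diff (hru.trans h.reachable) h.symm
  omega

lemma not_adj_same (hbip : G.Colorable 2) (hru : G.Reachable r u)
    (hd : G.dist r u = G.dist r v) : ¬ G.Adj u v :=
  fun h => adj_dist_ne hbip hru h hd


lemma exists_walk_getVert_pair {H : SimpleGraph V} {a b : V} (p : H.Walk a b) :
    ∀ i j, i ≤ j → ∃ w : H.Walk (p.getVert i) (p.getVert j), w.length ≤ j - i := by
  induction p with
  | nil =>
    intro i j _
    refine ⟨Walk.nil.copy (Walk.getVert_of_length_le _ (by simp)).symm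
      (Walk.getVert_of_length_le _ (by simp)).symm, by simp⟩
  | @cons a c b h q ih =>
    intro i j hij
    cases i with
    | zero =>
      cases j with
      | zero => exact ⟨Walk.nil.copy rfl rfl, by simp⟩
      | succ j' =>
        obtain ⟨w, hw⟩ := ih 0 j' (Nat.zero_le _)
        refine ⟨(Walk.cons h (w.copy (Walk.getVert_zero q) rfl)).copy
          (Walk.getVert_zero _).symm (Walk.getVert_cons_succ _ _).symm, ?_⟩
        simp only [Walk.length_copy, Walk.length_cons, Walk.length_copy]
        omega
    | succ i' =>
      cases j with
      | zero => omega
      | succ j' =>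
        obtain ⟨w, hw⟩ := ih i' j' (by omega)
        exact ⟨w.copy (Walk.getVert_cons_succ _ _).symm (Walk.getVert_cons_succ _ _).symm,
          by simpa using hw⟩

lemma dist_triangle' {a b c : V} (h1 : G.Reachable a b) :
    G.dist a c ≤ G.dist a b + G.dist b c := by
  by_cases h2 : G.Reachable b c
  · obtain ⟨p, hp⟩ := h1.exists_walk_length_eq_dist
    obtain ⟨q, hq⟩ := h2.exists_walk_length_eq_dist
    calc G.dist a c ≤ (p.append q).length := dist_le _
    _ = _ := by rw [Walk.length_append, hp, hq]
  · rw [dist_eq_zero_of_not_reachable (fun hh => h2 (h1.symm.trans hh))]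
    omega

lemma getVert_dist {H : SimpleGraph V} {a b : V} (p : H.Walk a b) (hp : p.length = H.dist a b)
    {i j : ℕ} (hij : i ≤ j) (hj : j ≤ p.length) :
    H.dist (p.getVert i) (p.getVert j) = j - i := by
  obtain ⟨w1, hw1⟩ := exists_walk_getVert_pair p 0 i (Nat.zero_le _)
  obtain ⟨w2, hw2⟩ := exists_walk_getVert_pair p i j hij
  obtain ⟨w3, hw3⟩ := exists_walk_getVert_pair p j p.length hj
  have hub : H.dist (p.getVert i) (p.getVert j) ≤ j - i := le_trans (dist_le w2) hw2
  have hr1 : H.Reachable a (p.getVert i) := (w1.copy (Walk.getVert_zero p) rfl).reachable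
  have hr2 : H.Reachable (p.getVert i) (p.getVert j) := w2.reachable
  have hr3 : H.Reachable (p.getVert j) b := (w3.copy rfl (Walk.getVert_length p)).reachable
  have t1 : H.dist a b ≤ H.dist a (p.getVert j) + H.dist (p.getVert j) b :=
    dist_triangle' (hr1.trans hr2)
  have t2 : H.dist a (p.getVert j) ≤ H.dist a (p.getVert i) + H.dist (p.getVert i) (p.getVert j) :=
    dist_triangle' hr1
  have d1 : H.dist a (p.getVert i) ≤ i := by
    have := dist_le (w1.copy (Walk.getVert_zero p) rfl)
    simp only [Walk.length_copy] at this
    omega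
  have d3 : H.dist (p.getVert j) b ≤ p.length - j := by
    have := dist_le (w3.copy rfl (Walk.getVert_length p))
    simp only [Walk.length_copy] at this
    omega
  omega

lemma exists_dist_pred (hru : G.Reachable r u) (h : G.dist r u ≠ 0) :
    ∃ z, G.Adj z u ∧ G.Reachable r z ∧ G.dist r z + 1 = G.dist r u := by
  obtain ⟨p, hp⟩ := hru.exists_walk_length_eq_dist
  have hlen : p.length ≠ 0 := by omega
  obtain ⟨w, hw⟩ := exists_walk_getVert_pair p 0 (p.length - 1) (Nat.zero_le _)
  have ha : G.Adj (p.getVert (p.length - 1)) u := by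
    have := p.adj_getVert_succ (i := p.length - 1) (by omega)
    rwa [show p.length - 1 + 1 = p.length by omega, Walk.getVert_length] at this
  have hreach : G.Reachable r (p.getVert (p.length - 1)) :=
    (w.copy (Walk.getVert_zero p) rfl).reachable
  refine ⟨_, ha, hreach, ?_⟩
  have h1 : G.dist r (p.getVert (p.length - 1)) ≤ p.length - 1 :=
    le_trans (dist_le (w.copy (Walk.getVert_zero p) rfl)) (by rw [Walk.length_copy]; omega)
  have h2 := adj_dist_diff hreach ha
  omega

/-- The subgraph of `G` induced (as graph on `V`) by vertices at distance `≤ j` from `r`. -/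
def Low (G : SimpleGraph V) (r : V) (j : ℕ) : SimpleGraph V where
  Adj u v := G.Adj u v ∧ (G.Reachable r u ∧ G.dist r u ≤ j) ∧
    (G.Reachable r v ∧ G.dist r v ≤ j)
  symm := by
    refine ⟨?_⟩
    rintro u v ⟨h, h1, h2⟩
    exact ⟨h.symm, h2, h1⟩
  loopless := ⟨fun v h => G.irrefl h.1⟩

lemma low_reachable {j : ℕ} : ∀ n u, G.dist r u = n → G.Reachable r u → G.dist r u ≤ j →
    (Low G r j).Reachable r u := by
  intro n
  induction n using Nat.strong_induction_on with
  | _ n ih =>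
    intro u hd hru hdj
    by_cases h0 : G.dist r u = 0
    · have : r = u := (Reachable.dist_eq_zero_iff hru).mp h0
      exact this ▸ Reachable.refl r
    · obtain ⟨z, hz, hrz, hdz⟩ := exists_dist_pred hru h0
      have hAdj : (Low G r j).Adj z u := ⟨hz, ⟨hrz, by omega⟩, ⟨hru, hdj⟩⟩
      exact (ih (G.dist r z) (by omega) z rfl hrz (by omega)).trans hAdj.reachable

lemma crossing (hbip : G.Colorable 2)
    (hhole : ∀ n, 5 ≤ n → ¬ ∃ _f : SimpleGraph.cycleGraph n ↪g G, True)
    {x y w : V} {j : ℕ} (hj : 1 ≤ j)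
    (hrx : G.Reachable r x) (hdx : G.dist r x = j)
    (hry : G.Reachable r y) (hdy : G.dist r y = j)
    (hrw : G.Reachable r w) (hdw : G.dist r w = j + 1)
    (hwx : G.Adj w x) (hwy : G.Adj w y) (hxyne : x ≠ y)
    (hcap : ¬ ∃ s, G.Adj x s ∧ G.Adj y s ∧ G.dist r s = j - 1)
    {z z' : V} (hxz : G.Adj x z) (hdz : G.dist r z = j - 1)
    (hyz' : G.Adj y z') (hdz' : G.dist r z' = j - 1) : False := by
  classical
  set H := Low G r (j - 1) with hH
  set DS : Set ℕ := {n | ∃ α β, G.Adj x α ∧ G.dist r α = j - 1 ∧ G.Adj y β ∧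
    G.dist r β = j - 1 ∧ H.dist α β = n} with hDS
  have hDSne : DS.Nonempty := ⟨_, z, z', hxz, hdz, hyz', hdz', rfl⟩
  obtain ⟨α, β, hxα, hdα, hyβ, hdβ, hdist⟩ := Nat.sInf_mem hDSne
  set m := sInf DS with hm
  have hrα : G.Reachable r α := hrx.trans hxα.reachable
  have hrβ : G.Reachable r β := hry.trans hyβ.reachable
  have hHreach : H.Reachable α β :=
    (low_reachable _ α rfl hrα (by omega)).symm.trans (low_reachable _ β rfl hrβ (by omega))
  have hm1 : 1 ≤ m := by
    rcases Nat.eq_zero_or_pos m with h0 | h1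
    · exfalso
      rw [h0] at hdist
      have hαβ : α = β := (Reachable.dist_eq_zero_iff hHreach).mp hdist
      exact hcap ⟨α, hxα, by rw [hαβ]; exact hyβ, hdα⟩
    · exact h1
  obtain ⟨p, hp⟩ := hHreach.exists_walk_length_eq_dist
  have hp' : p.length = m := by rw [hp, hdist]
  have hmem : ∀ i, i ≤ m → G.Reachable r (p.getVert i) ∧ G.dist r (p.getVert i) ≤ j - 1 := by
    intro i hi
    rcases Nat.lt_or_ge i m with h | h
    · exact (p.adj_getVert_succ (i := i) (by omega)).2.1
    · rw [show i = p.length by omega, Walk.getVert_length]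
      exact ⟨hrβ, by omega⟩
  have hdistq : ∀ i k, i ≤ k → k ≤ m → H.dist (p.getVert i) (p.getVert k) = k - i :=
    fun i k hik hk => getVert_dist p hp hik (by omega)
  have hqinj : ∀ i k, i ≤ m → k ≤ m → p.getVert i = p.getVert k → i = k := by
    intro i k hi hk he
    rcases Nat.lt_trichotomy i k with h | h | h
    · have := hdistq i k (by omega) hk
      rw [he, dist_self] at this; omega
    · exact h
    · have := hdistq k i (by omega) hi
      rw [he, dist_self] at this; omega
  have hqadj : ∀ i k, i ≤ m → k ≤ m →
      (G.Adj (p.getVert i) (p.getVert k) ↔ (i = k + 1 ∨ k = i + 1)) := by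
    intro i k hi hk
    constructor
    · intro h
      have hHa : H.Adj (p.getVert i) (p.getVert k) := ⟨h, hmem i hi, hmem k hk⟩
      have h1 := (dist_eq_one_iff_adj (G := H)).mpr hHa
      rcases Nat.lt_trichotomy i k with hc | hc | hc
      · have := hdistq i k (by omega) hk; omega
      · subst hc; exact absurd hHa (H.loopless.irrefl _)
      · have := hdistq k i (by omega) hi
        rw [SimpleGraph.dist_comm] at h1; omega
    · rintro (h | h)
      · subst h; exact ((p.adj_getVert_succ (by omega)).symm).1
      · subst h; exact (p.adj_getVert_succ (by omega)).1
  have hxq : ∀ i, i ≤ m → (G.Adj x (p.getVert i) ↔ i = 0) := by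
    intro i hi
    constructor
    · intro h
      by_contra h0
      have hge : G.dist r x ≤ G.dist r (p.getVert i) + 1 :=
        adj_dist_diff (hrx.trans h.reachable) h.symm
      have hle := (hmem i hi).2
      have hde : G.dist r (p.getVert i) = j - 1 := by omega
      have hdm : H.dist (p.getVert i) β = m - i := by
        have := hdistq i m hi (le_refl m)
        rwa [show p.getVert m = β by rw [show m = p.length by omega, Walk.getVert_length]] at this
      have hmem' : (m - i) ∈ DS := ⟨p.getVert i, β, h, hde, hyβ, hdβ, hdm⟩
      have := Nat.sInf_le hmem'
      omega
    · rintro rfl; rw [Walk.getVert_zero]; exact hxα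
  have hyq : ∀ i, i ≤ m → (G.Adj y (p.getVert i) ↔ i = m) := by
    intro i hi
    constructor
    · intro h
      by_contra h0
      have hge : G.dist r y ≤ G.dist r (p.getVert i) + 1 :=
        adj_dist_diff (hry.trans h.reachable) h.symm
      have hle := (hmem i hi).2
      have hde : G.dist r (p.getVert i) = j - 1 := by omega
      have hdm : H.dist α (p.getVert i) = i := by
        have := hdistq 0 i (by omega) hi
        rwa [Walk.getVert_zero, Nat.sub_zero] at this
      have hmem' : i ∈ DS := ⟨α, p.getVert i, hxα, hdα, h, hde, hdm⟩
      have := Nat.sInf_le hmem'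
      omega
    · rintro rfl
      rw [show m = p.length by omega, Walk.getVert_length]; exact hyβ
  have hwq : ∀ i, i ≤ m → ¬ G.Adj w (p.getVert i) := by
    intro i hi
    refine not_adj_far hrw (Or.inr ?_)
    have := (hmem i hi).2; omega
  have hxy : ¬ G.Adj x y := not_adj_same hbip hrx (hdx.trans hdy.symm)
  have hwnq : ∀ i, i ≤ m → w ≠ p.getVert i := by
    intro i hi he
    have := (hmem i hi).2; rw [← he] at this; omega
  have hxnq : ∀ i, i ≤ m → x ≠ p.getVert i := by
    intro i hi he
    have := (hmem i hi).2; rw [← he] at this; omega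
  have hynq : ∀ i, i ≤ m → y ≠ p.getVert i := by
    intro i hi he
    have := (hmem i hi).2; rw [← he] at this; omega
  have hwnx : w ≠ x := fun he => by rw [he, hdx] at hdw; omega
  have hwny : w ≠ y := fun he => by rw [he, hdy] at hdw; omega
  set Q : ℕ → V := fun k =>
    if k = 0 then w else if k = 1 then x else if k ≤ m + 2 then p.getVert (k - 2) else y
    with hQdef
  have hQ0 : Q 0 = w := rfl
  have hQ1 : Q 1 = x := rfl
  have hQmid : ∀ k, 2 ≤ k → k ≤ m + 2 → Q k = p.getVert (k - 2) := by
    intro k h1 h2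
    simp only [hQdef]
    rw [if_neg (by omega), if_neg (by omega), if_pos (by omega)]
  have hQlast : Q (m + 3) = y := by
    simp only [hQdef]
    rw [if_neg (by omega), if_neg (by omega), if_neg (by omega)]
  have hsplit : ∀ k : ℕ, k < m + 4 → k = 0 ∨ k = 1 ∨ (2 ≤ k ∧ k ≤ m + 2) ∨ k = m + 3 := by
    intro k hk; omega
  apply hole_of_cycle hhole (m + 4) (by omega) Q
  · -- injectivity
    intro a b ha hb he
    rcases hsplit a ha with rfl | rfl | ⟨ha2, ha3⟩ | rfl <;>
      rcases hsplit b hb with rfl | rfl | ⟨hb2, hb3⟩ | rfl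
    · rfl
    · exact absurd (hQ0 ▸ hQ1 ▸ he) hwnx
    · exact absurd (hQ0 ▸ (hQmid b hb2 hb3) ▸ he) (hwnq (b - 2) (by omega))
    · exact absurd (hQ0 ▸ hQlast ▸ he) hwny
    · exact absurd (hQ1 ▸ hQ0 ▸ he).symm hwnx
    · rfl
    · exact absurd (hQ1 ▸ (hQmid b hb2 hb3) ▸ he) (hxnq (b - 2) (by omega))
    · exact absurd (hQ1 ▸ hQlast ▸ he) hxyne
    · exact absurd ((hQmid a ha2 ha3) ▸ hQ0 ▸ he).symm (hwnq (a - 2) (by omega))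
    · exact absurd ((hQmid a ha2 ha3) ▸ hQ1 ▸ he).symm (hxnq (a - 2) (by omega))
    · have := hqinj (a - 2) (b - 2) (by omega) (by omega)
        ((hQmid a ha2 ha3) ▸ (hQmid b hb2 hb3) ▸ he)
      omega
    · exact absurd ((hQmid a ha2 ha3) ▸ hQlast ▸ he).symm (hynq (a - 2) (by omega))
    · exact absurd (hQlast ▸ hQ0 ▸ he).symm hwny
    · exact absurd (hQlast ▸ hQ1 ▸ he).symm hxyne
    · exact absurd (hQlast ▸ (hQmid b hb2 hb3) ▸ he) (hynq (b - 2) (by omega))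
    · rfl
  · -- adjacency
    intro a b ha hb
    rcases hsplit a ha with rfl | rfl | ⟨ha2, ha3⟩ | rfl <;>
      rcases hsplit b hb with rfl | rfl | ⟨hb2, hb3⟩ | rfl
    · rw [hQ0]; exact iff_of_false (G.loopless.irrefl w) (by omega)
    · rw [hQ0, hQ1]; exact iff_of_true hwx (by omega)
    · rw [hQ0, hQmid b hb2 hb3]
      exact iff_of_false (hwq (b - 2) (by omega)) (by omega)
    · rw [hQ0, hQlast]; exact iff_of_true hwy (by omega)
    · rw [hQ1, hQ0]; exact iff_of_true hwx.symm (by omega)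
    · rw [hQ1]; exact iff_of_false (G.loopless.irrefl x) (by omega)
    · rw [hQ1, hQmid b hb2 hb3, hxq (b - 2) (by omega)]
      constructor
      · intro h; omega
      · intro h; omega
    · rw [hQ1, hQlast]; exact iff_of_false hxy (by omega)
    · rw [hQmid a ha2 ha3, hQ0]
      rw [G.adj_comm]
      refine iff_of_false (hwq (a - 2) (by omega)) (by omega)
    · rw [hQmid a ha2 ha3, hQ1, G.adj_comm, hxq (a - 2) (by omega)]
      constructor
      · intro h; omega
      · intro h; omega
    · rw [hQmid a ha2 ha3, hQmid b hb2 hb3, hqadj (a - 2) (b - 2) (by omega) (by omega)]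
      constructor
      · intro h; omega
      · intro h; omega
    · rw [hQmid a ha2 ha3, hQlast, G.adj_comm, hyq (a - 2) (by omega)]
      constructor
      · intro h; omega
      · intro h; omega
    · rw [hQlast, hQ0]; exact iff_of_true hwy.symm (by omega)
    · rw [hQlast, hQ1]; exact iff_of_false (fun h => hxy h.symm) (by omega)
    · rw [hQlast, hQmid b hb2 hb3, hyq (b - 2) (by omega)]
      constructor
      · intro h; omega
      · intro h; omega
    · rw [hQlast]; exact iff_of_false (G.loopless.irrefl y) (by omega)

lemma domino_pattern (hdom : ¬ ∃ _f : domino ↪g G, True)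
    (p0 p1 p2 p3 p4 p5 : V)
    (a01 : G.Adj p0 p1) (a12 : G.Adj p1 p2) (a23 : G.Adj p2 p3) (a34 : G.Adj p3 p4)
    (a45 : G.Adj p4 p5) (a50 : G.Adj p5 p0) (a03 : G.Adj p0 p3)
    (n02 : ¬G.Adj p0 p2) (n04 : ¬G.Adj p0 p4) (n13 : ¬G.Adj p1 p3) (n14 : ¬G.Adj p1 p4)
    (n15 : ¬G.Adj p1 p5) (n24 : ¬G.Adj p2 p4) (n25 : ¬G.Adj p2 p5) (n35 : ¬G.Adj p3 p5)
    (d02 : p0 ≠ p2) (d04 : p0 ≠ p4) (d13 : p1 ≠ p3) (d14 : p1 ≠ p4) (d15 : p1 ≠ p5)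
    (d24 : p2 ≠ p4) (d25 : p2 ≠ p5) (d35 : p3 ≠ p5) : False := by
  have s10 := a01.symm; have s21 := a12.symm; have s32 := a23.symm; have s43 := a34.symm
  have s54 := a45.symm; have s05 := a50.symm; have s30 := a03.symm
  have m20 : ¬G.Adj p2 p0 := fun h => n02 h.symm
  have m40 : ¬G.Adj p4 p0 := fun h => n04 h.symm
  have m31 : ¬G.Adj p3 p1 := fun h => n13 h.symm
  have m41 : ¬G.Adj p4 p1 := fun h => n14 h.symm
  have m51 : ¬G.Adj p5 p1 := fun h => n15 h.symm
  have m42 : ¬G.Adj p4 p2 := fun h => n24 h.symm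
  have m52 : ¬G.Adj p5 p2 := fun h => n25 h.symm
  have m53 : ¬G.Adj p5 p3 := fun h => n35 h.symm
  have l0 := G.loopless.irrefl p0; have l1 := G.loopless.irrefl p1; have l2 := G.loopless.irrefl p2
  have l3 := G.loopless.irrefl p3; have l4 := G.loopless.irrefl p4; have l5 := G.loopless.irrefl p5
  have e20 := d02.symm; have e40 := d04.symm; have e31 := d13.symm; have e41 := d14.symm
  have e51 := d15.symm; have e42 := d24.symm; have e52 := d25.symm; have e53 := d35.symm
  apply domino_of_pattern hdom ![p0, p1, p2, p3, p4, p5]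
  · intro i j h hij
    fin_cases i <;> fin_cases j <;>
      first
        | exact absurd (by decide) h
        | exact absurd rfl hij
        | assumption
  · intro i j h
    fin_cases i <;> fin_cases j <;>
      first
        | exact absurd h (by decide)
        | assumption
  · intro i j h
    fin_cases i <;> fin_cases j <;>
      first
        | exact absurd (by decide) h
        | assumption

lemma lemmaM (hbip : G.Colorable 2)
    (hdom : ¬ ∃ _f : domino ↪g G, True)
    (hhole : ∀ n, 5 ≤ n → ¬ ∃ _f : SimpleGraph.cycleGraph n ↪g G, True) :
    ∀ j : ℕ, ∀ x y w z : V, G.Reachable r x → G.dist r x = j → G.dist r y = j →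
      G.dist r w = j + 1 → G.Adj w x → G.Adj w y →
      G.Adj x z → G.dist r z = j - 1 → G.Adj y z := by
  intro j
  induction j using Nat.strong_induction_on with
  | _ j ih =>
  intro x y w z hrx hdx hdy hdw hwx hwy hxz hdz
  have hrw : G.Reachable r w := hrx.trans hwx.symm.reachable
  have hry : G.Reachable r y := hrw.trans hwy.reachable
  have hrz : G.Reachable r z := hrx.trans hxz.reachable
  rcases Nat.eq_zero_or_pos j with hj0 | hj1
  · subst hj0
    have hx : r = x := (Reachable.dist_eq_zero_iff hrx).mp hdx
    have hy : r = y := (Reachable.dist_eq_zero_iff hry).mp hdy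
    rw [← hy, hx]
    exact hxz
  by_cases hxy : x = y
  · rw [← hxy]; exact hxz
  by_contra hyz
  by_cases hcap : ∃ s, G.Adj x s ∧ G.Adj y s ∧ G.dist r s = j - 1
  · obtain ⟨s, hxs, hys, hds⟩ := hcap
    have hrs : G.Reachable r s := hrx.trans hxs.reachable
    have hzs : z ≠ s := fun he => hyz (he ▸ hys)
    have hj2 : 2 ≤ j := by
      by_contra hj2
      have hj1' : j = 1 := by omega
      have hz : r = z := (Reachable.dist_eq_zero_iff hrz).mp (by omega)
      have hs : r = s := (Reachable.dist_eq_zero_iff hrs).mp (by omega)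
      exact hzs (hz ▸ hs)
    obtain ⟨t, htz, hrt, hdt⟩ := exists_dist_pred hrz (by omega)
    have hst : G.Adj s t := by
      refine ih (j - 1) (by omega) z s x t hrz (by omega) (by omega) (by omega) hxz hxs
        htz.symm (by omega)
    -- domino on x z t s y w with chord x-s
    have hdt' : G.dist r t = j - 2 := by omega
    refine domino_pattern hdom x z t s y w hxz htz.symm hst.symm hys.symm hwy.symm hwx hxs
      (not_adj_far hrx (Or.inr (by omega)))
      (not_adj_same hbip hrx (by omega))
      (not_adj_same hbip hrz (by omega))
      (fun h => hyz h.symm)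
      (not_adj_far hrz (Or.inl (by omega)))
      (not_adj_far hrt (Or.inl (by omega)))
      (not_adj_far hrt (Or.inl (by omega)))
      (not_adj_far hrs (Or.inl (by omega)))
      (fun he => by rw [← he] at hdt'; omega)
      hxy hzs
      (fun he => by rw [he] at hdz; omega)
      (fun he => by rw [he] at hdz; omega)
      (fun he => by rw [he] at hdt'; omega)
      (fun he => by rw [he] at hdt'; omega)
      (fun he => by rw [he] at hds; omega)
  · obtain ⟨z', hz'y, hrz', hdz'⟩ := exists_dist_pred hry (by omega)
    exact crossing hbip hhole hj1 hrx hdx hry hdy hrw hdw hwx hwy hxy hcap hxz hdz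
      hz'y.symm (by omega)

lemma claimC (hbip : G.Colorable 2)
    (hdom : ¬ ∃ _f : domino ↪g G, True)
    (hhole : ∀ n, 5 ≤ n → ¬ ∃ _f : SimpleGraph.cycleGraph n ↪g G, True)
    {k : ℕ} (hmax : ∀ v, G.dist r v ≤ k)
    {x y u : V} (hrx : G.Reachable r x) (hry : G.Reachable r y)
    (hdx : G.dist r x = k) (hdy : G.dist r y = k)
    (hxu : G.Adj x u) (hyu : G.Adj y u) :
    (∀ t, G.Adj x t → G.Adj y t) ∨ (∀ t, G.Adj y t → G.Adj x t) := by
  by_cases hxy : x = y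
  · subst hxy; exact Or.inl (fun t h => h)
  by_contra hcon
  push_neg at hcon
  obtain ⟨⟨a, hxa, hya⟩, ⟨c, hyc, hxc⟩⟩ := hcon
  have hnb : ∀ v t, G.Reachable r v → G.dist r v = k → G.Adj v t → G.dist r t = k - 1 ∧
      G.Reachable r t := by
    intro v t hrv hdv ht
    have h1 := adj_dist_diff hrv ht
    have h2 := adj_dist_diff (hrv.trans ht.reachable) ht.symm
    have h3 := adj_dist_ne hbip hrv ht
    have h4 := hmax t
    exact ⟨by omega, hrv.trans ht.reachable⟩
  have hk1 : 1 ≤ k := by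
    by_contra hk
    have hx : r = x := (Reachable.dist_eq_zero_iff hrx).mp (by omega)
    have hy : r = y := (Reachable.dist_eq_zero_iff hry).mp (by omega)
    exact hxy (hx ▸ hy)
  obtain ⟨hda, hra⟩ := hnb x a hrx hdx hxa
  obtain ⟨hdu, hru⟩ := hnb x u hrx hdx hxu
  obtain ⟨hdc, hrc⟩ := hnb y c hry hdy hyc
  have hk2 : 2 ≤ k := by
    by_contra hk
    have ha' : r = a := (Reachable.dist_eq_zero_iff hra).mp (by omega)
    have hu' : r = u := (Reachable.dist_eq_zero_iff hru).mp (by omega)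
    exact hya (ha' ▸ hu' ▸ hyu)
  obtain ⟨t, hta, hrt, hdt⟩ := exists_dist_pred hra (by omega)
  have hdt' : G.dist r t = k - 2 := by omega
  have hut : G.Adj u t :=
    lemmaM hbip hdom hhole (k - 1) a u x t hra (by omega) (by omega) (by omega) hxa hxu
      hta.symm (by omega)
  have hct : G.Adj c t :=
    lemmaM hbip hdom hhole (k - 1) u c y t hru (by omega) (by omega) (by omega) hyu hyc
      hut (by omega)
  exact domino_pattern hdom t c y u x a
    hct.symm hyc.symm hyu hxu.symm hxa hta.symm hut.symm
    (not_adj_far hrt (Or.inl (by omega)))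
    (not_adj_far hrt (Or.inl (by omega)))
    (not_adj_same hbip hrc (by omega))
    (fun h => hxc h.symm)
    (not_adj_same hbip hrc (by omega))
    (not_adj_same hbip hry (by omega))
    hya
    (not_adj_same hbip hru (by omega))
    (fun he => by rw [← he] at hdy; omega)
    (fun he => by rw [← he] at hdx; omega)
    (fun he => hxc (by rw [he]; exact hxu))
    (fun he => by rw [← he] at hdx; omega)
    (fun he => hya (by rw [← he]; exact hyc))
    (fun he => hxy (he.symm))
    (fun he => by rw [← he] at hda; omega)
    (fun he => hya (by rw [← he]; exact hyu))

lemma exists_good [Fintype V] (hbip : G.Colorable 2)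
    (hdom : ¬ ∃ _f : domino ↪g G, True)
    (hhole : ∀ n, 5 ≤ n → ¬ ∃ _f : SimpleGraph.cycleGraph n ↪g G, True)
    (hne : Nonempty V) :
    ∃ v : V, ∀ x y z : V, z ≠ v → G.Adj v x → G.Adj v y → ¬ G.Adj v z → G.Adj x z →
      G.Adj y z := by
  classical
  obtain ⟨r⟩ := hne
  set F : Finset ℕ := Finset.univ.image (fun v => G.dist r v) with hF
  have hFne : F.Nonempty := ⟨G.dist r r, Finset.mem_image.mpr ⟨r, Finset.mem_univ r, rfl⟩⟩
  set k := F.max' hFne with hk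
  have hmax : ∀ v, G.dist r v ≤ k :=
    fun v => F.le_max' _ (Finset.mem_image.mpr ⟨v, Finset.mem_univ v, rfl⟩)
  obtain ⟨v₀, _, hv₀⟩ := Finset.mem_image.mp (F.max'_mem hFne)
  by_cases hk0 : k = 0
  · refine ⟨r, ?_⟩
    intro x y z hz hrx hry hrz hxz
    exfalso
    have h1 : G.dist r x = 0 := by have := hmax x; omega
    have h2 : r = x := (Reachable.dist_eq_zero_iff hrx.reachable).mp h1
    exact G.loopless.irrefl r (h2 ▸ hrx)
  · set C : Finset V := Finset.univ.filter (fun v => G.dist r v = k) with hC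
    have hCne : C.Nonempty := ⟨v₀, Finset.mem_filter.mpr ⟨Finset.mem_univ _, hv₀⟩⟩
    obtain ⟨v, hvC, hmin⟩ :=
      Finset.exists_min_image C (fun v => (Finset.univ.filter (G.Adj v)).card) hCne
    have hdv : G.dist r v = k := (Finset.mem_filter.mp hvC).2
    have hrv : G.Reachable r v := Reachable.of_dist_ne_zero (by omega)
    refine ⟨v, ?_⟩
    intro x y z hzv hvx hvy hvz hxz
    have hnb : ∀ t, G.Adj v t → G.dist r t = k - 1 := by
      intro t ht
      have h1 := adj_dist_diff hrv ht
      have h2 := adj_dist_diff (hrv.trans ht.reachable) ht.symm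
      have h3 := adj_dist_ne hbip hrv ht
      have h4 := hmax t
      omega
    have hdx := hnb x hvx
    have hdy := hnb y hvy
    have hrx : G.Reachable r x := hrv.trans hvx.reachable
    have hry : G.Reachable r y := hrv.trans hvy.reachable
    have hrz : G.Reachable r z := hrx.trans hxz.reachable
    have hd1 := adj_dist_diff hrx hxz
    have hd2 := adj_dist_diff hrz hxz.symm
    have hd3 := adj_dist_ne hbip hrx hxz
    have hd4 := hmax z
    rcases (by omega : G.dist r z = k ∨ (2 ≤ k ∧ G.dist r z = k - 2)) with hzk | ⟨hk2, hzk⟩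
    · rcases claimC hbip hdom hhole hmax hrz hrv hzk hdv hxz.symm hvx with h | h
      · have hsub : Finset.univ.filter (G.Adj z) ⊆ Finset.univ.filter (G.Adj v) := by
          intro t ht
          exact Finset.mem_filter.mpr ⟨Finset.mem_univ _, h t (Finset.mem_filter.mp ht).2⟩
        have hzC : z ∈ C := Finset.mem_filter.mpr ⟨Finset.mem_univ _, hzk⟩
        have hc2 := hmin z hzC
        have heq := Finset.eq_of_subset_of_card_le hsub (by omega)
        have hy' : y ∈ Finset.univ.filter (G.Adj z) := by
          rw [heq]
          exact Finset.mem_filter.mpr ⟨Finset.mem_univ _, hvy⟩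
        exact ((Finset.mem_filter.mp hy').2).symm
      · exact (h y hvy).symm
    · exact lemmaM hbip hdom hhole (k - 1) x y v z hrx (by omega) (by omega) (by omega)
        hvx hvy hxz (by omega)

lemma domino_hH : ∀ c : Fin 6, ∃ c1 c2 d, d ≠ c ∧ domino.Adj c c1 ∧ domino.Adj c c2 ∧
    ¬domino.Adj c d ∧ domino.Adj c1 d ∧ ¬domino.Adj c2 d := by decide

open Fin.CommRing in
lemma cycle_hH (n : ℕ) (hn : 5 ≤ n) :
    ∀ c : Fin n, ∃ c1 c2 d, d ≠ c ∧ (SimpleGraph.cycleGraph n).Adj c c1 ∧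
      (SimpleGraph.cycleGraph n).Adj c c2 ∧ ¬(SimpleGraph.cycleGraph n).Adj c d ∧
      (SimpleGraph.cycleGraph n).Adj c1 d ∧ ¬(SimpleGraph.cycleGraph n).Adj c2 d := by
  haveI : NeZero n := ⟨by omega⟩
  intro c
  set o : Fin n := ((1 : ℕ) : Fin n) with ho
  have hval : (o : ℕ) = 1 := Fin.val_cast_of_lt (by omega)
  have h2 : ((o + o : Fin n) : ℕ) = 2 := by
    rw [Fin.add_def, hval]; exact Nat.mod_eq_of_lt (by omega)
  have h3 : ((o + o + o : Fin n) : ℕ) = 3 := by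
    rw [Fin.add_def, h2, hval]; exact Nat.mod_eq_of_lt (by omega)
  have h4 : ((o + o + o + o : Fin n) : ℕ) = 4 := by
    rw [Fin.add_def, h3, hval]; exact Nat.mod_eq_of_lt (by omega)
  refine ⟨c + o, c - o, c + (o + o), ?_, ?_, ?_, ?_, ?_, ?_⟩
  · intro h
    have h0 : o + o = (0 : Fin n) := by linear_combination h
    rw [h0] at h2
    simp at h2
  · refine SimpleGraph.cycleGraph_adj'.mpr (Or.inr ?_)
    rw [show c + o - c = o by ring, hval]
  · refine SimpleGraph.cycleGraph_adj'.mpr (Or.inl ?_)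
    rw [show c - (c - o) = o by ring, hval]
  · intro h
    rcases SimpleGraph.cycleGraph_adj'.mp h with h1 | h1
    · have he : c - (c + (o + o)) = o := Fin.ext (h1.trans hval.symm)
      have h0 : o + o + o = (0 : Fin n) := by linear_combination -he
      rw [h0] at h3; simp at h3
    · have he : c + (o + o) - c = o := Fin.ext (h1.trans hval.symm)
      have h0 : o = (0 : Fin n) := by linear_combination he
      rw [h0] at hval; simp at hval
  · refine SimpleGraph.cycleGraph_adj'.mpr (Or.inr ?_)
    rw [show c + (o + o) - (c + o) = o by ring, hval]
  · intro h
    rcases SimpleGraph.cycleGraph_adj'.mp h with h1 | h1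
    · have he : c - o - (c + (o + o)) = o := Fin.ext (h1.trans hval.symm)
      have h0 : o + o + o + o = (0 : Fin n) := by linear_combination -he
      rw [h0] at h4; simp at h4
    · have he : c + (o + o) - (c - o) = o := Fin.ext (h1.trans hval.symm)
      have h0 : o + o = (0 : Fin n) := by linear_combination he
      rw [h0] at h2; simp at h2

lemma forward_no_pattern [Fintype V] {W : Type*} [Fintype W] [Nonempty W] {H : SimpleGraph W}
    (hH : ∀ c : W, ∃ c1 c2 d, d ≠ c ∧ H.Adj c c1 ∧ H.Adj c c2 ∧ ¬H.Adj c d ∧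
      H.Adj c1 d ∧ ¬H.Adj c2 d)
    (hmc : G.ModuleComposed) (f : H ↪g G) : False := by
  classical
  obtain ⟨e, he⟩ := moduleComposed_iff_pre.mp hmc
  set I : Finset (Fin (Fintype.card V)) :=
    Finset.univ.image (fun c => e.symm (f c)) with hI
  have hIne : I.Nonempty :=
    ⟨e.symm (f (Classical.arbitrary W)),
      Finset.mem_image.mpr ⟨_, Finset.mem_univ _, rfl⟩⟩
  set i := I.max' hIne with hi
  obtain ⟨c₀, _, hc₀⟩ := Finset.mem_image.mp (I.max'_mem hIne)
  have hc₀' : e.symm (f c₀) = i := hc₀.trans hi.symm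
  have hei : e i = f c₀ := by rw [← hc₀']; simp
  obtain ⟨c1, c2, d, hd0, h1, h2, h3, h4, h5⟩ := hH c₀
  have hlt : ∀ c : W, c ≠ c₀ → e.symm (f c) < i := by
    intro c hc
    have hle : e.symm (f c) ≤ i := I.le_max' _ (Finset.mem_image.mpr ⟨c, Finset.mem_univ _, rfl⟩)
    rcases lt_or_eq_of_le hle with h | h
    · exact h
    · exfalso
      apply hc
      apply f.injective
      rw [← hei, ← h]
      simp
  have hmem : ∀ c : W, c ≠ c₀ → f c ∈ {v | ∃ j, j < i ∧ e j = v} :=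
    fun c hc => ⟨e.symm (f c), hlt c hc, by simp⟩
  have hi0 : 0 < (i : ℕ) := by
    have := Fin.lt_def.mp (hlt c1 h1.ne')
    omega
  have key := he i hi0 (f c1) (f c2) (f d)
    (hmem c1 h1.ne') (hmem c2 h2.ne') (hmem d hd0)
    (by rw [hei]; exact f.map_adj_iff.mpr h1)
    (by rw [hei]; exact f.map_adj_iff.mpr h2)
    (by rw [hei]; exact fun hc => h3 (f.map_adj_iff.mp hc))
  exact h5 (f.map_adj_iff.mp (key.mp (f.map_adj_iff.mpr h4)))

lemma colorable_induce (hbip : G.Colorable 2) (S : Set V) : (G.induce S).Colorable 2 := by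
  obtain ⟨C⟩ := hbip
  exact ⟨SimpleGraph.Coloring.mk (fun v => C ↑v) (fun h => C.valid h)⟩

lemma nodom_induce (hdom : ¬ ∃ _f : domino ↪g G, True) (S : Set V) :
    ¬ ∃ _f : domino ↪g G.induce S, True := by
  rintro ⟨f, -⟩
  exact hdom ⟨(SimpleGraph.Embedding.induce S).comp f, trivial⟩

lemma nohole_induce (hhole : ∀ n, 5 ≤ n → ¬ ∃ _f : SimpleGraph.cycleGraph n ↪g G, True)
    (S : Set V) : ∀ n, 5 ≤ n → ¬ ∃ _f : SimpleGraph.cycleGraph n ↪g G.induce S, True := by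
  rintro n hn ⟨f, -⟩
  exact hhole n hn ⟨(SimpleGraph.Embedding.induce S).comp f, trivial⟩

lemma backward : ∀ (n : ℕ) (V : Type u) (instV : Fintype V) (G : SimpleGraph V),
    Fintype.card V = n → G.Colorable 2 → (¬ ∃ _f : domino ↪g G, True) →
    (∀ m, 5 ≤ m → ¬ ∃ _f : SimpleGraph.cycleGraph m ↪g G, True) → G.ModuleComposed := by
  intro n
  induction n using Nat.strong_induction_on with
  | _ n ih =>
  intro V instV G hcard hbip hdom hhole
  rw [moduleComposed_iff_pre]
  by_cases h0 : Fintype.card V = 0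
  · exact ⟨(Fintype.equivFin V).symm, fun i hi => absurd i.isLt (by omega)⟩
  haveI hne : Nonempty V := Fintype.card_pos_iff.mp (by omega)
  obtain ⟨v, hv⟩ := exists_good hbip hdom hhole hne
  set S : Set V := {u | u ≠ v} with hS
  have hcard' : Fintype.card ↥S + 1 = Fintype.card V := by
    rw [← Fintype.card_option]
    exact Fintype.card_congr (Equiv.optionSubtypeNe v)
  set N := Fintype.card ↥S with hN
  have hmc' := ih N (by omega) ↥S inferInstance (G.induce S) hN.symm
    (colorable_induce hbip S) (nodom_induce hdom S) (nohole_induce hhole S)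
  obtain ⟨e', he'⟩ := moduleComposed_iff_pre.mp hmc'
  set e : Fin (Fintype.card V) ≃ V :=
    (finCongr hcard'.symm).trans (finSuccEquivLast.trans
      ((e'.optionCongr).trans (Equiv.optionSubtypeNe v))) with he_def
  have he_lt : ∀ (i : Fin (Fintype.card V)) (h : (i : ℕ) < N), e i = ↑(e' ⟨(i : ℕ), h⟩) := by
    intro i h
    simp only [he_def, Equiv.trans_apply]
    have h1 : (finCongr hcard'.symm) i = Fin.castSucc ⟨(i : ℕ), h⟩ := by
      apply Fin.ext; simp
    rw [h1, finSuccEquivLast_castSucc]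
    rfl
  have he_last : ∀ (i : Fin (Fintype.card V)), (i : ℕ) = N → e i = v := by
    intro i h
    simp only [he_def, Equiv.trans_apply]
    have h1 : (finCongr hcard'.symm) i = Fin.last N := by
      apply Fin.ext; simp [h]
    rw [h1, finSuccEquivLast_last]
    rfl
  refine ⟨e, ?_⟩
  intro i hi
  rcases Nat.lt_or_ge (i : ℕ) N with hiN | hiN
  · -- interior index
    have hpre' := he' ⟨(i : ℕ), hiN⟩ hi
    intro x y z hx hy hz hax hay haz
    obtain ⟨jx, hjx, hejx⟩ := hx
    obtain ⟨jy, hjy, hejy⟩ := hy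
    obtain ⟨jz, hjz, hejz⟩ := hz
    have hjxN : (jx : ℕ) < N := by have := Fin.lt_def.mp hjx; omega
    have hjyN : (jy : ℕ) < N := by have := Fin.lt_def.mp hjy; omega
    have hjzN : (jz : ℕ) < N := by have := Fin.lt_def.mp hjz; omega
    subst hejx; subst hejy; subst hejz
    rw [he_lt jx hjxN, he_lt jy hjyN, he_lt jz hjzN]
    rw [he_lt i hiN, he_lt jx hjxN] at hax
    rw [he_lt i hiN, he_lt jy hjyN] at hay
    rw [he_lt i hiN, he_lt jz hjzN] at haz
    have key := hpre' (e' ⟨(jx : ℕ), hjxN⟩) (e' ⟨(jy : ℕ), hjyN⟩) (e' ⟨(jz : ℕ), hjzN⟩)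
      ⟨⟨(jx : ℕ), hjxN⟩, Fin.lt_def.mpr (by simpa using Fin.lt_def.mp hjx), rfl⟩
      ⟨⟨(jy : ℕ), hjyN⟩, Fin.lt_def.mpr (by simpa using Fin.lt_def.mp hjy), rfl⟩
      ⟨⟨(jz : ℕ), hjzN⟩, Fin.lt_def.mpr (by simpa using Fin.lt_def.mp hjz), rfl⟩
      hax hay haz
    exact key
  · -- last index
    have hiN' : (i : ℕ) = N := by have := i.isLt; omega
    have hset : {u | ∃ j, j < i ∧ e j = u} = {u | u ≠ v} := by
      ext u
      simp only [Set.mem_setOf_eq]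
      constructor
      · rintro ⟨j, hj, rfl⟩
        have hjN : (j : ℕ) < N := by have := Fin.lt_def.mp hj; omega
        rw [he_lt j hjN]
        exact (e' ⟨(j : ℕ), hjN⟩).2
      · intro hu
        have hlt : ((e'.symm ⟨u, hu⟩ : Fin N) : ℕ) < Fintype.card V := by
          have := (e'.symm ⟨u, hu⟩).isLt; omega
        refine ⟨⟨((e'.symm ⟨u, hu⟩ : Fin N) : ℕ), hlt⟩, ?_, ?_⟩
        · exact Fin.lt_def.mpr (by simp only [hiN']; exact (e'.symm ⟨u, hu⟩).isLt)
        · rw [he_lt _ ((e'.symm ⟨u, hu⟩).isLt)]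
          have h2 : (⟨((e'.symm ⟨u, hu⟩ : Fin N) : ℕ), (e'.symm ⟨u, hu⟩).isLt⟩ : Fin N)
              = e'.symm ⟨u, hu⟩ := Fin.ext rfl
          rw [h2]
          simp
    rw [hset, he_last i hiN']
    intro x y z hx hy hz hax hay haz
    exact ⟨fun h => hv x y z hz hax hay haz h, fun h => hv y x z hz hay hax haz h⟩

end MC

/-- A bipartite graph is module-composed iff it contains no induced domino
and no induced hole (chordless cycle on at least 5 vertices). -/
theorem bipartite_moduleComposed_iff_domino_hole_free {V : Type*} [Fintype V]
    (G : SimpleGraph V) (hbip : G.Colorable 2) :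
    G.ModuleComposed ↔
      (¬ ∃ _f : domino ↪g G, True) ∧
      (∀ n, 5 ≤ n → ¬ ∃ _f : SimpleGraph.cycleGraph n ↪g G, True) := by
  constructor
  · intro hmc
    constructor
    · rintro ⟨f, -⟩
      exact MC.forward_no_pattern MC.domino_hH hmc f
    · intro n hn
      rintro ⟨f, -⟩
      haveI : Nonempty (Fin n) := ⟨⟨0, by omega⟩⟩
      exact MC.forward_no_pattern (MC.cycle_hH n hn) hmc f
  · rintro ⟨hdom, hhole⟩
    exact MC.backward (Fintype.card V) V inferInstance G rfl hbip hdom hhole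
end
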